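/- arXiv:2012.00947 — 5 statements merged into one kernel-verified Lean document; each statement's English description precedes it below -/
import Mathlib

section
/- Let π be a group and κ a normal subgroup of π that is amenable, i.e. κ admits a right-invariant mean. Let p : π → π/κ be the quotient homomorphism. Then for every n ∈ ℕ, the pullback along p (precomposing bounded group cochains with p in each coordinate) induces a linear bijection from the bounded cohomology Ĥ_b^n(π/κ) onto Ĥ_b^n(π) which preserves the quotient seminorms, i.e. ‖p^{**}(α)‖ = ‖α‖ for every class α. (This is Theorem B of the paper: the map Bp : Bπ → B(π/κ) of classifying spaces induces an isometric isomorphism in bounded cohomology; the bounded simplicial cochain complex of the nerve Bπ of a group is exactly the bounded inhomogeneous group cochain complex.) -/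
/-- A real-valued function is bounded. -/
def IsBdd {X : Type*} (f : X → ℝ) : Prop := ∃ C : ℝ, ∀ x, |f x| ≤ C

/-- The sup norm of a real valued function. -/
noncomputable def supN {X : Type*} (f : X → ℝ) : ℝ := ⨆ x, |f x|

/-- The space of bounded real-valued functions on `X`, as a submodule of `X → ℝ`. -/
def bddFns (X : Type*) : Submodule ℝ (X → ℝ) where
  carrier := {f | IsBdd f}
  add_mem' := by
    rintro f g ⟨C, hC⟩ ⟨D, hD⟩
    exact ⟨C + D, fun x => (abs_add_le _ _).trans (add_le_add (hC x) (hD x))⟩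
  zero_mem' := ⟨0, fun x => by simp⟩
  smul_mem' := by
    rintro r f ⟨C, hC⟩
    refine ⟨|r| * C, fun x => ?_⟩
    rw [Pi.smul_apply, smul_eq_mul, abs_mul]
    exact mul_le_mul_of_nonneg_left (hC x) (abs_nonneg r)

lemma const_mem_bddFns (X : Type*) (r : ℝ) : (fun _ : X => r) ∈ bddFns X :=
  ⟨|r|, fun _ => le_rfl⟩

lemma translate_mem_bddFns {G : Type*} [Group G] (g : G) (f : ↥(bddFns G)) :
    (fun x => (f : G → ℝ) (x * g)) ∈ bddFns G := by
  obtain ⟨C, hC⟩ := f.2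
  exact ⟨C, fun x => hC (x * g)⟩

/-- A right-invariant mean on a group `G`: a linear functional on the space of bounded
real-valued functions on `G`, of operator norm at most `1`, sending each constant function
to its value, and invariant under right translations. -/
def IsRightInvariantMean (G : Type*) [Group G] (μ : ↥(bddFns G) →ₗ[ℝ] ℝ) : Prop :=
  (∀ f : ↥(bddFns G), |μ f| ≤ supN (f : G → ℝ)) ∧
  (∀ r : ℝ, μ ⟨fun _ => r, const_mem_bddFns G r⟩ = r) ∧
  (∀ (g : G) (f : ↥(bddFns G)), μ ⟨fun x => (f : G → ℝ) (x * g), translate_mem_bddFns g f⟩ = μ f)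

/-- A group is amenable if it admits a right-invariant mean. -/
def Amenable (G : Type*) [Group G] : Prop := ∃ μ, IsRightInvariantMean G μ

/-- The `i`-th face of an `(n+1)`-tuple of group elements: for `i = 0` drop the first
entry, for `i = n+1` drop the last entry, and for `0 < i < n+1` multiply the `i`-th and
`(i+1)`-st entries. -/
def tface {G : Type*} [Group G] {n : ℕ} (i : Fin (n + 2)) (g : Fin (n + 1) → G)
    (j : Fin n) : G :=
  if (j : ℕ) + 1 < (i : ℕ) then g j.castSucc
  else if (j : ℕ) + 1 = (i : ℕ) then g j.castSucc * g j.succ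
  else g j.succ

/-- The inhomogeneous coboundary operator on group cochains:
`d f (g₁, …, g_{n+1}) = f(g₂, …, g_{n+1}) + ∑_{i=1}^{n} (-1)^i f(g₁, …, g_i g_{i+1}, …, g_{n+1})
  + (-1)^{n+1} f (g₁, …, g_n)`. -/
noncomputable def dGrp (G : Type*) [Group G] (n : ℕ) :
    ((Fin n → G) → ℝ) →ₗ[ℝ] ((Fin (n + 1) → G) → ℝ) where
  toFun f := fun g => ∑ i : Fin (n + 2), (-1 : ℝ) ^ (i : ℕ) * f (tface i g)
  map_add' f g := by
    funext y
    simp only [Pi.add_apply, mul_add]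
    rw [Finset.sum_add_distrib]
  map_smul' r f := by
    funext y
    simp only [Pi.smul_apply, smul_eq_mul, RingHom.id_apply, Finset.mul_sum]
    exact Finset.sum_congr rfl fun i _ => by ring

/-- Bounded `n`-cocycles of `G`. -/
noncomputable def cocycles (G : Type*) [Group G] (n : ℕ) :
    Submodule ℝ ((Fin n → G) → ℝ) :=
  bddFns (Fin n → G) ⊓ LinearMap.ker (dGrp G n)

/-- Coboundaries of bounded cochains ( `0` in degree `0`). -/
noncomputable def coboundaries (G : Type*) [Group G] :
    ∀ n : ℕ, Submodule ℝ ((Fin n → G) → ℝ)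
  | 0 => ⊥
  | (n + 1) => (bddFns (Fin n → G)).map (dGrp G n)

/-- The quotient seminorm on the bounded cohomology
`Ĥ_b^n(G) = cocycles / coboundaries`: `‖α‖ = inf { ‖z‖_∞ : z a bounded cocycle representing α }`,
i.e. `‖[c]‖ = inf_b ‖c + d b‖_∞`. -/
noncomputable def qnorm (G : Type*) [Group G] (n : ℕ)
    (α : ↥(cocycles G n) ⧸ (coboundaries G n).comap (cocycles G n).subtype) : ℝ :=
  sInf {r : ℝ | ∃ z : ↥(cocycles G n),
    Submodule.Quotient.mk z = α ∧ r = supN (z : (Fin n → G) → ℝ)}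

/-- Pullback of cochains along a map `p : G → Q`, precomposing with `p` in each coordinate. -/
def pullCochain {G Q : Type*} (p : G → Q) (n : ℕ) :
    ((Fin n → Q) → ℝ) →ₗ[ℝ] ((Fin n → G) → ℝ) where
  toFun f := fun g => f fun j => p (g j)
  map_add' _ _ := rfl
  map_smul' _ _ := rfl

section ThmB

open Function

/-! ### sup norm lemmas -/

lemma supN_le {X : Type*} [Nonempty X] {f : X → ℝ} {C : ℝ} (h : ∀ x, |f x| ≤ C) :
    supN f ≤ C := ciSup_le h

lemma abs_le_supN {X : Type*} {f : X → ℝ} (h : IsBdd f) (x : X) : |f x| ≤ supN f := by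
  obtain ⟨C, hC⟩ := h
  exact le_ciSup ⟨C, by rintro r ⟨y, rfl⟩; exact hC y⟩ x

lemma supN_nonneg {X : Type*} [Nonempty X] (f : X → ℝ) : 0 ≤ supN f := by
  by_cases h : BddAbove (Set.range fun x => |f x|)
  · exact le_trans (abs_nonneg _) (le_ciSup h (Classical.arbitrary X))
  · unfold supN iSup
    rw [Real.sSup_of_not_bddAbove h]

lemma supN_comp_surj {X Y : Type*} {σ : X → Y} (hσ : Function.Surjective σ) (f : Y → ℝ) :
    supN (fun x => f (σ x)) = supN f := by
  unfold supN iSup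
  congr 1
  exact hσ.range_comp fun y => |f y|

/-! ### Left invariant means -/

structure LeftMean (K : Type*) [Group K] where
  ν : (K → ℝ) → ℝ
  bound : ∀ (f : K → ℝ) (C : ℝ), (∀ x, |f x| ≤ C) → |ν f| ≤ C
  isconst : ∀ r : ℝ, ν (fun _ => r) = r
  add : ∀ f g : K → ℝ, IsBdd f → IsBdd g → ν (fun x => f x + g x) = ν f + ν g
  smul : ∀ (c : ℝ) (f : K → ℝ), ν (fun x => c * f x) = c * ν f
  linv : ∀ (c : K) (f : K → ℝ), ν (fun k => f (c * k)) = ν f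

lemma isBdd_inv_comp {K : Type*} [Group K] {f : K → ℝ} :
    IsBdd (fun k => f k⁻¹) ↔ IsBdd f := by
  constructor
  · rintro ⟨C, hC⟩; exact ⟨C, fun x => by simpa using hC x⁻¹⟩
  · rintro ⟨C, hC⟩; exact ⟨C, fun x => hC x⁻¹⟩

open scoped Classical in
noncomputable def preMean {K : Type*} [Group K] (μ : ↥(bddFns K) →ₗ[ℝ] ℝ) :
    (K → ℝ) → ℝ := fun f =>
  if hb : IsBdd (fun k => f k⁻¹) then μ ⟨fun k => f k⁻¹, hb⟩ else 0

lemma preMean_pos {K : Type*} [Group K] (μ : ↥(bddFns K) →ₗ[ℝ] ℝ) {f : K → ℝ}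
    (hb : IsBdd (fun k => f k⁻¹)) : preMean μ f = μ ⟨fun k => f k⁻¹, hb⟩ := by
  unfold preMean; exact dif_pos hb

lemma preMean_neg {K : Type*} [Group K] (μ : ↥(bddFns K) →ₗ[ℝ] ℝ) {f : K → ℝ}
    (hb : ¬ IsBdd (fun k => f k⁻¹)) : preMean μ f = 0 := by
  unfold preMean; exact dif_neg hb

noncomputable def LeftMean.ofAmenable {K : Type*} [Group K] (h : Amenable K) : LeftMean K := by
  classical
  choose μ hμ using h
  refine
    { ν := preMean μ
      bound := ?_, isconst := ?_, add := ?_, smul := ?_, linv := ?_ }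
  · intro f C hC
    have hb : IsBdd (fun k => f k⁻¹) := ⟨C, fun x => hC x⁻¹⟩
    rw [preMean_pos μ hb]
    refine le_trans (hμ.1 _) (supN_le ?_)
    intro x; exact hC x⁻¹
  · intro r
    have hb : IsBdd (fun _ : K => r) := ⟨|r|, fun _ => le_rfl⟩
    rw [preMean_pos μ hb]
    exact hμ.2.1 r
  · intro f g hf hg
    have hf' : IsBdd (fun k => f k⁻¹) := isBdd_inv_comp.2 hf
    have hg' : IsBdd (fun k => g k⁻¹) := isBdd_inv_comp.2 hg
    have hfg : IsBdd (fun k => (fun x => f x + g x) k⁻¹) := by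
      obtain ⟨C, hC⟩ := hf'; obtain ⟨D, hD⟩ := hg'
      exact ⟨C + D, fun x => (abs_add_le _ _).trans (add_le_add (hC x) (hD x))⟩
    rw [preMean_pos μ hfg, preMean_pos μ hf', preMean_pos μ hg']
    have : (⟨fun k => (fun x => f x + g x) k⁻¹, hfg⟩ : ↥(bddFns K)) =
        ⟨fun k => f k⁻¹, hf'⟩ + ⟨fun k => g k⁻¹, hg'⟩ := rfl
    rw [this, map_add]
  · intro c f
    by_cases hf : IsBdd f
    · have hf' : IsBdd (fun k => f k⁻¹) := isBdd_inv_comp.2 hf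
      have hcf : IsBdd (fun k => (fun x => c * f x) k⁻¹) := by
        obtain ⟨C, hC⟩ := hf'
        exact ⟨|c| * C, fun x => by
          rw [abs_mul]; exact mul_le_mul_of_nonneg_left (hC x) (abs_nonneg c)⟩
      rw [preMean_pos μ hcf, preMean_pos μ hf']
      have : (⟨fun k => (fun x => c * f x) k⁻¹, hcf⟩ : ↥(bddFns K)) =
          c • ⟨fun k => f k⁻¹, hf'⟩ := rfl
      rw [this, map_smul, smul_eq_mul]
    · by_cases hc : c = 0
      · subst hc
        have hb : IsBdd (fun k => (fun x => (0:ℝ) * f x) k⁻¹) := ⟨0, by simp⟩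
        rw [preMean_pos μ hb, zero_mul]
        have : (⟨fun k => (fun x => (0:ℝ) * f x) k⁻¹, hb⟩ : ↥(bddFns K)) =
            ⟨fun _ => (0:ℝ), const_mem_bddFns K 0⟩ := by
          ext x; simp
        rw [this, hμ.2.1 0]
      · have hf' : ¬ IsBdd (fun k => f k⁻¹) := fun h => hf (isBdd_inv_comp.1 h)
        have hcf : ¬ IsBdd (fun k => (fun x => c * f x) k⁻¹) := by
          intro ⟨C, hC⟩
          refine hf' ⟨C / |c|, fun x => ?_⟩
          rw [le_div_iff₀ (abs_pos.2 hc), mul_comm]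
          calc |c| * |f x⁻¹| = |c * f x⁻¹| := (abs_mul c _).symm
            _ ≤ C := hC x
        rw [preMean_neg μ hcf, preMean_neg μ hf', mul_zero]
  · intro c f
    by_cases hf : IsBdd f
    · have h1 : IsBdd (fun k => (fun x => f (c * x)) k⁻¹) := by
        obtain ⟨C, hC⟩ := hf; exact ⟨C, fun x => hC _⟩
      have h2 : IsBdd (fun k => f k⁻¹) := isBdd_inv_comp.2 hf
      rw [preMean_pos μ h1, preMean_pos μ h2]
      have : (⟨fun k => (fun x => f (c * x)) k⁻¹, h1⟩ : ↥(bddFns K)) =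
          ⟨fun x => (⟨fun k => f k⁻¹, h2⟩ : ↥(bddFns K)).1 (x * c⁻¹),
            translate_mem_bddFns c⁻¹ _⟩ := by
        ext x
        show f (c * x⁻¹) = f (x * c⁻¹)⁻¹
        congr 1
        group
      rw [this, hμ.2.2 c⁻¹ ⟨fun k => f k⁻¹, h2⟩]
    · have h1 : ¬ IsBdd (fun k => (fun x => f (c * x)) k⁻¹) := by
        intro ⟨C, hC⟩
        exact hf ⟨C, fun x => by simpa using hC (x⁻¹ * c)⟩
      have h2 : ¬ IsBdd (fun k => f k⁻¹) := fun h => hf (isBdd_inv_comp.1 h)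
      rw [preMean_neg μ h1, preMean_neg μ h2]

end ThmB
section Homog

open Finset

/-! ### Fin helpers -/

lemma sa_val {m : ℕ} (i : Fin (m+1)) (a : Fin m) :
    ((i.succAbove a : Fin (m+1)) : ℕ) = if (a:ℕ) < (i:ℕ) then (a:ℕ) else (a:ℕ)+1 := by
  rcases lt_or_ge (a.castSucc) i with h | h
  · rw [Fin.succAbove_of_castSucc_lt _ _ h, if_pos]
    · exact Fin.coe_castSucc a
    · simpa [Fin.lt_def] using h
  · rw [Fin.succAbove_of_le_castSucc _ _ h, if_neg]
    · exact Fin.val_succ a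
    · simpa [Fin.le_def] using h

lemma sa_comm {m : ℕ} (u v : Fin (m+1)) (huv : (u:ℕ) ≤ (v:ℕ)) (a : Fin m) :
    (v.succ).succAbove (u.succAbove a) = (u.castSucc).succAbove (v.succAbove a) := by
  have h1 := sa_val v.succ (u.succAbove a)
  have h2 := sa_val u.castSucc (v.succAbove a)
  have h3 := sa_val u a
  have h4 := sa_val v a
  apply Fin.ext
  rw [h1, h2, h3, h4]
  simp only [Fin.val_succ, Fin.coe_castSucc]
  split_ifs <;> omega

/-! ### The homogeneous complex -/

variable {X : Type*} [Group X]

/-- Homogeneous coboundary (with augmentation at the bottom). -/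
noncomputable def dh {X : Type*} (j : ℕ) (F : (Fin j → X) → ℝ) :
    (Fin (j+1) → X) → ℝ :=
  fun x => ∑ i : Fin (j+1), (-1:ℝ)^(i:ℕ) * F (fun a => x (i.succAbove a))

/-- Cone contraction. -/
noncomputable def tC {X : Type*} [Group X] {j : ℕ} (F : (Fin (j+1) → X) → ℝ) :
    (Fin j → X) → ℝ :=
  fun y => F (Fin.cons 1 y)

/-- Translation action (precomposition with left multiplication). -/
def Tact {X : Type*} [Group X] {j : ℕ} (g : X) (F : (Fin j → X) → ℝ) :
    (Fin j → X) → ℝ :=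
  fun x => F (fun i => g * x i)

/-- Invariance of a homogeneous cochain. -/
def InvC {X : Type*} [Group X] {j : ℕ} (F : (Fin j → X) → ℝ) : Prop :=
  ∀ g : X, Tact g F = F

def ddInv {j : ℕ} (p : Fin (j+2) × Fin (j+1)) : Fin (j+2) × Fin (j+1) :=
  if _ : (p.2 : ℕ) < (p.1 : ℕ) then
    (p.2.castSucc, ⟨(p.1:ℕ)-1, by have := p.1.isLt; omega⟩)
  else (p.2.succ, ⟨(p.1:ℕ), by have := p.2.isLt; omega⟩)

lemma ddInv_pos {j : ℕ} (p : Fin (j+2) × Fin (j+1)) (h : (p.2:ℕ) < (p.1:ℕ)) :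
    ddInv p = (p.2.castSucc, ⟨(p.1:ℕ)-1, by have := p.1.isLt; omega⟩) := dif_pos h

lemma ddInv_neg {j : ℕ} (p : Fin (j+2) × Fin (j+1)) (h : ¬ (p.2:ℕ) < (p.1:ℕ)) :
    ddInv p = (p.2.succ, ⟨(p.1:ℕ), by have := p.2.isLt; omega⟩) := dif_neg h

lemma dh_dh {X : Type*} (j : ℕ) (F : (Fin j → X) → ℝ) (x : Fin (j+2) → X) :
    dh (j+1) (dh j F) x = 0 := by
  unfold dh
  have step : ∀ i : Fin (j+2), ((-1:ℝ)^(i:ℕ) * ∑ b : Fin (j+1),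
      (-1:ℝ)^(b:ℕ) * F (fun a => x (i.succAbove (b.succAbove a)))) =
      ∑ b : Fin (j+1), (-1:ℝ)^((i:ℕ)+(b:ℕ)) *
        F (fun a => x (i.succAbove (b.succAbove a))) := by
    intro i
    rw [Finset.mul_sum]
    refine Finset.sum_congr rfl fun b _ => ?_
    rw [← mul_assoc, ← pow_add]
  calc (∑ i : Fin (j+2), (-1:ℝ)^(i:ℕ) * ∑ b : Fin (j+1),
        (-1:ℝ)^(b:ℕ) * F (fun a => (fun a' => x (i.succAbove a')) (b.succAbove a)))
      = ∑ p ∈ (univ : Finset (Fin (j+2) × Fin (j+1))),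
          (-1:ℝ)^((p.1:ℕ)+(p.2:ℕ)) * F (fun a => x (p.1.succAbove (p.2.succAbove a))) := by
        rw [← Finset.univ_product_univ, Finset.sum_product]
        exact Finset.sum_congr rfl fun i _ => step i
    _ = 0 := by
        refine Finset.sum_involution (fun p _ => ddInv p) ?_ ?_ (fun _ _ => Finset.mem_univ _) ?_
        · intro p _
          beta_reduce
          by_cases h : (p.2 : ℕ) < (p.1 : ℕ)
          · rw [ddInv_pos p h]
            have harg : (fun a => x (p.1.succAbove (p.2.succAbove a))) =
                (fun a : Fin j => x ((p.2.castSucc).succAbove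
                  ((⟨(p.1:ℕ)-1, by have := p.1.isLt; omega⟩ : Fin (j+1)).succAbove a))) := by
              funext a
              set v : Fin (j+1) := ⟨(p.1:ℕ)-1, by have := p.1.isLt; omega⟩ with hv
              have hp1 : p.1 = v.succ := by apply Fin.ext; simp only [Fin.val_succ, hv]; omega
              rw [hp1]
              congr 1
              exact sa_comm p.2 v (by simp only [hv]; omega) a
            rw [harg]
            have hsign : ((-1:ℝ))^((p.1:ℕ)+(p.2:ℕ)) =
                -((-1:ℝ))^((((p.2.castSucc : Fin (j+2)):ℕ))+(((⟨(p.1:ℕ)-1, by have := p.1.isLt; omega⟩ : Fin (j+1)):ℕ))) := by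
              simp only [Fin.coe_castSucc]
              have h1 : (p.1:ℕ) + (p.2:ℕ) = ((p.2:ℕ)+((p.1:ℕ)-1)) + 1 := by omega
              rw [h1, pow_succ]; ring
            rw [hsign]; ring
          · rw [ddInv_neg p h]
            have harg : (fun a => x (p.1.succAbove (p.2.succAbove a))) =
                (fun a : Fin j => x ((p.2.succ).succAbove
                  ((⟨(p.1:ℕ), by have := p.2.isLt; omega⟩ : Fin (j+1)).succAbove a))) := by
              funext a
              set u : Fin (j+1) := ⟨(p.1:ℕ), by have := p.2.isLt; omega⟩ with hu
              have hp1 : p.1 = u.castSucc := by apply Fin.ext; simp only [Fin.coe_castSucc, hu]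
              rw [hp1]
              congr 1
              exact (sa_comm u p.2 (by simp only [hu]; omega) a).symm
            rw [harg]
            have hsign : ((-1:ℝ))^((p.1:ℕ)+(p.2:ℕ)) =
                -((-1:ℝ))^((((p.2.succ : Fin (j+2)):ℕ))+(((⟨(p.1:ℕ), by have := p.2.isLt; omega⟩ : Fin (j+1)):ℕ))) := by
              simp only [Fin.val_succ]
              have h1 : ((p.2:ℕ)+1)+(p.1:ℕ) = ((p.1:ℕ) + (p.2:ℕ)) + 1 := by omega
              rw [h1, pow_succ]; ring
            rw [hsign]; ring
        · intro p _ _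
          beta_reduce
          by_cases h : (p.2 : ℕ) < (p.1 : ℕ)
          · rw [ddInv_pos p h]
            intro hc
            have h1 := congrArg (fun q : Fin (j+2) × Fin (j+1) => (q.1 : ℕ)) hc
            simp only [Fin.coe_castSucc] at h1
            omega
          · rw [ddInv_neg p h]
            intro hc
            have h1 := congrArg (fun q : Fin (j+2) × Fin (j+1) => (q.1 : ℕ)) hc
            simp only [Fin.val_succ] at h1
            omega
        · intro p _
          beta_reduce
          by_cases h : (p.2 : ℕ) < (p.1 : ℕ)
          · rw [ddInv_pos p h]
            rw [ddInv_neg _ (by simp only [Fin.coe_castSucc]; omega)]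
            apply Prod.ext <;> apply Fin.ext <;> simp <;> omega
          · rw [ddInv_neg p h]
            rw [ddInv_pos _ (by simp only [Fin.val_succ]; omega)]
            apply Prod.ext <;> apply Fin.ext <;> simp

end Homog
section ConeTact

open Finset

variable {X : Type*} [Group X]

lemma dh_sub {j : ℕ} (F G : (Fin j → X) → ℝ) (x : Fin (j+1) → X) :
    dh j (fun y => F y - G y) x = dh j F x - dh j G x := by
  unfold dh
  rw [← Finset.sum_sub_distrib]
  refine Finset.sum_congr rfl fun i _ => ?_
  ring

lemma dh_bdd {j : ℕ} {F : (Fin j → X) → ℝ} {C : ℝ}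
    (hF : ∀ y, |F y| ≤ C) (x : Fin (j+1) → X) : |dh j F x| ≤ (j+1) * C := by
  unfold dh
  calc |∑ i : Fin (j+1), (-1:ℝ)^(i:ℕ) * F (fun a => x (i.succAbove a))|
      ≤ ∑ i : Fin (j+1), |(-1:ℝ)^(i:ℕ) * F (fun a => x (i.succAbove a))| :=
        Finset.abs_sum_le_sum_abs _ _
    _ ≤ ∑ _i : Fin (j+1), C := by
        refine Finset.sum_le_sum fun i _ => ?_
        rw [abs_mul, abs_pow, abs_neg, abs_one, one_pow, one_mul]
        exact hF _
    _ = (j+1) * C := by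
        rw [Finset.sum_const, Finset.card_univ, Fintype.card_fin, nsmul_eq_mul]
        push_cast
        ring

lemma Tact_Tact {j : ℕ} (g h : X) (F : (Fin j → X) → ℝ) :
    Tact g (Tact h F) = Tact (h * g) F := by
  funext x
  unfold Tact
  congr 1
  funext i
  rw [mul_assoc]

lemma Tact_one {j : ℕ} (F : (Fin j → X) → ℝ) : Tact 1 F = F := by
  funext x
  unfold Tact
  congr 1
  funext i
  rw [one_mul]

lemma Tact_inv_Tact {j : ℕ} (g : X) (F : (Fin j → X) → ℝ) :
    Tact g⁻¹ (Tact g F) = F := by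
  rw [Tact_Tact, mul_inv_cancel, Tact_one]

lemma Tact_sub {j : ℕ} (g : X) (F G : (Fin j → X) → ℝ) :
    Tact g (fun y => F y - G y) = fun y => Tact g F y - Tact g G y := rfl

lemma dh_Tact {j : ℕ} (g : X) (F : (Fin j → X) → ℝ) :
    dh j (Tact g F) = Tact g (dh j F) := by
  funext x
  unfold dh Tact
  rfl

lemma Tact_bdd {j : ℕ} {F : (Fin j → X) → ℝ} {C : ℝ} (hF : ∀ y, |F y| ≤ C)
    (g : X) : ∀ y, |Tact g F y| ≤ C := fun y => hF _

lemma tC_bdd {j : ℕ} {F : (Fin (j+1) → X) → ℝ} {C : ℝ} (hF : ∀ y, |F y| ≤ C) :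
    ∀ y, |tC F y| ≤ C := fun y => hF _

lemma cone {j : ℕ} (G : (Fin (j+1) → X) → ℝ) (x : Fin (j+1) → X) :
    tC (dh (j+1) G) x = G x - dh j (tC G) x := by
  unfold tC dh
  rw [Fin.sum_univ_succ]
  have h0 : (fun a : Fin (j+1) => (Fin.cons (1:X) x : Fin (j+2) → X) ((0 : Fin (j+2)).succAbove a)) = x := by
    funext a
    rw [Fin.zero_succAbove, Fin.cons_succ]
  rw [h0]
  simp only [Fin.val_zero, pow_zero, one_mul]
  have hsucc : ∀ i' : Fin (j+1),
      (fun a : Fin (j+1) => (Fin.cons (1:X) x : Fin (j+2) → X) ((i'.succ).succAbove a)) =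
      (Fin.cons (1:X) (fun a => x (i'.succAbove a)) : Fin (j+1) → X) := by
    intro i'
    funext a
    refine Fin.cases ?_ ?_ a
    · rw [Fin.succ_succAbove_zero, Fin.cons_zero, Fin.cons_zero]
    · intro b
      rw [Fin.succ_succAbove_succ, Fin.cons_succ, Fin.cons_succ]
  have : ∑ i' : Fin (j+1), (-1:ℝ)^((i'.succ : Fin (j+2)):ℕ) *
      G (fun a : Fin (j+1) => (Fin.cons (1:X) x : Fin (j+2) → X) ((i'.succ).succAbove a)) =
      - ∑ i' : Fin (j+1), (-1:ℝ)^((i':ℕ)) * G (Fin.cons 1 (fun a => x (i'.succAbove a))) := by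
    rw [← Finset.sum_neg_distrib]
    refine Finset.sum_congr rfl fun i' _ => ?_
    rw [hsucc i']
    simp only [Fin.val_succ, pow_succ]
    ring
  rw [this]
  ring

end ConeTact
section MnSec

open Finset

variable {K : Type*} [Group K]

noncomputable def Mint (μ : LeftMean K) : ∀ (j : ℕ), ((Fin j → K) → ℝ) → ℝ
  | 0, f => f (fun i => i.elim0)
  | (j+1), f => μ.ν (fun k => Mint μ j (fun ks => f (Fin.cons k ks)))

lemma Mint_bound (μ : LeftMean K) : ∀ (j : ℕ) (f : (Fin j → K) → ℝ) (C : ℝ),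
    (∀ x, |f x| ≤ C) → |Mint μ j f| ≤ C
  | 0, f, C, h => h _
  | (j+1), f, C, h => by
    refine μ.bound _ _ fun k => ?_
    exact Mint_bound μ j _ C fun ks => h _

lemma Mint_isBdd (μ : LeftMean K) {j : ℕ} {f : (Fin j → K) → ℝ} (h : IsBdd f) :
    IsBdd (fun _ : Unit => Mint μ j f) := by
  obtain ⟨C, hC⟩ := h
  exact ⟨C, fun _ => Mint_bound μ j f C hC⟩

lemma Mint_const (μ : LeftMean K) : ∀ (j : ℕ) (r : ℝ), Mint μ j (fun _ => r) = r
  | 0, r => rfl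
  | (j+1), r => by
    show μ.ν (fun k => Mint μ j (fun _ => r)) = r
    have : (fun k : K => Mint μ j (fun _ => r)) = fun _ : K => r := by
      funext k
      exact Mint_const μ j r
    rw [this, μ.isconst]

lemma Mint_add (μ : LeftMean K) : ∀ (j : ℕ) (f g : (Fin j → K) → ℝ),
    IsBdd f → IsBdd g → Mint μ j (fun x => f x + g x) = Mint μ j f + Mint μ j g
  | 0, f, g, _, _ => rfl
  | (j+1), f, g, hf, hg => by
    obtain ⟨C, hC⟩ := hf
    obtain ⟨D, hD⟩ := hg
    show μ.ν _ = μ.ν _ + μ.ν _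
    have key : (fun k => Mint μ j (fun ks => (fun x => f x + g x) (Fin.cons k ks))) =
        fun k => Mint μ j (fun ks => f (Fin.cons k ks)) +
          Mint μ j (fun ks => g (Fin.cons k ks)) := by
      funext k
      exact Mint_add μ j _ _ ⟨C, fun ks => hC _⟩ ⟨D, fun ks => hD _⟩
    rw [key]
    exact μ.add _ _ ⟨C, fun k => Mint_bound μ j _ C fun ks => hC _⟩
      ⟨D, fun k => Mint_bound μ j _ D fun ks => hD _⟩

lemma Mint_smul (μ : LeftMean K) : ∀ (j : ℕ) (c : ℝ) (f : (Fin j → K) → ℝ),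
    Mint μ j (fun x => c * f x) = c * Mint μ j f
  | 0, c, f => rfl
  | (j+1), c, f => by
    show μ.ν _ = c * μ.ν _
    have key : (fun k => Mint μ j (fun ks => (fun x => c * f x) (Fin.cons k ks))) =
        fun k => c * Mint μ j (fun ks => f (Fin.cons k ks)) := by
      funext k
      exact Mint_smul μ j c _
    rw [key]
    exact μ.smul _ _

lemma Mint_sub (μ : LeftMean K) (j : ℕ) (f g : (Fin j → K) → ℝ)
    (hf : IsBdd f) (hg : IsBdd g) :
    Mint μ j (fun x => f x - g x) = Mint μ j f - Mint μ j g := by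
  have h1 : (fun x => f x - g x) = fun x => f x + (-1 : ℝ) * g x := by
    funext x; ring
  have hg' : IsBdd (fun x => (-1:ℝ) * g x) := by
    obtain ⟨D, hD⟩ := hg
    exact ⟨D, fun x => by rw [abs_mul]; simpa using hD x⟩
  rw [h1, Mint_add μ j f _ hf hg', Mint_smul]
  ring

lemma Mint_zero (μ : LeftMean K) (j : ℕ) : Mint μ j (fun _ => 0) = 0 := Mint_const μ j 0

lemma Mint_trans (μ : LeftMean K) : ∀ (j : ℕ) (c : Fin j → K) (f : (Fin j → K) → ℝ),
    Mint μ j (fun k => f (fun i => c i * k i)) = Mint μ j f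
  | 0, c, f => by
    show f _ = f _
    congr 1
    funext i
    exact i.elim0
  | (j+1), c, f => by
    show μ.ν _ = μ.ν _
    have key : (fun k => Mint μ j (fun ks => (fun k' => f (fun i => c i * k' i)) (Fin.cons k ks))) =
        fun k => Mint μ j (fun u => f (Fin.cons (c 0 * k) u)) := by
      funext k
      have harg : ∀ ks : Fin j → K, (fun i => c i * (Fin.cons k ks : Fin (j+1) → K) i) =
          (Fin.cons (c 0 * k) (fun a => c a.succ * ks a) : Fin (j+1) → K) := by
        intro ks
        funext i
        refine Fin.cases ?_ ?_ i
        · rw [Fin.cons_zero, Fin.cons_zero]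
        · intro b
          rw [Fin.cons_succ, Fin.cons_succ]
      have : (fun ks => f (fun i => c i * (Fin.cons k ks : Fin (j+1) → K) i)) =
          fun ks => (fun u => f (Fin.cons (c 0 * k) u)) (fun a => (fun b => c b.succ * ks b) a) := by
        funext ks
        rw [harg ks]
      show Mint μ j (fun ks => f (fun i => c i * (Fin.cons k ks : Fin (j+1) → K) i)) = _
      rw [this]
      exact Mint_trans μ j (fun b => c b.succ) (fun u => f (Fin.cons (c 0 * k) u))
    rw [key]
    have := μ.linv (c 0) (fun k => Mint μ j (fun u => f (Fin.cons k u)))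
    exact this

lemma Mint_del (μ : LeftMean K) : ∀ (j : ℕ) (i : Fin (j+1)) (g : (Fin j → K) → ℝ),
    IsBdd g → Mint μ (j+1) (fun k => g (fun a => k (i.succAbove a))) = Mint μ j g
  | 0, i, g, _ => by
    show μ.ν _ = g _
    have : (fun k : K => Mint μ 0 (fun ks => g (fun a => (Fin.cons k ks : Fin 1 → K) (i.succAbove a)))) =
        fun _ : K => g (fun a => a.elim0) := by
      funext k
      show g _ = g _
      congr 1
      funext a
      exact a.elim0
    rw [this, μ.isconst]
  | (j+1), i, g, hg => by
    obtain ⟨C, hC⟩ := hg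
    refine Fin.cases ?_ ?_ i
    · show μ.ν _ = _
      have key : (fun k : K => Mint μ (j+1) (fun ks => g (fun a => (Fin.cons k ks : Fin (j+2) → K) ((0 : Fin (j+2)).succAbove a)))) =
          fun _ : K => Mint μ (j+1) g := by
        funext k
        refine congrArg _ (funext fun ks => congrArg g (funext fun a => ?_))
        rw [Fin.zero_succAbove, Fin.cons_succ]
      rw [key, μ.isconst]
    · intro i'
      show μ.ν _ = μ.ν _
      have key : (fun k : K => Mint μ (j+1) (fun ks => g (fun a => (Fin.cons k ks : Fin (j+2) → K) ((i'.succ).succAbove a)))) =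
          fun k : K => Mint μ j (fun u => g (Fin.cons k u)) := by
        funext k
        have harg : ∀ ks : Fin (j+1) → K,
            (fun a => (Fin.cons k ks : Fin (j+2) → K) ((i'.succ).succAbove a)) =
            (Fin.cons k (fun b => ks (i'.succAbove b)) : Fin (j+1) → K) := by
          intro ks
          funext a
          refine Fin.cases ?_ ?_ a
          · rw [Fin.succ_succAbove_zero, Fin.cons_zero, Fin.cons_zero]
          · intro b
            rw [Fin.succ_succAbove_succ, Fin.cons_succ, Fin.cons_succ]
        have h2 : (fun ks => g (fun a => (Fin.cons k ks : Fin (j+2) → K) ((i'.succ).succAbove a))) =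
            fun ks => (fun u => g (Fin.cons k u)) (fun b => ks (i'.succAbove b)) := by
          funext ks
          rw [harg ks]
        rw [h2]
        exact Mint_del μ j i' (fun u => g (Fin.cons k u)) ⟨C, fun u => hC _⟩
      rw [key]

lemma isBdd_finsum {X : Type*} {ι : Type*} (s : Finset ι)
    (f : ι → X → ℝ) (hf : ∀ i ∈ s, IsBdd (f i)) :
    IsBdd (fun x => ∑ i ∈ s, f i x) := by
  classical
  induction s using Finset.induction with
  | empty => exact ⟨0, by simp⟩
  | @insert b t' hy ih2 =>
    obtain ⟨C, hC⟩ := hf b (Finset.mem_insert_self _ _)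
    obtain ⟨D, hD⟩ := ih2 fun i hi => hf i (Finset.mem_insert_of_mem hi)
    refine ⟨C + D, fun x => ?_⟩
    show |∑ i ∈ insert b t', f i x| ≤ C + D
    rw [Finset.sum_insert hy]
    exact (abs_add_le _ _).trans (add_le_add (hC x) (hD x))

lemma Mint_finsum (μ : LeftMean K) {j : ℕ} {ι : Type*} (s : Finset ι)
    (f : ι → (Fin j → K) → ℝ) (hf : ∀ i ∈ s, IsBdd (f i)) :
    Mint μ j (fun x => ∑ i ∈ s, f i x) = ∑ i ∈ s, Mint μ j (f i) := by
  classical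
  induction s using Finset.induction with
  | empty => simpa using Mint_zero μ j
  | @insert a s' hx ih =>
    have hsum : IsBdd (fun x => ∑ i ∈ s', f i x) :=
      isBdd_finsum s' f fun i hi => hf i (Finset.mem_insert_of_mem hi)
    have key : (fun x => ∑ i ∈ insert a s', f i x) =
        fun x => f a x + ∑ i ∈ s', f i x := by
      funext x
      rw [Finset.sum_insert hx]
    rw [key, Mint_add μ j _ _ (hf a (Finset.mem_insert_self _ _)) hsum,
      ih (fun i hi => hf i (Finset.mem_insert_of_mem hi)), Finset.sum_insert hx]

end MnSec
section Transfer

open Finset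

variable {G : Type*} [Group G] (N : Subgroup G) [N.Normal] (μ : LeftMean ↥N)

/-- Transfer of homogeneous cochains by averaging. -/
noncomputable def mh (j : ℕ) (F : (Fin j → G) → ℝ) : (Fin j → G ⧸ N) → ℝ :=
  fun y => Mint μ j (fun k => F (fun i => (y i).out * (k i : G)))

/-- Pullback of homogeneous cochains. -/
def ph (j : ℕ) (F : (Fin j → G ⧸ N) → ℝ) : (Fin j → G) → ℝ :=
  fun x => F (fun i => (x i : G ⧸ N))

/-- The projection operator `P = ph ∘ mh`. -/
noncomputable def Pop (j : ℕ) (F : (Fin j → G) → ℝ) : (Fin j → G) → ℝ :=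
  ph N j (mh N μ j F)

lemma mh_bound {j : ℕ} {F : (Fin j → G) → ℝ} {C : ℝ} (hF : ∀ x, |F x| ≤ C) :
    ∀ y, |mh N μ j F y| ≤ C :=
  fun _ => Mint_bound μ j _ C fun _ => hF _

lemma Pop_bound {j : ℕ} {F : (Fin j → G) → ℝ} {C : ℝ} (hF : ∀ x, |F x| ≤ C) :
    ∀ x, |Pop N μ j F x| ≤ C :=
  fun x => mh_bound N μ hF _

lemma mh_ph {j : ℕ} (F : (Fin j → G ⧸ N) → ℝ) : mh N μ j (ph N j F) = F := by
  funext y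
  unfold mh ph
  have key : (fun k : Fin j → ↥N => F (fun i => (((y i).out * (k i : G) : G) : G ⧸ N))) =
      fun _ => F y := by
    funext k
    congr 1
    funext i
    have h1 : (((y i).out * (k i : G) : G) : G ⧸ N) = ((y i).out : G ⧸ N) * ((k i : G) : G ⧸ N) := rfl
    have h2 : (((k i : G)) : G ⧸ N) = 1 := (QuotientGroup.eq_one_iff _).2 (k i).2
    rw [h1, h2, mul_one, QuotientGroup.out_eq']
  rw [key, Mint_const]

lemma mh_sub {j : ℕ} (F F' : (Fin j → G) → ℝ) (hF : IsBdd F) (hF' : IsBdd F') :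
    mh N μ j (fun y => F y - F' y) = fun y => mh N μ j F y - mh N μ j F' y := by
  funext y
  unfold mh
  obtain ⟨C, hC⟩ := hF
  obtain ⟨D, hD⟩ := hF'
  exact Mint_sub μ j _ _ ⟨C, fun k => hC _⟩ ⟨D, fun k => hD _⟩

lemma Pop_sub {j : ℕ} (F F' : (Fin j → G) → ℝ) (hF : IsBdd F) (hF' : IsBdd F') (x) :
    Pop N μ j (fun y => F y - F' y) x = Pop N μ j F x - Pop N μ j F' x := by
  unfold Pop ph
  rw [mh_sub N μ F F' hF hF']

lemma mh_dh {j : ℕ} (F : (Fin j → G) → ℝ) (hF : IsBdd F) :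
    mh N μ (j+1) (dh j F) = dh j (mh N μ j F) := by
  obtain ⟨C, hC⟩ := hF
  funext y
  unfold mh dh
  have key : (fun k : Fin (j+1) → ↥N =>
      ∑ i : Fin (j+1), (-1:ℝ)^(i:ℕ) * F (fun a => (fun i' => (y i').out * (k i' : G)) (i.succAbove a))) =
      fun k => ∑ i : Fin (j+1), (-1:ℝ)^(i:ℕ) * F (fun a => (y (i.succAbove a)).out * (k (i.succAbove a) : G)) := rfl
  rw [key]
  rw [Mint_finsum μ univ _ (fun i _ => ⟨C, fun k => by
    rw [abs_mul, abs_pow, abs_neg, abs_one, one_pow, one_mul]; exact hC _⟩)]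
  refine Finset.sum_congr rfl fun i _ => ?_
  rw [Mint_smul]
  congr 1
  have form : (fun k : Fin (j+1) → ↥N => F (fun a => (y (i.succAbove a)).out * (k (i.succAbove a) : G))) =
      fun k => (fun k' : Fin j → ↥N => F (fun a => (y (i.succAbove a)).out * (k' a : G))) (fun a => k (i.succAbove a)) := rfl
  rw [form]
  exact Mint_del μ j i (fun k' : Fin j → ↥N => F (fun a => (y (i.succAbove a)).out * (k' a : G)))
    ⟨C, fun k' => hC _⟩

lemma ph_dh {j : ℕ} (V : (Fin j → G ⧸ N) → ℝ) :
    ph N (j+1) (dh j V) = dh j (ph N j V) := rfl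

lemma Pop_dh {j : ℕ} (F : (Fin j → G) → ℝ) (hF : IsBdd F) :
    Pop N μ (j+1) (dh j F) = dh j (Pop N μ j F) := by
  unfold Pop
  rw [mh_dh N μ F hF, ph_dh]

/-- The element of `N` relating the coset representatives `(g*x).out` and `g * x.out`. -/
lemma rep_diff (g x : G) :
    ∃ c : ↥N, (((g * x : G) : G ⧸ N)).out = g * ((x : G ⧸ N)).out * (c : G) := by
  have hmem : (g * ((x : G ⧸ N)).out)⁻¹ * (((g * x : G) : G ⧸ N)).out ∈ N := by
    rw [← QuotientGroup.eq_one_iff]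
    rw [QuotientGroup.mk_mul, QuotientGroup.mk_inv, QuotientGroup.mk_mul,
      QuotientGroup.out_eq', QuotientGroup.out_eq', QuotientGroup.mk_mul]
    group
  exact ⟨⟨_, hmem⟩, by group⟩

lemma Pop_equiv {j : ℕ} (g : G) (F : (Fin j → G) → ℝ) :
    Pop N μ j (Tact g F) = Tact g (Pop N μ j F) := by
  funext x
  choose c hc using fun i : Fin j => rep_diff N g (x i)
  show Mint μ j (fun k => F (fun i => g * ((((x i : G ⧸ N)).out) * (k i : G)))) =
    Mint μ j (fun k => F (fun i => (((g * x i : G) : G ⧸ N)).out * (k i : G)))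
  symm
  have key : (fun k : Fin j → ↥N => F (fun i => (((g * x i : G) : G ⧸ N)).out * (k i : G))) =
      fun k => (fun k' : Fin j → ↥N => F (fun i => g * ((((x i : G ⧸ N)).out) * (k' i : G))))
        (fun i => c i * k i) := by
    funext k
    show F _ = F _
    congr 1
    funext i
    rw [hc i, Subgroup.coe_mul]
    group
  rw [key]
  exact Mint_trans μ j c (fun k' : Fin j → ↥N => F (fun i => g * ((((x i : G ⧸ N)).out) * (k' i : G))))

lemma mh_inv {j : ℕ} (F : (Fin j → G) → ℝ) (hF : InvC F) : InvC (mh N μ j F) := by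
  intro q
  funext y
  choose c hc using fun i : Fin j => rep_diff N q.out ((y i).out)
  have hc' : ∀ i : Fin j, (q * y i).out = q.out * (y i).out * (c i : G) := by
    intro i
    have h := hc i
    rw [QuotientGroup.out_eq' (y i)] at h
    have hqy : q * y i = ((q.out * (y i).out : G) : G ⧸ N) := by
      rw [QuotientGroup.mk_mul, QuotientGroup.out_eq', QuotientGroup.out_eq']
    rw [← hqy] at h
    exact h
  show Mint μ j (fun k => F (fun i => ((q * y i).out) * (k i : G))) =
    Mint μ j (fun k => F (fun i => ((y i).out) * (k i : G)))
  have key : (fun k : Fin j → ↥N => F (fun i => ((q * y i).out) * (k i : G))) =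
      fun k => (Tact q.out F) (fun i => ((y i).out) * ((c i * k i : ↥N) : G)) := by
    funext k
    show F _ = Tact q.out F _
    unfold Tact
    congr 1
    funext i
    beta_reduce
    rw [hc' i, Subgroup.coe_mul]
    group
  rw [key, hF q.out]
  exact Mint_trans μ j c (fun k' : Fin j → ↥N => F (fun i => ((y i).out) * (k' i : G)))

end Transfer
section Homotopy

open Finset

variable {G : Type*} [Group G] (N : Subgroup G) [N.Normal] (μ : LeftMean ↥N)

def hd {j : ℕ} (x : Fin j → G) : G := if h : 0 < j then x ⟨0, h⟩ else 1

lemma hd_pos {j : ℕ} (x : Fin (j+1) → G) : hd x = x 0 := by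
  unfold hd
  rw [dif_pos (Nat.succ_pos j)]
  rfl

noncomputable def Rop : ∀ (j : ℕ), ((Fin j → G) → ℝ) → ((Fin j → G) → ℝ)
  | 0 => fun _ _ => 0
  | (j+1) => fun F x =>
      (F x - Pop N μ (j+1) F x) -
        dh j (fun y => Rop j (Tact (hd y)⁻¹ (tC (Tact (hd y) F))) y) x

noncomputable def Kop (j : ℕ) (F : (Fin (j+1) → G) → ℝ) : (Fin j → G) → ℝ :=
  fun y => Rop N μ j (Tact (hd y)⁻¹ (tC (Tact (hd y) F))) y

lemma Rop_zero_ap (F : (Fin 0 → G) → ℝ) (x : Fin 0 → G) : Rop N μ 0 F x = 0 := rfl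

lemma Rop_succ (j : ℕ) (F : (Fin (j+1) → G) → ℝ) (x : Fin (j+1) → G) :
    Rop N μ (j+1) F x = (F x - Pop N μ (j+1) F x) - dh j (Kop N μ j F) x := rfl

lemma Rop_sub : ∀ (j : ℕ) (F F' : (Fin j → G) → ℝ), IsBdd F → IsBdd F' →
    ∀ x, Rop N μ j (fun y => F y - F' y) x = Rop N μ j F x - Rop N μ j F' x
  | 0, F, F', _, _, x => by
    rw [Rop_zero_ap, Rop_zero_ap, Rop_zero_ap]; ring
  | (j+1), F, F', hF, hF', x => by
    obtain ⟨C, hC⟩ := hF; obtain ⟨D, hD⟩ := hF'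
    rw [Rop_succ, Rop_succ, Rop_succ]
    have hK : Kop N μ j (fun y => F y - F' y) =
        fun y => Kop N μ j F y - Kop N μ j F' y := by
      funext y
      unfold Kop
      have harg : Tact (hd y)⁻¹ (tC (Tact (hd y) (fun z => F z - F' z))) =
          fun z => Tact (hd y)⁻¹ (tC (Tact (hd y) F)) z -
            Tact (hd y)⁻¹ (tC (Tact (hd y) F')) z := rfl
      rw [harg]
      exact Rop_sub j _ _ ⟨C, fun z => hC _⟩ ⟨D, fun z => hD _⟩ y
    rw [hK, Pop_sub N μ F F' ⟨C, hC⟩ ⟨D, hD⟩ x, dh_sub]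
    ring

lemma Rop_bdd : ∀ (j : ℕ), ∃ c : ℝ, 0 ≤ c ∧ ∀ (F : (Fin j → G) → ℝ) (C : ℝ), 0 ≤ C →
    (∀ x, |F x| ≤ C) → ∀ x, |Rop N μ j F x| ≤ c * C
  | 0 => ⟨0, le_rfl, fun F C hC0 hF x => by rw [Rop_zero_ap]; simp⟩
  | (j+1) => by
    obtain ⟨c, hc0, hc⟩ := Rop_bdd j
    refine ⟨2 + (j+1) * c, by positivity, fun F C hC0 hF x => ?_⟩
    rw [Rop_succ]
    have h1 : |F x - Pop N μ (j+1) F x| ≤ 2 * C := by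
      have h2 := Pop_bound N μ hF x
      have h3 := hF x
      calc |F x - Pop N μ (j+1) F x| ≤ |F x| + |Pop N μ (j+1) F x| := abs_sub _ _
        _ ≤ 2 * C := by linarith
    have hKb : ∀ y, |Kop N μ j F y| ≤ c * C :=
      fun y => hc _ C hC0 (fun z => hF _) y
    have h2 := dh_bdd hKb x
    calc |(F x - Pop N μ (j+1) F x) - dh j (Kop N μ j F) x|
        ≤ |F x - Pop N μ (j+1) F x| + |dh j (Kop N μ j F) x| := abs_sub _ _
      _ ≤ 2 * C + (j+1) * (c * C) := by linarith
      _ = (2 + (j+1) * c) * C := by push_cast; ring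

lemma Rop_equiv : ∀ (j : ℕ) (g : G) (F : (Fin j → G) → ℝ),
    Rop N μ j (Tact g F) = Tact g (Rop N μ j F)
  | 0, g, F => rfl
  | (j+1), g, F => by
    funext x
    rw [Rop_succ]
    have hT : Tact g (Rop N μ (j+1) F) x = Rop N μ (j+1) F (fun i => g * x i) := rfl
    rw [hT, Rop_succ]
    have hP : Pop N μ (j+1) (Tact g F) x = Pop N μ (j+1) F (fun i => g * x i) := by
      rw [Pop_equiv N μ g F]; rfl
    have hK : Kop N μ j (Tact g F) = Tact g (Kop N μ j F) := by
      cases j with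
      | zero => funext y; rfl
      | succ m =>
        funext y
        show Rop N μ (m+1) (Tact (hd y)⁻¹ (tC (Tact (hd y) (Tact g F)))) y =
          Rop N μ (m+1) (Tact (hd (fun i => g * y i))⁻¹
            (tC (Tact (hd (fun i => g * y i)) F))) (fun i => g * y i)
        have hhd : hd (fun i => g * y i) = g * hd y := by
          rw [hd_pos, hd_pos]
        rw [hhd]
        have e1 : Tact (g * hd y) F = Tact (hd y) (Tact g F) := (Tact_Tact (hd y) g F).symm
        have e2 : Tact (g * hd y)⁻¹ (tC (Tact (hd y) (Tact g F))) =
            Tact g⁻¹ (Tact (hd y)⁻¹ (tC (Tact (hd y) (Tact g F)))) := by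
          rw [mul_inv_rev]
          exact (Tact_Tact g⁻¹ (hd y)⁻¹ _).symm
        rw [e1, e2, Rop_equiv (m+1) g⁻¹ _]
        have hy : (fun i => g⁻¹ * (g * y i)) = y := by
          funext i; rw [inv_mul_cancel_left]
        show _ = Rop N μ (m+1) (Tact (hd y)⁻¹ (tC (Tact (hd y) (Tact g F))))
            (fun i => g⁻¹ * (g * y i))
        rw [hy]
    rw [hK, hP]
    have hdh : dh j (Tact g (Kop N μ j F)) x = dh j (Kop N μ j F) (fun i => g * x i) := by
      rw [dh_Tact]; rfl
    rw [hdh]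
    have hFx : Tact g F x = F (fun i => g * x i) := rfl
    rw [hFx]

lemma Kop_equiv (j : ℕ) (g : G) (F : (Fin (j+1) → G) → ℝ) :
    Kop N μ j (Tact g F) = Tact g (Kop N μ j F) := by
  cases j with
  | zero => funext y; rfl
  | succ m =>
    funext y
    show Rop N μ (m+1) (Tact (hd y)⁻¹ (tC (Tact (hd y) (Tact g F)))) y =
      Rop N μ (m+1) (Tact (hd (fun i => g * y i))⁻¹
        (tC (Tact (hd (fun i => g * y i)) F))) (fun i => g * y i)
    have hhd : hd (fun i => g * y i) = g * hd y := by
      rw [hd_pos, hd_pos]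
    rw [hhd]
    have e1 : Tact (g * hd y) F = Tact (hd y) (Tact g F) := (Tact_Tact (hd y) g F).symm
    have e2 : Tact (g * hd y)⁻¹ (tC (Tact (hd y) (Tact g F))) =
        Tact g⁻¹ (Tact (hd y)⁻¹ (tC (Tact (hd y) (Tact g F)))) := by
      rw [mul_inv_rev]
      exact (Tact_Tact g⁻¹ (hd y)⁻¹ _).symm
    rw [e1, e2, Rop_equiv N μ (m+1) g⁻¹ _]
    have hy : (fun i => g⁻¹ * (g * y i)) = y := by
      funext i; rw [inv_mul_cancel_left]
    show _ = Rop N μ (m+1) (Tact (hd y)⁻¹ (tC (Tact (hd y) (Tact g F))))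
        (fun i => g⁻¹ * (g * y i))
    rw [hy]

lemma Kop_inv (j : ℕ) (F : (Fin (j+1) → G) → ℝ) (hF : InvC F) : InvC (Kop N μ j F) := by
  intro g
  rw [← Kop_equiv, hF g]

lemma Kop_isBdd (j : ℕ) (F : (Fin (j+1) → G) → ℝ) (hF : IsBdd F) :
    IsBdd (Kop N μ j F) := by
  obtain ⟨C, hC⟩ := hF
  obtain ⟨c, hc0, hc⟩ := Rop_bdd N μ j
  have hC0 : 0 ≤ C := le_trans (abs_nonneg _) (hC (fun _ => 1))
  exact ⟨c * C, fun y => hc _ C hC0 (fun z => hC _) y⟩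

lemma homotopy_of (j : ℕ)
    (hZ : ∀ (B : (Fin j → G) → ℝ), IsBdd B → ∀ z, Rop N μ (j+1) (dh j B) z = 0)
    (F : (Fin (j+1) → G) → ℝ) (hF : IsBdd F) (x : Fin (j+1) → G) :
    dh j (Kop N μ j F) x + Kop N μ (j+1) (dh (j+1) F) x
      = F x - Pop N μ (j+1) F x := by
  obtain ⟨C, hC⟩ := hF
  have key : Tact (hd x)⁻¹ (tC (Tact (hd x) (dh (j+1) F))) =
      fun y => F y - dh j (Tact (hd x)⁻¹ (tC (Tact (hd x) F))) y := by
    funext y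
    rw [show Tact (hd x) (dh (j+1) F) = dh (j+1) (Tact (hd x) F) from (dh_Tact _ _).symm]
    show tC (dh (j+1) (Tact (hd x) F)) (fun i => (hd x)⁻¹ * y i) = _
    rw [cone]
    have h1 : Tact (hd x) F (fun i => (hd x)⁻¹ * y i) = F y := by
      show F (fun i => hd x * ((hd x)⁻¹ * y i)) = F y
      congr 1
      funext i
      rw [mul_inv_cancel_left]
    have h2 : dh j (tC (Tact (hd x) F)) (fun i => (hd x)⁻¹ * y i) =
        dh j (Tact (hd x)⁻¹ (tC (Tact (hd x) F))) y := by
      rw [show dh j (Tact (hd x)⁻¹ (tC (Tact (hd x) F))) =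
        Tact (hd x)⁻¹ (dh j (tC (Tact (hd x) F))) from dh_Tact _ _]
      rfl
    rw [h1, h2]
  have hKval : Kop N μ (j+1) (dh (j+1) F) x =
      Rop N μ (j+1) F x - Rop N μ (j+1) (dh j (Tact (hd x)⁻¹ (tC (Tact (hd x) F)))) x := by
    show Rop N μ (j+1) (Tact (hd x)⁻¹ (tC (Tact (hd x) (dh (j+1) F)))) x = _
    rw [key]
    exact Rop_sub N μ (j+1) F _ ⟨C, hC⟩
      ⟨(j+1) * C, fun z => dh_bdd (fun w => hC _) z⟩ x
  rw [hKval, hZ (Tact (hd x)⁻¹ (tC (Tact (hd x) F))) ⟨C, fun z => hC _⟩ x, Rop_succ]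
  ring

lemma Zlem : ∀ (j : ℕ) (F : (Fin j → G) → ℝ), IsBdd F →
    ∀ x, Rop N μ (j+1) (dh j F) x = 0
  | 0, F, _, x => by
    rw [Rop_succ]
    have hK0 : Kop N μ 0 (dh 0 F) = fun _ => 0 := rfl
    have h1 : dh 0 (Kop N μ 0 (dh 0 F)) x = 0 := by
      rw [hK0]; unfold dh; simp
    have hconst : ∀ w : Fin 1 → G, dh 0 F w = F (fun i => i.elim0) := by
      intro w
      unfold dh
      rw [Fin.sum_univ_one]
      have : ((0 : Fin 1) : ℕ) = 0 := rfl
      rw [this, pow_zero, one_mul]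
      congr 1
      funext a
      exact a.elim0
    have hP : Pop N μ 1 (dh 0 F) x = F (fun i => i.elim0) := by
      unfold Pop ph mh
      have harg : (fun k : Fin 1 → ↥N =>
          dh 0 F (fun i => (((x i : G ⧸ N)).out) * (k i : G))) =
          fun _ => F (fun i => i.elim0) := by
        funext k
        exact hconst _
      rw [harg, Mint_const]
    rw [h1, hP, hconst x]
    ring
  | (j+1), F, hF, x => by
    obtain ⟨C, hC⟩ := hF
    rw [Rop_succ]
    have hKdh : Kop N μ (j+1) (dh (j+1) F) =
        fun y => (F y - Pop N μ (j+1) F y) - dh j (Kop N μ j F) y := by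
      funext y
      have := homotopy_of N μ j (fun B hB z => Zlem j B hB z) F ⟨C, hC⟩ y
      linarith
    rw [hKdh]
    have hPd : Pop N μ (j+2) (dh (j+1) F) x = dh (j+1) (Pop N μ (j+1) F) x := by
      rw [Pop_dh N μ F ⟨C, hC⟩]
    have hsplit : dh (j+1) (fun y => (F y - Pop N μ (j+1) F y) - dh j (Kop N μ j F) y) x =
        (dh (j+1) F x - dh (j+1) (Pop N μ (j+1) F) x) -
          dh (j+1) (dh j (Kop N μ j F)) x := by
      rw [dh_sub, dh_sub]
    rw [hsplit, dh_dh, hPd]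
    ring

lemma homotopy (j : ℕ) (F : (Fin (j+1) → G) → ℝ) (hF : IsBdd F) (x : Fin (j+1) → G) :
    dh j (Kop N μ j F) x + Kop N μ (j+1) (dh (j+1) F) x
      = F x - Pop N μ (j+1) F x :=
  homotopy_of N μ j (Zlem N μ j) F hF x

end Homotopy
section Dict

open Finset

variable {X : Type*} [Group X]

/-- Consecutive ratios. -/
def rat {n : ℕ} (x : Fin (n+1) → X) : Fin n → X :=
  fun j => (x j.castSucc)⁻¹ * x j.succ

/-- Partial products. -/
def pt {n : ℕ} (g : Fin n → X) : Fin (n+1) → X :=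
  fun j => ((List.ofFn g).take (j : ℕ)).prod

def Hmap {n : ℕ} (f : (Fin n → X) → ℝ) : (Fin (n+1) → X) → ℝ := fun x => f (rat x)

def Iinv {n : ℕ} (V : (Fin (n+1) → X) → ℝ) : (Fin n → X) → ℝ := fun g => V (pt g)

lemma pt_succ {n : ℕ} (g : Fin n → X) (j : Fin n) :
    pt g j.succ = pt g j.castSucc * g j := by
  unfold pt
  have hlen : (j : ℕ) < (List.ofFn g).length := by
    rw [List.length_ofFn]; exact j.isLt
  have := List.prod_take_succ (List.ofFn g) (j : ℕ) hlen
  rw [Fin.val_succ, Fin.coe_castSucc, this]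
  congr 1
  exact List.getElem_ofFn _

lemma rat_pt {n : ℕ} (g : Fin n → X) : rat (pt g) = g := by
  funext j
  unfold rat
  rw [pt_succ]
  exact inv_mul_cancel_left _ _

lemma Iinv_Hmap {n : ℕ} (f : (Fin n → X) → ℝ) : Iinv (Hmap f) = f := by
  funext g
  show f (rat (pt g)) = f g
  rw [rat_pt]

lemma pt_rat {n : ℕ} (x : Fin (n+1) → X) : pt (rat x) = fun j => (x 0)⁻¹ * x j := by
  funext j
  induction j using Fin.induction with
  | zero =>
    show List.prod (List.take 0 _) = (x 0)⁻¹ * x 0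
    rw [List.take_zero, List.prod_nil, inv_mul_cancel]
  | succ j ih =>
    rw [pt_succ, ih]
    show (x 0)⁻¹ * x j.castSucc * ((x j.castSucc)⁻¹ * x j.succ) = (x 0)⁻¹ * x j.succ
    group

lemma Hmap_Iinv {n : ℕ} (V : (Fin (n+1) → X) → ℝ) (hV : InvC V) : Hmap (Iinv V) = V := by
  funext x
  show V (pt (rat x)) = V x
  rw [pt_rat]
  exact congrFun (hV (x 0)⁻¹) x

lemma Hmap_inv {n : ℕ} (f : (Fin n → X) → ℝ) : InvC (Hmap f) := by
  intro g
  funext x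
  show f (rat (fun i => g * x i)) = f (rat x)
  congr 1
  funext j
  show (g * x j.castSucc)⁻¹ * (g * x j.succ) = (x j.castSucc)⁻¹ * x j.succ
  group

lemma rat_tface {n : ℕ} (i : Fin (n+2)) (x : Fin (n+2) → X) :
    rat (fun a => x (i.succAbove a)) = tface i (rat x) := by
  funext j
  have hj := j.isLt
  have hi := i.isLt
  show (x (i.succAbove j.castSucc))⁻¹ * x (i.succAbove j.succ) = tface i (rat x) j
  unfold tface rat
  by_cases h1 : (j : ℕ) + 1 < (i : ℕ)
  · rw [if_pos h1]
    have e1 : i.succAbove j.castSucc = j.castSucc.castSucc := by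
      apply Fin.ext; rw [sa_val]; simp only [Fin.coe_castSucc, Fin.val_succ]
      split_ifs <;> omega
    have e2 : i.succAbove j.succ = j.castSucc.succ := by
      apply Fin.ext; rw [sa_val]; simp only [Fin.coe_castSucc, Fin.val_succ]
      split_ifs <;> omega
    rw [e1, e2]
  · by_cases h2 : (j : ℕ) + 1 = (i : ℕ)
    · rw [if_neg h1, if_pos h2]
      have e1 : i.succAbove j.castSucc = j.castSucc.castSucc := by
        apply Fin.ext; rw [sa_val]; simp only [Fin.coe_castSucc, Fin.val_succ]
        split_ifs <;> omega
      have e2 : i.succAbove j.succ = j.succ.succ := by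
        apply Fin.ext; rw [sa_val]; simp only [Fin.coe_castSucc, Fin.val_succ]
        split_ifs <;> omega
      have e3 : (j.succ.castSucc : Fin (n+2)) = j.castSucc.succ := by
        apply Fin.ext; simp
      rw [e1, e2, e3]
      group
    · rw [if_neg h1, if_neg h2]
      have e1 : i.succAbove j.castSucc = j.castSucc.succ := by
        apply Fin.ext; rw [sa_val]; simp only [Fin.coe_castSucc, Fin.val_succ]
        split_ifs <;> omega
      have e2 : i.succAbove j.succ = j.succ.succ := by
        apply Fin.ext; rw [sa_val]; simp only [Fin.coe_castSucc, Fin.val_succ]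
        split_ifs <;> omega
      have e3 : (j.succ.castSucc : Fin (n+2)) = j.castSucc.succ := by
        apply Fin.ext; simp
      rw [e1, e2, e3]

lemma Hmap_dGrp {n : ℕ} (f : (Fin n → X) → ℝ) :
    Hmap (dGrp X n f) = dh (n+1) (Hmap f) := by
  funext x
  show dGrp X n f (rat x) = _
  unfold dGrp dh
  show ∑ i : Fin (n+2), (-1:ℝ)^(i:ℕ) * f (tface i (rat x)) = _
  refine Finset.sum_congr rfl fun i _ => ?_
  congr 1
  show f (tface i (rat x)) = f (rat (fun a => x (i.succAbove a)))
  rw [rat_tface]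

end Dict

section Mtr

open Finset

variable {G : Type*} [Group G] (N : Subgroup G) [N.Normal] (μ : LeftMean ↥N)

lemma mh_add {j : ℕ} (F F' : (Fin j → G) → ℝ) (hF : IsBdd F) (hF' : IsBdd F') :
    mh N μ j (fun y => F y + F' y) = fun y => mh N μ j F y + mh N μ j F' y := by
  funext y
  unfold mh
  obtain ⟨C, hC⟩ := hF
  obtain ⟨D, hD⟩ := hF'
  exact Mint_add μ j _ _ ⟨C, fun k => hC _⟩ ⟨D, fun k => hD _⟩

lemma mh_zero {j : ℕ} : mh N μ j (fun _ => 0) = fun _ => 0 := by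
  funext y
  exact Mint_const μ j 0

/-- The transfer map on inhomogeneous cochains. -/
noncomputable def mtr (n : ℕ) (f : (Fin n → G) → ℝ) : (Fin n → G ⧸ N) → ℝ :=
  Iinv (mh N μ (n+1) (Hmap f))

lemma Hmap_pull (n : ℕ) (z : (Fin n → G ⧸ N) → ℝ) :
    Hmap (pullCochain (⇑(QuotientGroup.mk' N)) n z) = ph N (n+1) (Hmap z) := by
  funext x
  show z (fun j => QuotientGroup.mk' N (rat x j)) = z (rat (fun i => ((x i : G ⧸ N))))
  congr 1

lemma mtr_pull (n : ℕ) (z : (Fin n → G ⧸ N) → ℝ) :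
    mtr N μ n (pullCochain (⇑(QuotientGroup.mk' N)) n z) = z := by
  unfold mtr
  rw [Hmap_pull, mh_ph, Iinv_Hmap]

lemma mtr_bound (n : ℕ) {f : (Fin n → G) → ℝ} {C : ℝ} (hf : ∀ x, |f x| ≤ C) :
    ∀ q, |mtr N μ n f q| ≤ C := by
  intro q
  exact mh_bound N μ (fun x => hf _) _

lemma Hmap_mtr (n : ℕ) (f : (Fin n → G) → ℝ) :
    Hmap (mtr N μ n f) = mh N μ (n+1) (Hmap f) :=
  Hmap_Iinv _ (mh_inv N μ _ (Hmap_inv f))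

lemma mtr_zero (n : ℕ) : mtr N μ n (fun _ => 0) = fun _ => 0 := by
  unfold mtr
  have h1 : Hmap (fun _ : Fin n → G => (0:ℝ)) = fun _ => (0:ℝ) := rfl
  rw [h1, mh_zero]
  rfl

lemma mtr_add (n : ℕ) (f f' : (Fin n → G) → ℝ) (hf : IsBdd f) (hf' : IsBdd f') :
    mtr N μ n (fun x => f x + f' x) = fun q => mtr N μ n f q + mtr N μ n f' q := by
  unfold mtr
  obtain ⟨C, hC⟩ := hf
  obtain ⟨D, hD⟩ := hf'
  have h1 : Hmap (fun x : Fin n → G => f x + f' x) =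
      fun x => Hmap f x + Hmap f' x := rfl
  rw [h1, mh_add N μ (Hmap f) (Hmap f') ⟨C, fun x => hC _⟩ ⟨D, fun x => hD _⟩]
  rfl

lemma mtr_dGrp (n : ℕ) (f : (Fin n → G) → ℝ) (hf : IsBdd f) :
    mtr N μ (n+1) (dGrp G n f) = dGrp (G ⧸ N) n (mtr N μ n f) := by
  obtain ⟨C, hC⟩ := hf
  unfold mtr
  rw [Hmap_dGrp, mh_dh N μ (Hmap f) ⟨C, fun x => hC _⟩, ← Hmap_mtr, ← Hmap_dGrp, Iinv_Hmap,
    Iinv_Hmap]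

lemma Rop_zero_fn (j : ℕ) (x : Fin j → G) : Rop N μ j (fun _ => 0) x = 0 := by
  have h1 : (fun _ : Fin j → G => (0:ℝ)) =
      fun y => (fun _ : Fin j → G => (0:ℝ)) y - (fun _ : Fin j → G => (0:ℝ)) y := by
    funext y; ring
  rw [h1, Rop_sub N μ j _ _ ⟨0, by simp⟩ ⟨0, by simp⟩ x]
  ring

lemma Kop_zero_fn (j : ℕ) (y : Fin (j+1) → G) :
    Kop N μ (j+1) (fun _ => 0) y = 0 := by
  show Rop N μ (j+1) (Tact (hd y)⁻¹ (tC (Tact (hd y) (fun _ => 0)))) y = 0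
  have h1 : Tact (hd y)⁻¹ (tC (Tact (hd y) (fun _ : Fin (j+2) → G => (0:ℝ)))) =
      fun _ => (0:ℝ) := rfl
  rw [h1]
  exact Rop_zero_fn N μ (j+1) y

/-- Surjectivity homotopy, positive degrees. -/
lemma mtr_homotopy (m : ℕ) (f : (Fin (m+1) → G) → ℝ) (hf : IsBdd f)
    (hz : dGrp G (m+1) f = 0) :
    ∃ b : (Fin m → G) → ℝ, IsBdd b ∧
      ∀ g, f g - pullCochain (⇑(QuotientGroup.mk' N)) (m+1) (mtr N μ (m+1) f) g
        = dGrp G m b g := by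
  obtain ⟨C, hC⟩ := hf
  set W : (Fin (m+2) → G) → ℝ := Hmap f with hW
  have hWb : IsBdd W := ⟨C, fun x => hC _⟩
  have hWd : dh (m+2) W = fun _ => 0 := by
    rw [hW, ← Hmap_dGrp, hz]
    rfl
  set B : (Fin (m+1) → G) → ℝ := Kop N μ (m+1) W with hB
  have hBb : IsBdd B := Kop_isBdd N μ (m+1) W hWb
  have hBi : InvC B := Kop_inv N μ (m+1) W (Hmap_inv f)
  have hhom : ∀ x, W x - Pop N μ (m+2) W x = dh (m+1) B x := by
    intro x
    have h := homotopy N μ (m+1) W hWb x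
    rw [hWd] at h
    rw [Kop_zero_fn N μ (m+1) x] at h
    linarith
  refine ⟨Iinv B, ⟨hBb.choose, fun g => hBb.choose_spec _⟩, fun g => ?_⟩
  have e1 : f g = W (pt g) := by
    rw [hW]
    show f g = f (rat (pt g))
    rw [rat_pt]
  have e2 : pullCochain (⇑(QuotientGroup.mk' N)) (m+1) (mtr N μ (m+1) f) g =
      Pop N μ (m+2) W (pt g) := by
    have h3 : Hmap (pullCochain (⇑(QuotientGroup.mk' N)) (m+1) (mtr N μ (m+1) f)) =
        Pop N μ (m+2) W := by
      rw [Hmap_pull, Hmap_mtr]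
      rfl
    calc pullCochain (⇑(QuotientGroup.mk' N)) (m+1) (mtr N μ (m+1) f) g
        = Iinv (Hmap (pullCochain (⇑(QuotientGroup.mk' N)) (m+1) (mtr N μ (m+1) f))) g := by
          rw [Iinv_Hmap]
      _ = Pop N μ (m+2) W (pt g) := by rw [h3]; rfl
  have e3 : dGrp G m (Iinv B) g = dh (m+1) B (pt g) := by
    have h4 : Hmap (dGrp G m (Iinv B)) = dh (m+1) B := by
      rw [Hmap_dGrp, Hmap_Iinv B hBi]
    calc dGrp G m (Iinv B) g = Iinv (Hmap (dGrp G m (Iinv B))) g := by rw [Iinv_Hmap]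
      _ = dh (m+1) B (pt g) := by rw [h4]; rfl
  rw [e1, e2, e3]
  exact hhom (pt g)

/-- Degree zero: the pullback of the transfer is the identity. -/
lemma mtr_degzero (f : (Fin 0 → G) → ℝ) (hf : IsBdd f) :
    pullCochain (⇑(QuotientGroup.mk' N)) 0 (mtr N μ 0 f) = f := by
  obtain ⟨C, hC⟩ := hf
  set W : (Fin 1 → G) → ℝ := Hmap f with hW
  have hWb : IsBdd W := ⟨C, fun x => hC _⟩
  have hWc : ∀ y y' : Fin 1 → G, W y = W y' := by
    intro y y'
    show f (rat y) = f (rat y')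
    congr 1
    funext a
    exact a.elim0
  have hWd : dh 1 W = fun _ => 0 := by
    funext x
    unfold dh
    rw [Fin.sum_univ_two]
    have h0 : ((0 : Fin 2) : ℕ) = 0 := rfl
    have h1 : ((1 : Fin 2) : ℕ) = 1 := rfl
    rw [h0, h1, pow_zero, pow_one, one_mul,
      hWc (fun a => x ((0 : Fin 2).succAbove a)) (fun a => x ((1 : Fin 2).succAbove a))]
    ring
  have hhom : ∀ x, W x = Pop N μ 1 W x := by
    intro x
    have h := homotopy N μ 0 W hWb x
    rw [hWd] at h
    have hK1 : Kop N μ 1 (fun _ : Fin 2 → G => (0:ℝ)) x = 0 := Kop_zero_fn N μ 0 x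
    rw [hK1] at h
    have hK0 : dh 0 (Kop N μ 0 W) x = 0 := by
      have : Kop N μ 0 W = fun _ => 0 := rfl
      rw [this]
      unfold dh
      simp
    rw [hK0] at h
    linarith
  funext g
  have e2 : pullCochain (⇑(QuotientGroup.mk' N)) 0 (mtr N μ 0 f) g = Pop N μ 1 W (pt g) := by
    have h3 : Hmap (pullCochain (⇑(QuotientGroup.mk' N)) 0 (mtr N μ 0 f)) = Pop N μ 1 W := by
      rw [Hmap_pull, Hmap_mtr]
      rfl
    calc pullCochain (⇑(QuotientGroup.mk' N)) 0 (mtr N μ 0 f) g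
        = Iinv (Hmap (pullCochain (⇑(QuotientGroup.mk' N)) 0 (mtr N μ 0 f))) g := by
          rw [Iinv_Hmap]
      _ = Pop N μ 1 W (pt g) := by rw [h3]; rfl
  have e1 : f g = W (pt g) := by
    rw [hW]
    show f g = f (rat (pt g))
    rw [rat_pt]
  rw [e2, e1]
  exact (hhom (pt g)).symm

end Mtr
section Assembly

open Finset

lemma mem_bddFns_iff {X : Type*} (f : X → ℝ) : f ∈ bddFns X ↔ IsBdd f := Iff.rfl

lemma mem_cocycles_iff {X : Type*} [Group X] {n : ℕ} (f : (Fin n → X) → ℝ) :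
    f ∈ cocycles X n ↔ IsBdd f ∧ dGrp X n f = 0 := by
  unfold cocycles
  rw [Submodule.mem_inf, LinearMap.mem_ker, mem_bddFns_iff]

lemma coboundaries_zero_eq (X : Type*) [Group X] : coboundaries X 0 = ⊥ := rfl

lemma mem_coboundaries_succ {X : Type*} [Group X] {m : ℕ} (f : (Fin (m+1) → X) → ℝ) :
    f ∈ coboundaries X (m+1) ↔ ∃ b, IsBdd b ∧ dGrp X m b = f := by
  show f ∈ (bddFns (Fin m → X)).map (dGrp X m) ↔ _
  rw [Submodule.mem_map]
  constructor
  · rintro ⟨b, hb, rfl⟩; exact ⟨b, hb, rfl⟩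
  · rintro ⟨b, hb, rfl⟩; exact ⟨b, hb, rfl⟩

variable {G : Type*} [Group G] (N : Subgroup G) [N.Normal]

lemma pull_tface {n : ℕ} (i : Fin (n+2)) (g : Fin (n+1) → G) :
    (fun j => ((tface i g j : G) : G ⧸ N)) = tface i (fun j => ((g j : G) : G ⧸ N)) := by
  funext j
  unfold tface
  split_ifs
  · rfl
  · exact QuotientGroup.mk_mul _ _ _
  · rfl

lemma pull_dGrp (n : ℕ) (z : (Fin n → G ⧸ N) → ℝ) :
    pullCochain (⇑(QuotientGroup.mk' N)) (n+1) (dGrp (G ⧸ N) n z)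
      = dGrp G n (pullCochain (⇑(QuotientGroup.mk' N)) n z) := by
  funext g
  show (∑ i : Fin (n+2), (-1:ℝ)^(i:ℕ) * z (tface i (fun j => ((g j : G) : G ⧸ N)))) =
    ∑ i : Fin (n+2), (-1:ℝ)^(i:ℕ) * z (fun j => ((tface i g j : G) : G ⧸ N))
  refine Finset.sum_congr rfl fun i _ => ?_
  rw [pull_tface]

lemma pull_bdd {n : ℕ} {z : (Fin n → G ⧸ N) → ℝ} (hz : IsBdd z) :
    IsBdd (pullCochain (⇑(QuotientGroup.mk' N)) n z) := by
  obtain ⟨C, hC⟩ := hz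
  exact ⟨C, fun x => hC _⟩

lemma mk_surj_fn (n : ℕ) :
    Function.Surjective (fun (x : Fin n → G) => fun j => ((x j : G) : G ⧸ N)) := by
  intro y
  exact ⟨fun j => (y j).out, funext fun j => QuotientGroup.out_eq' _⟩

lemma supN_pull (n : ℕ) (z : (Fin n → G ⧸ N) → ℝ) :
    supN (pullCochain (⇑(QuotientGroup.mk' N)) n z) = supN z := by
  have := supN_comp_surj (mk_surj_fn N n) z
  exact this

lemma pull_mem_cocycles {n : ℕ} (z : (Fin n → G ⧸ N) → ℝ) (hz : z ∈ cocycles (G ⧸ N) n) :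
    pullCochain (⇑(QuotientGroup.mk' N)) n z ∈ cocycles G n := by
  rw [mem_cocycles_iff] at hz ⊢
  refine ⟨pull_bdd N hz.1, ?_⟩
  rw [← pull_dGrp, hz.2, map_zero]

lemma mtr_mem_cocycles (μ : LeftMean ↥N) {n : ℕ} (w : (Fin n → G) → ℝ)
    (hw : w ∈ cocycles G n) : mtr N μ n w ∈ cocycles (G ⧸ N) n := by
  rw [mem_cocycles_iff] at hw ⊢
  obtain ⟨⟨C, hC⟩, hk⟩ := hw
  refine ⟨⟨C, fun q => mtr_bound N μ n hC q⟩, ?_⟩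
  have h1 := mtr_dGrp N μ n w ⟨C, hC⟩
  rw [hk] at h1
  have h2 : mtr N μ (n+1) (0 : (Fin (n+1) → G) → ℝ) = 0 := mtr_zero N μ (n+1)
  rw [h2] at h1
  exact h1.symm

end Assembly
section Final

lemma dGrp_bdd {X : Type*} [Group X] {m : ℕ} {b : (Fin m → X) → ℝ} (hb : IsBdd b) :
    IsBdd (dGrp X m b) := by
  obtain ⟨C, hC⟩ := hb
  refine ⟨(m+2) * C, fun g => ?_⟩
  show |∑ i : Fin (m+2), (-1:ℝ)^(i:ℕ) * b (tface i g)| ≤ _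
  calc |∑ i : Fin (m+2), (-1:ℝ)^(i:ℕ) * b (tface i g)|
      ≤ ∑ i : Fin (m+2), |(-1:ℝ)^(i:ℕ) * b (tface i g)| := Finset.abs_sum_le_sum_abs _ _
    _ ≤ ∑ _i : Fin (m+2), C := by
        refine Finset.sum_le_sum fun i _ => ?_
        rw [abs_mul, abs_pow, abs_neg, abs_one, one_pow, one_mul]
        exact hC _
    _ = (m+2) * C := by
        rw [Finset.sum_const, Finset.card_univ, Fintype.card_fin, nsmul_eq_mul]
        push_cast
        ring

end Final


/-- **Theorem B.** If `κ` is a normal amenable subgroup of `π`, then the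
pullback along the quotient homomorphism `p : π → π/κ` induces a linear bijection
`Ĥ_b^n(π/κ) → Ĥ_b^n(π)` which preserves the quotient seminorms. -/
theorem bounded_cohomology_iso_of_normal_amenable
    (π : Type) [Group π] (κ : Subgroup π) [κ.Normal] (hκ : Amenable ↥κ) (n : ℕ) :
    ∃ Φ : (↥(cocycles (π ⧸ κ) n) ⧸ (coboundaries (π ⧸ κ) n).comap (cocycles (π ⧸ κ) n).subtype)
        →ₗ[ℝ] (↥(cocycles π n) ⧸ (coboundaries π n).comap (cocycles π n).subtype),
      Function.Bijective Φ ∧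
      (∀ (z : ↥(cocycles (π ⧸ κ) n))
          (hz : pullCochain (⇑(QuotientGroup.mk' κ)) n (z : (Fin n → π ⧸ κ) → ℝ) ∈ cocycles π n),
        Φ (Submodule.Quotient.mk z) = Submodule.Quotient.mk
          (⟨pullCochain (⇑(QuotientGroup.mk' κ)) n (z : (Fin n → π ⧸ κ) → ℝ), hz⟩ :
            ↥(cocycles π n))) ∧
      (∀ α, qnorm π n (Φ α) = qnorm (π ⧸ κ) n α) := by
  classical
  set μ : LeftMean ↥κ := LeftMean.ofAmenable hκ with hμdef
  have hrestrict : ∀ z ∈ cocycles (π ⧸ κ) n,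
      pullCochain (⇑(QuotientGroup.mk' κ)) n z ∈ cocycles π n :=
    fun z hz => pull_mem_cocycles κ z hz
  set φ : ↥(cocycles (π ⧸ κ) n) →ₗ[ℝ] ↥(cocycles π n) :=
    (pullCochain (⇑(QuotientGroup.mk' κ)) n).restrict hrestrict with hφ
  have hφval : ∀ z : ↥(cocycles (π ⧸ κ) n),
      ((φ z : ↥(cocycles π n)) : (Fin n → π) → ℝ) =
        pullCochain (⇑(QuotientGroup.mk' κ)) n (z : (Fin n → π ⧸ κ) → ℝ) := fun z => rfl
  have hco : (coboundaries (π ⧸ κ) n).comap (cocycles (π ⧸ κ) n).subtype ≤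
      (((coboundaries π n).comap (cocycles π n).subtype)).comap φ := by
    intro z hz
    rw [Submodule.mem_comap] at hz ⊢
    rw [Submodule.mem_comap]
    show pullCochain (⇑(QuotientGroup.mk' κ)) n (z : (Fin n → π ⧸ κ) → ℝ) ∈ coboundaries π n
    cases n with
    | zero =>
      rw [coboundaries_zero_eq, Submodule.mem_bot] at hz ⊢
      have : (z : (Fin 0 → π ⧸ κ) → ℝ) = 0 := hz
      rw [this, map_zero]
    | succ m =>
      rw [mem_coboundaries_succ] at hz ⊢
      obtain ⟨b, hb, hbe⟩ := hz
      refine ⟨pullCochain (⇑(QuotientGroup.mk' κ)) m b, pull_bdd κ hb, ?_⟩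
      rw [← pull_dGrp κ m b, hbe]
      rfl
  refine ⟨Submodule.mapQ _ _ φ hco, ⟨?_, ?_⟩, ?_, ?_⟩
  · -- injectivity
    rw [← LinearMap.ker_eq_bot, Submodule.eq_bot_iff]
    intro a ha
    rw [LinearMap.mem_ker] at ha
    obtain ⟨z, rfl⟩ := Submodule.Quotient.mk_surjective _ a
    rw [Submodule.mapQ_apply, Submodule.Quotient.mk_eq_zero, Submodule.mem_comap] at ha
    rw [Submodule.Quotient.mk_eq_zero, Submodule.mem_comap]
    have ha' : pullCochain (⇑(QuotientGroup.mk' κ)) n (z : (Fin n → π ⧸ κ) → ℝ)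
        ∈ coboundaries π n := ha
    show (z : (Fin n → π ⧸ κ) → ℝ) ∈ coboundaries (π ⧸ κ) n
    cases n with
    | zero =>
      rw [coboundaries_zero_eq, Submodule.mem_bot] at ha' ⊢
      have h1 := mtr_pull κ μ 0 (z : (Fin 0 → π ⧸ κ) → ℝ)
      rw [ha'] at h1
      have h2 : mtr κ μ 0 (0 : (Fin 0 → π) → ℝ) = 0 := mtr_zero κ μ 0
      rw [h2] at h1
      exact h1.symm
    | succ m =>
      rw [mem_coboundaries_succ] at ha' ⊢
      obtain ⟨b, hb, hbe⟩ := ha'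
      refine ⟨mtr κ μ m b, ⟨hb.choose, fun q => mtr_bound κ μ m hb.choose_spec q⟩, ?_⟩
      rw [← mtr_dGrp κ μ m b hb, hbe]
      exact mtr_pull κ μ (m+1) _
  · -- surjectivity
    intro a
    obtain ⟨w, rfl⟩ := Submodule.Quotient.mk_surjective _ a
    obtain ⟨hwb, hwk⟩ := (mem_cocycles_iff (w : (Fin n → π) → ℝ)).1 w.2
    refine ⟨Submodule.Quotient.mk ⟨mtr κ μ n (w : (Fin n → π) → ℝ),
      mtr_mem_cocycles κ μ _ w.2⟩, ?_⟩
    rw [Submodule.mapQ_apply, Submodule.Quotient.eq, Submodule.mem_comap, map_sub]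
    show pullCochain (⇑(QuotientGroup.mk' κ)) n (mtr κ μ n (w : (Fin n → π) → ℝ)) -
      (w : (Fin n → π) → ℝ) ∈ coboundaries π n
    cases n with
    | zero =>
      rw [mtr_degzero κ μ _ hwb, sub_self]
      exact Submodule.zero_mem _
    | succ m =>
      obtain ⟨b, hbb, hbe⟩ := mtr_homotopy κ μ m (w : (Fin (m+1) → π) → ℝ) hwb hwk
      have hmem : (w : (Fin (m+1) → π) → ℝ) -
          pullCochain (⇑(QuotientGroup.mk' κ)) (m+1)
            (mtr κ μ (m+1) (w : (Fin (m+1) → π) → ℝ)) ∈ coboundaries π (m+1) := by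
        rw [mem_coboundaries_succ]
        exact ⟨b, hbb, (funext hbe).symm⟩
      have := Submodule.neg_mem _ hmem
      rw [neg_sub] at this
      exact this
  · -- bullet 2
    intro z hz
    rw [Submodule.mapQ_apply]
    rfl
  · -- norms
    intro α
    obtain ⟨z₀, hz₀⟩ := Submodule.Quotient.mk_surjective _ α
    have hnonQ : {r : ℝ | ∃ z : ↥(cocycles (π ⧸ κ) n),
        Submodule.Quotient.mk z = α ∧ r = supN (z : (Fin n → π ⧸ κ) → ℝ)}.Nonempty :=
      ⟨supN (z₀ : (Fin n → π ⧸ κ) → ℝ), z₀, hz₀, rfl⟩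
    have hnonP : {r : ℝ | ∃ z : ↥(cocycles π n),
        Submodule.Quotient.mk z = Submodule.mapQ _ _ φ hco α ∧
          r = supN (z : (Fin n → π) → ℝ)}.Nonempty := by
      refine ⟨supN ((φ z₀ : ↥(cocycles π n)) : (Fin n → π) → ℝ), φ z₀, ?_, rfl⟩
      rw [← hz₀, Submodule.mapQ_apply]
    have hbddP : BddBelow {r : ℝ | ∃ z : ↥(cocycles π n),
        Submodule.Quotient.mk z = Submodule.mapQ _ _ φ hco α ∧
          r = supN (z : (Fin n → π) → ℝ)} := by
      refine ⟨0, ?_⟩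
      rintro r ⟨z, _, rfl⟩
      exact supN_nonneg _
    have hbddQ : BddBelow {r : ℝ | ∃ z : ↥(cocycles (π ⧸ κ) n),
        Submodule.Quotient.mk z = α ∧ r = supN (z : (Fin n → π ⧸ κ) → ℝ)} := by
      refine ⟨0, ?_⟩
      rintro r ⟨z, _, rfl⟩
      exact supN_nonneg _
    apply le_antisymm
    · -- qnorm π (Φ α) ≤ qnorm Q α
      apply csInf_le_csInf hbddP hnonQ
      rintro r ⟨z, hz, rfl⟩
      refine ⟨φ z, ?_, ?_⟩
      · rw [← hz, Submodule.mapQ_apply]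
      · rw [hφval z, supN_pull]
    · -- qnorm Q α ≤ qnorm π (Φ α)
      apply le_csInf hnonP
      rintro r ⟨w, hw, rfl⟩
      obtain ⟨hwb, hwk⟩ := (mem_cocycles_iff (w : (Fin n → π) → ℝ)).1 w.2
      have hdiff : (w : (Fin n → π) → ℝ) -
          pullCochain (⇑(QuotientGroup.mk' κ)) n (z₀ : (Fin n → π ⧸ κ) → ℝ)
            ∈ coboundaries π n := by
        have h1 : (Submodule.Quotient.mk w : ↥(cocycles π n) ⧸
            (coboundaries π n).comap (cocycles π n).subtype) =
            Submodule.Quotient.mk (φ z₀) := by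
          rw [hw, ← hz₀, Submodule.mapQ_apply]
        have h2 := (Submodule.Quotient.eq _).1 h1
        rw [Submodule.mem_comap, map_sub] at h2
        exact h2
      set z' : ↥(cocycles (π ⧸ κ) n) := ⟨mtr κ μ n (w : (Fin n → π) → ℝ),
        mtr_mem_cocycles κ μ _ w.2⟩ with hz'
      have hmkz' : Submodule.Quotient.mk z' = α := by
        rw [← hz₀, Submodule.Quotient.eq, Submodule.mem_comap, map_sub]
        show mtr κ μ n (w : (Fin n → π) → ℝ) - (z₀ : (Fin n → π ⧸ κ) → ℝ)
          ∈ coboundaries (π ⧸ κ) n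
        cases n with
        | zero =>
          rw [coboundaries_zero_eq, Submodule.mem_bot] at hdiff ⊢
          have hwe : (w : (Fin 0 → π) → ℝ) =
              pullCochain (⇑(QuotientGroup.mk' κ)) 0 (z₀ : (Fin 0 → π ⧸ κ) → ℝ) :=
            sub_eq_zero.1 hdiff
          rw [hwe, mtr_pull, sub_self]
        | succ m =>
          rw [mem_coboundaries_succ] at hdiff ⊢
          obtain ⟨b, hbb, hbe⟩ := hdiff
          have hwv : (w : (Fin (m+1) → π) → ℝ) = fun g =>
              pullCochain (⇑(QuotientGroup.mk' κ)) (m+1) (z₀ : (Fin (m+1) → π ⧸ κ) → ℝ) g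
                + dGrp π m b g := by
            funext g
            have := congrFun hbe g
            simp only [Pi.sub_apply] at this
            linarith [this]
          have hz₀b : IsBdd (pullCochain (⇑(QuotientGroup.mk' κ)) (m+1)
              (z₀ : (Fin (m+1) → π ⧸ κ) → ℝ)) :=
            pull_bdd κ ((mem_cocycles_iff _).1 z₀.2).1
          have hmtr : mtr κ μ (m+1) (w : (Fin (m+1) → π) → ℝ) = fun q =>
              (z₀ : (Fin (m+1) → π ⧸ κ) → ℝ) q + dGrp (π ⧸ κ) m (mtr κ μ m b) q := by
            rw [hwv, mtr_add κ μ (m+1) _ _ hz₀b (dGrp_bdd hbb), mtr_pull,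
              mtr_dGrp κ μ m b hbb]
          refine ⟨mtr κ μ m b, ⟨hbb.choose, fun q => mtr_bound κ μ m hbb.choose_spec q⟩, ?_⟩
          show dGrp (π ⧸ κ) m (mtr κ μ m b) = _
          rw [hmtr]
          funext q
          simp only [Pi.sub_apply]
          ring
      have hsup : supN (z' : (Fin n → π ⧸ κ) → ℝ) ≤ supN (w : (Fin n → π) → ℝ) := by
        apply supN_le
        intro q
        exact mtr_bound κ μ n (fun x => abs_le_supN hwb x) q
      calc sInf {r : ℝ | ∃ z : ↥(cocycles (π ⧸ κ) n),
            Submodule.Quotient.mk z = α ∧ r = supN (z : (Fin n → π ⧸ κ) → ℝ)}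
          ≤ supN (z' : (Fin n → π ⧸ κ) → ℝ) := csInf_le hbddQ ⟨z', hmkz', rfl⟩
        _ ≤ supN (w : (Fin n → π) → ℝ) := hsup
end

section
/- Coherent families of averaging operators exist: there is a family (m_n)_{n∈ℕ} of linear functionals m_n on ℓ^∞(Γ_n), each of operator norm 1 and sending every constant function to its value, such that m_n(f ∘ ∂_i) = m_{n−1}(f) for every n ≥ 1, every 0 ≤ i ≤ n, and every bounded function f : Γ_{n−1} → ℝ. -/
/-- `Γ n`: the set of `n`-simplices of the Δ-set `Δ[∞]`,
i.e. strictly increasing maps `Fin (n+1) → ℕ`. -/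
def Gma (n : ℕ) : Type := {f : Fin (n + 1) → ℕ // StrictMono f}

/-- The `i`-th face map `∂ᵢ : Γ (n+1) → Γ n`, precomposition with the unique strictly
increasing map `Fin (n+1) → Fin (n+2)` omitting `i`. -/
def faceG {n : ℕ} (i : Fin (n + 2)) (τ : Gma (n + 1)) : Gma n :=
  ⟨fun j => τ.1 (i.succAbove j), τ.2.comp (Fin.strictMono_succAbove i)⟩

lemma comp_mem_bddFns {X Y : Type*} {f : Y → ℝ} (hf : f ∈ bddFns Y) (g : X → Y) :
    (fun x => f (g x)) ∈ bddFns X := by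
  obtain ⟨C, hC⟩ := hf
  exact ⟨C, fun x => hC (g x)⟩

/-- The simplicial coboundary operator associated to a system of faces. -/
noncomputable def dgen {X Y : Type*} (N : ℕ) (face : Fin N → Y → X) :
    (X → ℝ) →ₗ[ℝ] (Y → ℝ) where
  toFun f := fun y => ∑ i : Fin N, (-1 : ℝ) ^ (i : ℕ) * f (face i y)
  map_add' f g := by
    funext y
    simp only [Pi.add_apply, mul_add]
    rw [Finset.sum_add_distrib]
  map_smul' r f := by
    funext y
    simp only [Pi.smul_apply, smul_eq_mul, RingHom.id_apply, Finset.mul_sum]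
    exact Finset.sum_congr rfl fun i _ => by ring


open Filter Topology

attribute [local instance] Ultrafilter.mul Ultrafilter.semigroup

/-- The multiplicative version of `ℕ+`. -/
abbrev MP := Multiplicative ℕ+

/-- An idempotent ultrafilter on `MP`. -/
noncomputable def Uid : Ultrafilter MP :=
  (exists_idempotent_of_compact_t2_of_continuous_mul_left
    (Ultrafilter.continuous_mul_left (M := MP))).choose

lemma Uid_idem : Uid * Uid = Uid :=
  (exists_idempotent_of_compact_t2_of_continuous_mul_left
    (Ultrafilter.continuous_mul_left (M := MP))).choose_spec

/-- Limit along `Uid`. -/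
noncomputable def ulim (g : MP → ℝ) : ℝ := limUnder (Uid : Filter MP) g

lemma tendsto_ulim {g : MP → ℝ} {C : ℝ} (hg : ∀ x, |g x| ≤ C) :
    Tendsto g (Uid : Filter MP) (𝓝 (ulim g)) := by
  obtain ⟨L, _, hL⟩ := (isCompact_Icc (a := -C) (b := C)).ultrafilter_le_nhds (Uid.map g)
    (by
      rw [Ultrafilter.coe_map, Filter.le_principal_iff, Filter.mem_map]
      exact Filter.Eventually.of_forall (fun x => abs_le.1 (hg x)))
  have h : Tendsto g (Uid : Filter MP) (𝓝 L) := by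
    rwa [Ultrafilter.coe_map] at hL
  rwa [ulim, h.limUnder_eq]

lemma ulim_const (r : ℝ) : ulim (fun _ => r) = r :=
  (tendsto_const_nhds).limUnder_eq

lemma ulim_abs_le {g : MP → ℝ} {C : ℝ} (hg : ∀ x, |g x| ≤ C) : |ulim g| ≤ C :=
  le_of_tendsto' ((tendsto_ulim hg).abs) hg

lemma ulim_add {g h : MP → ℝ} {C D : ℝ} (hg : ∀ x, |g x| ≤ C) (hh : ∀ x, |h x| ≤ D) :
    ulim (fun x => g x + h x) = ulim g + ulim h :=
  ((tendsto_ulim hg).add (tendsto_ulim hh)).limUnder_eq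

lemma ulim_smul {g : MP → ℝ} {C : ℝ} (c : ℝ) (hg : ∀ x, |g x| ≤ C) :
    ulim (fun x => c * g x) = c * ulim g :=
  ((tendsto_ulim hg).const_mul c).limUnder_eq

lemma ulim_mul_mul {g : MP → ℝ} {C : ℝ} (hg : ∀ x, |g x| ≤ C) :
    ulim (fun a => ulim (fun b => g (a * b))) = ulim g := by
  set G : MP → ℝ := fun a => ulim (fun b => g (a * b)) with hG
  have hGb : ∀ a, |G a| ≤ C := fun a => ulim_abs_le (fun b => hg _)
  have hGt : ∀ a, Tendsto (fun b => g (a * b)) (Uid : Filter MP) (𝓝 (G a)) :=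
    fun a => tendsto_ulim (fun b => hg _)
  have h1 : Tendsto G (Uid : Filter MP) (𝓝 (ulim G)) := tendsto_ulim hGb
  have h2 : Tendsto g (Uid : Filter MP) (𝓝 (ulim G)) := by
    rw [← Uid_idem, Metric.tendsto_nhds]
    intro ε εpos
    rw [Ultrafilter.eventually_mul]
    have hG2 : ∀ᶠ a in (Uid : Filter MP), dist (G a) (ulim G) < ε / 2 :=
      (Metric.tendsto_nhds.1 h1) _ (half_pos εpos)
    filter_upwards [hG2] with a ha
    have hb2 : ∀ᶠ b in (Uid : Filter MP), dist (g (a * b)) (G a) < ε / 2 :=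
      (Metric.tendsto_nhds.1 (hGt a)) _ (half_pos εpos)
    filter_upwards [hb2] with b hb
    calc dist (g (a * b)) (ulim G) ≤ dist (g (a * b)) (G a) + dist (G a) (ulim G) :=
          dist_triangle _ _ _
      _ < ε / 2 + ε / 2 := add_lt_add hb ha
      _ = ε := add_halves ε
  exact tendsto_nhds_unique h2 (tendsto_ulim hg)

/-- Iterated ultrafilter mean on bounded functions of `n` variables. -/
noncomputable def Mrec : (n : ℕ) → ((Fin n → MP) → ℝ) → ℝ
  | 0, h => h finZeroElim
  | n + 1, h => ulim fun a => Mrec n fun t => h (Fin.cons a t)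

lemma Mrec_zero (h : (Fin 0 → MP) → ℝ) : Mrec 0 h = h finZeroElim := rfl

lemma Mrec_succ (n : ℕ) (h : (Fin (n + 1) → MP) → ℝ) :
    Mrec (n + 1) h = ulim fun a => Mrec n fun t => h (Fin.cons a t) := rfl

lemma Mrec_abs_le : ∀ (n : ℕ) (h : (Fin n → MP) → ℝ) (C : ℝ),
    (∀ t, |h t| ≤ C) → |Mrec n h| ≤ C
  | 0, h, C, hC => hC _
  | n + 1, h, C, hC =>
    ulim_abs_le (fun a => Mrec_abs_le n _ C (fun t => hC _))

lemma Mrec_const : ∀ (n : ℕ) (r : ℝ), Mrec n (fun _ => r) = r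
  | 0, r => rfl
  | n + 1, r => by
    show ulim (fun a => Mrec n fun _ => r) = r
    simp only [Mrec_const n r]
    exact ulim_const r

lemma Mrec_add : ∀ (n : ℕ) (h₁ h₂ : (Fin n → MP) → ℝ) (C₁ C₂ : ℝ),
    (∀ t, |h₁ t| ≤ C₁) → (∀ t, |h₂ t| ≤ C₂) →
    Mrec n (fun t => h₁ t + h₂ t) = Mrec n h₁ + Mrec n h₂
  | 0, h₁, h₂, C₁, C₂, _, _ => rfl
  | n + 1, h₁, h₂, C₁, C₂, hC₁, hC₂ => by
    show ulim (fun a => Mrec n fun t => h₁ (Fin.cons a t) + h₂ (Fin.cons a t)) = _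
    have : ∀ a : MP, Mrec n (fun t => h₁ (Fin.cons a t) + h₂ (Fin.cons a t))
        = Mrec n (fun t => h₁ (Fin.cons a t)) + Mrec n (fun t => h₂ (Fin.cons a t)) :=
      fun a => Mrec_add n _ _ C₁ C₂ (fun t => hC₁ _) (fun t => hC₂ _)
    simp only [this]
    exact ulim_add (fun a => Mrec_abs_le n _ C₁ (fun t => hC₁ _))
      (fun a => Mrec_abs_le n _ C₂ (fun t => hC₂ _))

lemma Mrec_smul : ∀ (n : ℕ) (h : (Fin n → MP) → ℝ) (C : ℝ) (c : ℝ),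
    (∀ t, |h t| ≤ C) → Mrec n (fun t => c * h t) = c * Mrec n h
  | 0, h, C, c, _ => rfl
  | n + 1, h, C, c, hC => by
    show ulim (fun a => Mrec n fun t => c * h (Fin.cons a t)) = _
    have : ∀ a : MP, Mrec n (fun t => c * h (Fin.cons a t))
        = c * Mrec n (fun t => h (Fin.cons a t)) :=
      fun a => Mrec_smul n _ C c (fun t => hC _)
    simp only [this]
    exact ulim_smul c (fun a => Mrec_abs_le n _ C (fun t => hC _))

/-- Merging the gaps `i` and `i+1`. -/
def Dmerge {n : ℕ} (i : Fin (n + 1)) (t : Fin (n + 1) → MP) (k : Fin n) : MP :=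
  if (k : ℕ) < (i : ℕ) then t k.castSucc
  else if (k : ℕ) = (i : ℕ) then t k.castSucc * t k.succ
  else t k.succ

lemma Dmerge_zero {n : ℕ} (a : MP) (t : Fin (n + 1) → MP) :
    Dmerge (0 : Fin (n + 2)) (Fin.cons a t) = Fin.cons (a * t 0) (Fin.tail t) := by
  funext k
  induction k using Fin.cases with
  | zero => simp [Dmerge]
  | succ j => simp [Dmerge, Fin.tail]

lemma Dmerge_succ {n : ℕ} (j : Fin (n + 1)) (a : MP) (t : Fin (n + 1) → MP) :
    Dmerge j.succ (Fin.cons a t) = Fin.cons a (Dmerge j t) := by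
  funext k
  induction k using Fin.cases with
  | zero => simp [Dmerge]
  | succ l =>
    have e1 : (Fin.cons a t : Fin (n + 2) → MP) l.succ.castSucc = t l.castSucc := by
      rw [← Fin.succ_castSucc, Fin.cons_succ]
    rcases lt_trichotomy (l : ℕ) (j : ℕ) with h | h | h
    · simp [Dmerge, h, e1]
    · simp [Dmerge, h, e1]
    · simp [Dmerge, h, Nat.lt_irrefl, (Nat.lt_asymm h), (Nat.ne_of_gt h)]

lemma Mrec_merge : ∀ (n : ℕ) (i : Fin (n + 1)) (h : (Fin n → MP) → ℝ) (C : ℝ),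
    (∀ t, |h t| ≤ C) → Mrec (n + 1) (fun t => h (Dmerge i t)) = Mrec n h := by
  intro n
  induction n with
  | zero =>
    intro i h C hC
    rw [Mrec_succ, Mrec_zero]
    have : ∀ (a : MP), Mrec 0 (fun t => h (Dmerge i (Fin.cons a t))) = h finZeroElim := by
      intro a
      rw [Mrec_zero]
      congr 1
      funext k
      exact k.elim0
    simp only [this]
    exact ulim_const _
  | succ n ih =>
    intro i h C hC
    induction i using Fin.cases with
    | zero =>
      rw [Mrec_succ]
      have key : ∀ a : MP, (Mrec (n + 1) fun t => h (Dmerge 0 (Fin.cons a t)))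
          = ulim (fun b => Mrec n (fun s => h (Fin.cons (a * b) s))) := by
        intro a
        simp only [Dmerge_zero, Mrec_succ, Fin.cons_zero, Fin.tail_cons]
      simp only [key, Mrec_succ]
      exact ulim_mul_mul (g := fun c => Mrec n (fun s => h (Fin.cons c s)))
        (C := C) (fun c => Mrec_abs_le n _ C (fun s => hC _))
    | succ j =>
      rw [Mrec_succ, Mrec_succ (h := h)]
      congr 1
      funext a
      simp only [Dmerge_succ]
      exact ih j (fun s => h (Fin.cons a s)) C (fun s => hC _)

/-- Extension of a tuple of gaps to a function `ℕ → ℕ`. -/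
def extG {n : ℕ} (t : Fin (n + 1) → MP) (k : ℕ) : ℕ :=
  if h : k < n + 1 then ((Multiplicative.toAdd (t ⟨k, h⟩) : ℕ+) : ℕ) else 1

lemma extG_pos {n : ℕ} (t : Fin (n + 1) → MP) (k : ℕ) : 0 < extG t k := by
  unfold extG
  split
  · exact PNat.pos _
  · exact Nat.one_pos

/-- The simplex with gap sequence `t`. -/
def Vmap {n : ℕ} (t : Fin (n + 1) → MP) : Gma n :=
  ⟨fun j => ∑ k ∈ Finset.range ((j : ℕ) + 1), extG t k, by
    intro j j' hlt
    have h1 : (j : ℕ) < (j' : ℕ) := hlt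
    apply Finset.sum_lt_sum_of_subset (Finset.range_subset_range.2 (by omega))
      (i := (j' : ℕ)) (Finset.self_mem_range_succ _)
      (by simp only [Finset.mem_range]; omega)
      (extG_pos t _) (fun k _ _ => Nat.zero_le _)⟩

lemma sum_merge (a b : ℕ → ℕ) (i : ℕ) (hb : ∀ k, k < i → b k = a k)
    (hbi : b i = a i + a (i + 1)) :
    ∀ j, i ≤ j → (∀ k, i < k → k ≤ j → b k = a (k + 1)) →
      ∑ k ∈ Finset.range (j + 1), b k = ∑ k ∈ Finset.range (j + 2), a k := by
  intro j hj
  induction j, hj using Nat.le_induction with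
  | base =>
    intro _
    rw [Finset.sum_range_succ, Finset.sum_range_succ (n := i + 1),
      Finset.sum_range_succ (n := i), hbi,
      Finset.sum_congr rfl (fun k hk => hb k (Finset.mem_range.1 hk))]
    ring
  | succ j hij ihj =>
    intro hba
    rw [Finset.sum_range_succ,
      ihj (fun k hk hk2 => hba k hk (le_trans hk2 (Nat.le_succ _))),
      hba (j + 1) (by omega) le_rfl, ← Finset.sum_range_succ]

lemma face_Vmap {n : ℕ} (i : Fin (n + 2)) (t : Fin (n + 2) → MP) :
    faceG i (Vmap t) = Vmap (Dmerge i t) := by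
  apply Subtype.ext
  funext j
  show (Vmap t).1 (i.succAbove j) = ∑ k ∈ Finset.range ((j : ℕ) + 1), extG (Dmerge i t) k
  by_cases hji : ((j : Fin (n + 1)).castSucc : Fin (n + 2)) < i
  · rw [Fin.succAbove_of_castSucc_lt _ _ hji]
    show ∑ k ∈ Finset.range ((j : ℕ) + 1), extG t k = _
    refine Finset.sum_congr rfl fun k hk => ?_
    rw [Finset.mem_range] at hk
    have hki : k < (i : ℕ) := by
      have := hji
      rw [Fin.lt_def] at this
      simp at this
      omega
    have hk1 : k < n + 1 := by omega
    have hk2 : k < n + 2 := by omega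
    unfold extG Dmerge
    rw [dif_pos hk1, dif_pos hk2, if_pos (by simpa using hki)]
    congr 1
  · rw [Fin.succAbove_of_le_castSucc _ _ (not_lt.1 hji)]
    have hij : (i : ℕ) ≤ (j : ℕ) := by
      have := not_lt.1 hji
      rw [Fin.le_def] at this
      simpa using this
    show ∑ k ∈ Finset.range ((j : ℕ) + 2), extG t k = _
    symm
    refine sum_merge (extG t) (extG (Dmerge i t)) (i : ℕ) ?_ ?_ (j : ℕ) hij ?_
    · intro k hk
      have hk1 : k < n + 1 := by have := i.isLt; omega
      have hk2 : k < n + 2 := by omega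
      unfold extG Dmerge
      rw [dif_pos hk1, dif_pos hk2, if_pos (by simpa using hk)]
      congr 1
    · have hi1 : (i : ℕ) < n + 1 := by have := j.isLt; omega
      have hi2 : (i : ℕ) < n + 2 := by omega
      have hi3 : (i : ℕ) + 1 < n + 2 := by omega
      unfold extG Dmerge
      rw [dif_pos hi1, dif_pos hi2, dif_pos hi3,
        if_neg (by simp), if_pos (by simp)]
      show ((Multiplicative.toAdd (t _ * t _) : ℕ+) : ℕ) = _
      rw [toAdd_mul, PNat.add_coe]
      congr 2 <;> apply Fin.ext <;> simp
    · intro k hik hkj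
      have hk1 : k < n + 1 := by have := j.isLt; omega
      have hk2 : k + 1 < n + 2 := by omega
      unfold extG Dmerge
      rw [dif_pos hk1, dif_pos hk2, if_neg (by simp only [Fin.val_mk]; omega),
        if_neg (by simp only [Fin.val_mk]; omega)]
      congr 2

lemma abs_apply_le_supN {X : Type*} (f : X → ℝ) (hf : IsBdd f) (x : X) : |f x| ≤ supN f := by
  obtain ⟨C, hC⟩ := hf
  exact le_ciSup ⟨C, by rintro _ ⟨y, rfl⟩; exact hC y⟩ x

/-- The coherent family of averaging operators. -/
noncomputable def mFam (n : ℕ) : ↥(bddFns (Gma n)) →ₗ[ℝ] ℝ where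
  toFun f := Mrec (n + 1) (fun t => (f : Gma n → ℝ) (Vmap t))
  map_add' f g := by
    obtain ⟨C, hC⟩ := f.2
    obtain ⟨D, hD⟩ := g.2
    show Mrec (n + 1) (fun t => ((f : Gma n → ℝ) (Vmap t)) + ((g : Gma n → ℝ) (Vmap t))) = _
    exact Mrec_add (n + 1) _ _ C D (fun t => hC _) (fun t => hD _)
  map_smul' c f := by
    obtain ⟨C, hC⟩ := f.2
    show Mrec (n + 1) (fun t => c * ((f : Gma n → ℝ) (Vmap t))) = _
    exact Mrec_smul (n + 1) _ C c (fun t => hC _)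

/-- Coherent families of averaging operators exist: there is a family
`(m_n)` of linear functionals on `ℓ^∞(Γ_n)`, each of operator norm `1` (i.e. bounded by the
sup norm) and sending every constant function to its value, such that
`m_n (f ∘ ∂ᵢ) = m_{n-1} f` for every `n ≥ 1`, every `0 ≤ i ≤ n` and every bounded `f`. -/
theorem exists_coherent_averaging_family :
    ∃ m : ∀ n : ℕ, ↥(bddFns (Gma n)) →ₗ[ℝ] ℝ,
      (∀ (n : ℕ) (f : ↥(bddFns (Gma n))), |m n f| ≤ supN (f : Gma n → ℝ)) ∧
      (∀ (n : ℕ) (r : ℝ), m n ⟨fun _ => r, const_mem_bddFns _ r⟩ = r) ∧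
      (∀ (n : ℕ) (i : Fin (n + 2)) (f : ↥(bddFns (Gma n))),
        m (n + 1) ⟨fun τ => (f : Gma n → ℝ) (faceG i τ), comp_mem_bddFns f.2 (faceG i)⟩
          = m n f) := by
  classical
  refine ⟨mFam, ?_, ?_, ?_⟩
  · intro n f
    exact Mrec_abs_le (n + 1) _ (supN (f : Gma n → ℝ))
      (fun t => abs_apply_le_supN _ f.2 _)
  · intro n r
    exact Mrec_const (n + 1) r
  · intro n i f
    show Mrec (n + 2) (fun t => (f : Gma n → ℝ) (faceG i (Vmap t)))
        = Mrec (n + 1) (fun t => (f : Gma n → ℝ) (Vmap t))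
    simp only [face_Vmap]
    obtain ⟨C, hC⟩ := f.2
    exact Mrec_merge (n + 1) i (fun s => (f : Gma n → ℝ) (Vmap s)) C (fun s => hC _)
end

section
/- Let (m_n)_{n∈ℕ} be a coherent family of averaging operators and K a simplicial set. For a bounded function f : K_n × Γ_n → ℝ define m_*(f) : K_n → ℝ by m_*(f)(σ) = m_n(τ ↦ f(σ, τ)). Then m_* is a cochain map: for every bounded f : K_n × Γ_n → ℝ and every (n+1)-simplex ρ of K, Σ_{i=0}^{n+1} (−1)^i m_*(f)(∂_i ρ) = m_{n+1}( τ ↦ Σ_{i=0}^{n+1} (−1)^i f(∂_i ρ, ∂_i τ) ); that is, ∂*(m_*(f)) = m_*(∂*(f)), where ∂* denotes the coboundary on bounded cochains of K and of K × Γ respectively. -/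
open CategoryTheory Simplicial

/-- Extension of the averaging operator `m n` to all functions `Γ n → ℝ`
(by `0` on unbounded functions); on bounded functions it is just `m n`. -/
noncomputable def Mext (m : ∀ n : ℕ, ↥(bddFns (Gma n)) →ₗ[ℝ] ℝ) (n : ℕ)
    (g : Gma n → ℝ) : ℝ :=
  @dite _ (IsBdd g) (Classical.dec _) (fun h => m n ⟨g, h⟩) (fun _ => 0)

/-- Averaging over the fibers of the projection `K × Γ → K` by a
coherent family of averaging operators is a cochain map on bounded cochains:
`∂*(m_* f) = m_* (∂* f)`, i.e. for every bounded `f : K_n × Γ_n → ℝ` and every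
`(n+1)`-simplex `ρ` of `K`,
`∑ᵢ (-1)ⁱ m_*(f)(∂ᵢ ρ) = m_{n+1} (τ ↦ ∑ᵢ (-1)ⁱ f (∂ᵢ ρ, ∂ᵢ τ))`. -/
theorem averaging_is_cochain_map
    (m : ∀ n : ℕ, ↥(bddFns (Gma n)) →ₗ[ℝ] ℝ)
    (hnorm : ∀ (n : ℕ) (f : ↥(bddFns (Gma n))), |m n f| ≤ supN (f : Gma n → ℝ))
    (hconst : ∀ (n : ℕ) (r : ℝ), m n ⟨fun _ => r, const_mem_bddFns _ r⟩ = r)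
    (hcoherent : ∀ (n : ℕ) (i : Fin (n + 2)) (f : ↥(bddFns (Gma n))),
      m (n + 1) ⟨fun τ => (f : Gma n → ℝ) (faceG i τ), comp_mem_bddFns f.2 (faceG i)⟩
        = m n f)
    (K : SSet) (n : ℕ) (f : K _⦋n⦌ × Gma n → ℝ) (hf : IsBdd f) (ρ : K _⦋n + 1⦌) :
    ∑ i : Fin (n + 2), (-1 : ℝ) ^ (i : ℕ) * Mext m n (fun τ => f (K.δ i ρ, τ))
      = Mext m (n + 1)
          (fun τ => ∑ i : Fin (n + 2), (-1 : ℝ) ^ (i : ℕ) * f (K.δ i ρ, faceG i τ)) := by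
  obtain ⟨C, hC⟩ := hf
  set g : Fin (n + 2) → ↥(bddFns (Gma n)) :=
    fun i => ⟨fun τ => f (K.δ i ρ, τ), ⟨C, fun τ => hC _⟩⟩ with hg
  set h : Fin (n + 2) → ↥(bddFns (Gma (n + 1))) :=
    fun i => ⟨fun τ => (g i : Gma n → ℝ) (faceG i τ), comp_mem_bddFns (g i).2 (faceG i)⟩
    with hh
  have hRfun : (fun τ => ∑ i : Fin (n + 2), (-1 : ℝ) ^ (i : ℕ) * f (K.δ i ρ, faceG i τ))
      = ((∑ i : Fin (n + 2), ((-1 : ℝ) ^ (i : ℕ)) • h i : ↥(bddFns (Gma (n + 1)))) :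
        Gma (n + 1) → ℝ) := by
    funext τ
    rw [AddSubmonoid.coe_finset_sum]
    simp [hh, hg]
  have hb : IsBdd ((∑ i : Fin (n + 2), ((-1 : ℝ) ^ (i : ℕ)) • h i :
      ↥(bddFns (Gma (n + 1)))) : Gma (n + 1) → ℝ) :=
    (∑ i : Fin (n + 2), ((-1 : ℝ) ^ (i : ℕ)) • h i).2
  rw [hRfun, Mext, dif_pos hb]
  rw [show (⟨_, hb⟩ : ↥(bddFns (Gma (n + 1)))) = ∑ i : Fin (n + 2), ((-1 : ℝ) ^ (i : ℕ)) • h i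
    from rfl, map_sum]
  refine Finset.sum_congr rfl fun i _ => ?_
  rw [map_smul, smul_eq_mul]
  congr 1
  have := hcoherent n i (g i)
  have hbi : IsBdd ((g i : Gma n → ℝ)) := (g i).2
  rw [Mext, dif_pos hbi, ← this]
end

section
/- There exists a function C : ℕ → ℝ such that for every simplicial set K there is a family of maps k_n (n ∈ ℕ) assigning to each triple (σ, τ, τ′) ∈ K_n × Γ_n × Γ_n an (n+1)-chain k_n(σ, τ, τ′) of the unraveling K × Γ with integer coefficients, satisfying: (i) ‖k_n(σ, τ, τ′)‖₁ ≤ C(n) for all triples; (ii) ∂ k_0(σ, τ, τ′) = (σ, τ) − (σ, τ′), and for every n ≥ 1, ∂ k_n(σ, τ, τ′) = (σ, τ) − (σ, τ′) − Σ_{i=0}^{n} (−1)^i k_{n−1}(∂_i σ, ∂_i τ, ∂_i τ′), where an n-simplex is identified with the n-chain supported on it with coefficient 1. -/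
open CategoryTheory Simplicial

/-- The ℓ¹-norm of a chain with integer coefficients: the sum of the absolute values
of the coefficients. -/
def l1 {X : Type*} (c : X →₀ ℤ) : ℤ := ∑ x ∈ c.support, |c x|

/-- The boundary operator on chains of the unraveling `K × Γ` with integer coefficients:
`∂ c = ∑ᵢ (-1)ⁱ (∂ᵢ)_* c`. -/
noncomputable def bdryP (K : SSet) (n : ℕ) (c : (K _⦋n + 1⦌ × Gma (n + 1)) →₀ ℤ) :
    (K _⦋n⦌ × Gma n) →₀ ℤ :=
  ∑ i : Fin (n + 2), ((-1 : ℤ) ^ (i : ℕ)) •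
    Finsupp.mapDomain (fun x : K _⦋n + 1⦌ × Gma (n + 1) => (K.δ i x.1, faceG i x.2)) c

namespace CH

lemma val_succAbove {n : ℕ} (i : Fin (n + 1)) (t : Fin n) :
    (i.succAbove t : ℕ) = if (t : ℕ) < (i : ℕ) then (t : ℕ) else (t : ℕ) + 1 := by
  rw [Fin.succAbove]
  split_ifs with h h' h' <;> simp_all [Fin.lt_def]

lemma succAbove_comm {n : ℕ} (i j : Fin (n + 2)) (h : i ≤ j) (x : Fin (n + 1)) :
    (i.castSucc).succAbove (j.succAbove x) = (j.succ).succAbove (i.succAbove x) := by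
  have hle : (i : ℕ) ≤ (j : ℕ) := h
  apply Fin.ext
  rw [val_succAbove, val_succAbove, val_succAbove, val_succAbove]
  simp only [Fin.coe_castSucc, Fin.val_succ]
  split_ifs <;> omega

lemma succAbove_castSucc_castSucc {n : ℕ} (i : Fin (n + 2)) (j : Fin (n + 1)) :
    (i.castSucc).succAbove (j.castSucc) = (i.succAbove j).castSucc := by
  apply Fin.ext
  rw [val_succAbove]
  simp only [Fin.coe_castSucc, val_succAbove]

lemma succAbove_castSucc_last {n : ℕ} (i : Fin (n + 2)) :
    (i.castSucc).succAbove (Fin.last (n + 1)) = Fin.last (n + 2) := by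
  apply Fin.ext
  rw [val_succAbove]
  simp only [Fin.val_last, Fin.coe_castSucc]
  have := i.isLt
  split_ifs <;> omega

lemma strictMono_snoc {n : ℕ} {g : Fin (n + 1) → ℕ} (hg : StrictMono g) {b : ℕ}
    (hb : g (Fin.last n) < b) : StrictMono (Fin.snoc g b : Fin (n + 2) → ℕ) := by
  intro i j hij
  rcases Fin.eq_castSucc_or_eq_last j with ⟨j', rfl⟩ | rfl
  · have hi : i ≠ Fin.last (n + 1) := by
      intro hh
      rw [hh] at hij
      exact absurd (le_of_lt hij) (not_le.mpr (Fin.castSucc_lt_last j'))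
    rcases Fin.eq_castSucc_or_eq_last i with ⟨i', rfl⟩ | rfl
    · rw [Fin.snoc_castSucc, Fin.snoc_castSucc]
      exact hg (by exact_mod_cast hij)
    · exact absurd rfl hi
  · rcases Fin.eq_castSucc_or_eq_last i with ⟨i', rfl⟩ | rfl
    · rw [Fin.snoc_castSucc, Fin.snoc_last]
      exact lt_of_le_of_lt (hg.monotone (Fin.le_last i')) hb
    · exact absurd rfl (ne_of_lt hij)

lemma monotone_snoc {n m : ℕ} {g : Fin (n + 1) → Fin (m + 1)} (hg : Monotone g) :
    Monotone (Fin.snoc g (Fin.last m) : Fin (n + 2) → Fin (m + 1)) := by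
  intro i j hij
  rcases Fin.eq_castSucc_or_eq_last j with ⟨j', rfl⟩ | rfl
  · rcases Fin.eq_castSucc_or_eq_last i with ⟨i', rfl⟩ | rfl
    · rw [Fin.snoc_castSucc, Fin.snoc_castSucc]
      exact hg (by exact_mod_cast hij)
    · exact absurd hij (not_le.mpr (Fin.castSucc_lt_last j'))
  · rw [Fin.snoc_last]
    exact Fin.le_last _

end CH

namespace CH

/-- `Δ[n]_j`: monotone maps. -/
def Dn (n j : ℕ) : Type := {f : Fin (j + 1) → Fin (n + 1) // Monotone f}

def faceD {n j : ℕ} (i : Fin (j + 2)) (β : Dn n (j + 1)) : Dn n j :=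
  ⟨fun t => β.1 (i.succAbove t), β.2.comp (Fin.strictMono_succAbove i).monotone⟩

def idD (n : ℕ) : Dn n n := ⟨fun t => t, fun _ _ h => h⟩

def pushD {n j : ℕ} (i : Fin (n + 2)) (β : Dn n j) : Dn (n + 1) j :=
  ⟨fun t => i.succAbove (β.1 t), fun _ _ h => (Fin.strictMono_succAbove i).monotone (β.2 h)⟩

abbrev Ch (n j : ℕ) := (Dn n j × Gma j) →₀ ℤ

def fU {n j : ℕ} (i : Fin (j + 2)) (x : Dn n (j + 1) × Gma (j + 1)) : Dn n j × Gma j :=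
  (faceD i x.1, faceG i x.2)

noncomputable def bd {n j : ℕ} (c : Ch n (j + 1)) : Ch n j :=
  ∑ i : Fin (j + 2), ((-1 : ℤ) ^ (i : ℕ)) • Finsupp.mapDomain (fU i) c

def pushM {n j : ℕ} (i : Fin (n + 2)) (x : Dn n j × Gma j) : Dn (n + 1) j × Gma j :=
  (pushD i x.1, x.2)

noncomputable def pushC {n j : ℕ} (i : Fin (n + 2)) (c : Ch n j) : Ch (n + 1) j :=
  Finsupp.mapDomain (pushM i) c

/-- cone maps -/
def snocD {n j : ℕ} (β : Dn n j) : Dn n (j + 1) :=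
  ⟨Fin.snoc β.1 (Fin.last n), monotone_snoc β.2⟩

def appG {j : ℕ} (m : ℕ) (τ : Gma j) : Gma (j + 1) :=
  ⟨Fin.snoc τ.1 (max m (τ.1 (Fin.last j) + 1)),
    strictMono_snoc τ.2 (lt_of_lt_of_le (Nat.lt_succ_self _) (le_max_right _ _))⟩

def coneM {n j : ℕ} (m : ℕ) (x : Dn n j × Gma j) : Dn n (j + 1) × Gma (j + 1) :=
  (snocD x.1, appG m x.2)

noncomputable def coneC {n j : ℕ} (m : ℕ) (c : Ch n j) : Ch n (j + 1) :=
  ((-1 : ℤ) ^ (j + 1)) • Finsupp.mapDomain (coneM m) c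

-- commutation lemmas on simplices
lemma fU_pushM {n j : ℕ} (i : Fin (n + 2)) (l : Fin (j + 2)) (x : Dn n (j + 1) × Gma (j + 1)) :
    fU l (pushM i x) = pushM i (fU l x) := rfl

lemma faceD_last_snocD {n j : ℕ} (β : Dn n j) :
    faceD (Fin.last (j + 1)) (snocD β) = β := by
  apply Subtype.ext
  funext t
  simp only [faceD, snocD]
  rw [Fin.succAbove_last, Fin.snoc_castSucc]

lemma faceG_last_appG {j : ℕ} (m : ℕ) (τ : Gma j) :
    faceG (Fin.last (j + 1)) (appG m τ) = τ := by
  apply Subtype.ext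
  funext t
  simp only [faceG, appG]
  rw [Fin.succAbove_last, Fin.snoc_castSucc]

lemma fU_last_coneM {n j : ℕ} (m : ℕ) (x : Dn n j × Gma j) :
    fU (Fin.last (j + 1)) (coneM m x) = x := by
  have h1 : faceD (Fin.last (j + 1)) (snocD x.1) = x.1 := faceD_last_snocD x.1
  have h2 : faceG (Fin.last (j + 1)) (appG m x.2) = x.2 := faceG_last_appG m x.2
  show (faceD _ (snocD x.1), faceG _ (appG m x.2)) = x
  rw [h1, h2]

lemma faceD_castSucc_snocD {n j : ℕ} (i : Fin (j + 2)) (β : Dn n (j + 1)) :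
    faceD i.castSucc (snocD β) = snocD (faceD i β) := by
  apply Subtype.ext
  funext t
  simp only [faceD, snocD]
  rcases Fin.eq_castSucc_or_eq_last t with ⟨t', rfl⟩ | rfl
  · rw [succAbove_castSucc_castSucc, Fin.snoc_castSucc, Fin.snoc_castSucc]
  · rw [succAbove_castSucc_last, Fin.snoc_last, Fin.snoc_last]

lemma faceG_castSucc_appG {j : ℕ} (m : ℕ) (i : Fin (j + 2)) (τ : Gma (j + 1))
    (hm : τ.1 (Fin.last (j + 1)) < m) :
    faceG i.castSucc (appG m τ) = appG m (faceG i τ) := by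
  have hmax : max m (τ.1 (Fin.last (j + 1)) + 1) = m := max_eq_left (by omega)
  have hface : (faceG i τ).1 (Fin.last j) < m :=
    lt_of_le_of_lt (τ.2.monotone (Fin.le_last _)) hm
  have hmax2 : max m ((faceG i τ).1 (Fin.last j) + 1) = m := max_eq_left (by omega)
  apply Subtype.ext
  funext t
  simp only [faceG, appG]
  rcases Fin.eq_castSucc_or_eq_last t with ⟨t', rfl⟩ | rfl
  · rw [succAbove_castSucc_castSucc, Fin.snoc_castSucc, Fin.snoc_castSucc]
  · rw [succAbove_castSucc_last, Fin.snoc_last, Fin.snoc_last]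
    simp only [faceG] at hmax2
    rw [hmax, hmax2]

lemma fU_castSucc_coneM {n j : ℕ} (m : ℕ) (i : Fin (j + 2)) (x : Dn n (j + 1) × Gma (j + 1))
    (hm : x.2.1 (Fin.last (j + 1)) < m) :
    fU i.castSucc (coneM m x) = coneM m (fU i x) := by
  have h1 := faceD_castSucc_snocD i x.1
  have h2 := faceG_castSucc_appG m i x.2 hm
  show (faceD i.castSucc (snocD x.1), faceG i.castSucc (appG m x.2)) = _
  rw [h1, h2]
  rfl

end CH

namespace CH

section l1
variable {X Y : Type*}

lemma l1_nonneg (c : X →₀ ℤ) : 0 ≤ l1 c :=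
  Finset.sum_nonneg fun _ _ => abs_nonneg _

lemma l1_single (x : X) (a : ℤ) : l1 (Finsupp.single x a) ≤ |a| := by
  classical
  rcases eq_or_ne a 0 with rfl | ha
  · simp [l1]
  · rw [l1, Finsupp.support_single_ne_zero _ ha, Finset.sum_singleton, Finsupp.single_eq_same]

lemma sum_abs_over (c : X →₀ ℤ) (s : Finset X) (hs : c.support ⊆ s) :
    ∑ x ∈ s, |c x| = l1 c := by
  classical
  rw [l1]
  exact (Finset.sum_subset hs (fun x _ hx => by
    rw [Finsupp.notMem_support_iff.mp hx]; simp)).symm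

lemma l1_add_le (a b : X →₀ ℤ) : l1 (a + b) ≤ l1 a + l1 b := by
  classical
  have h1 : l1 (a + b) ≤ ∑ x ∈ a.support ∪ b.support, |a x + b x| := by
    rw [l1]
    refine Finset.sum_le_sum_of_subset_of_nonneg ?_ (fun _ _ _ => abs_nonneg _)
    intro x hx
    exact Finset.mem_union.mpr (by
      by_contra h
      push_neg at h
      obtain ⟨h1', h2'⟩ := h
      rw [Finsupp.mem_support_iff, Finsupp.add_apply,
        Finsupp.notMem_support_iff.mp h1', Finsupp.notMem_support_iff.mp h2'] at hx
      exact hx rfl)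
  have h2 : ∀ x ∈ a.support ∪ b.support, |a x + b x| ≤ |a x| + |b x| :=
    fun x _ => abs_add_le _ _
  calc l1 (a + b) ≤ ∑ x ∈ a.support ∪ b.support, (|a x| + |b x|) := by
        refine h1.trans (Finset.sum_le_sum h2)
    _ = ∑ x ∈ a.support ∪ b.support, |a x| + ∑ x ∈ a.support ∪ b.support, |b x| :=
        Finset.sum_add_distrib
    _ = l1 a + l1 b := by
        rw [sum_abs_over a _ Finset.subset_union_left,
          sum_abs_over b _ Finset.subset_union_right]

lemma l1_neg (a : X →₀ ℤ) : l1 (-a) = l1 a := by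
  classical
  rw [l1, l1, Finsupp.support_neg]
  exact Finset.sum_congr rfl fun x _ => by rw [Finsupp.neg_apply, abs_neg]

lemma l1_sub_le (a b : X →₀ ℤ) : l1 (a - b) ≤ l1 a + l1 b := by
  rw [sub_eq_add_neg]
  exact (l1_add_le a (-b)).trans (by rw [l1_neg])

lemma l1_zsmul_le (r : ℤ) (a : X →₀ ℤ) : l1 (r • a) ≤ |r| * l1 a := by
  classical
  have hsupp : (r • a).support ⊆ a.support := Finsupp.support_smul
  calc l1 (r • a) ≤ ∑ x ∈ a.support, |(r • a) x| := by
        rw [l1]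
        exact Finset.sum_le_sum_of_subset_of_nonneg hsupp (fun _ _ _ => abs_nonneg _)
    _ = ∑ x ∈ a.support, |r| * |a x| := Finset.sum_congr rfl (fun x _ => by
        rw [Finsupp.smul_apply, smul_eq_mul, abs_mul])
    _ = |r| * l1 a := by rw [l1, Finset.mul_sum]

lemma l1_finset_sum_le {ι : Type*} (s : Finset ι) (g : ι → (X →₀ ℤ)) :
    l1 (∑ i ∈ s, g i) ≤ ∑ i ∈ s, l1 (g i) := by
  classical
  induction s using Finset.induction_on with
  | empty => simp [l1]
  | insert _ _ h ih =>
    rw [Finset.sum_insert h, Finset.sum_insert h]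
    exact (l1_add_le _ _).trans (by gcongr)

lemma l1_mapDomain_le (f : X → Y) (c : X →₀ ℤ) :
    l1 (Finsupp.mapDomain f c) ≤ l1 c := by
  classical
  rw [Finsupp.mapDomain, Finsupp.sum]
  refine (l1_finset_sum_le _ _).trans ?_
  rw [l1]
  exact Finset.sum_le_sum fun x _ => l1_single _ _

end l1

section linear
variable {X Y : Type*}

lemma mapDomain_finset_sum {ι : Type*} (f : X → Y) (s : Finset ι) (g : ι → (X →₀ ℤ)) :
    Finsupp.mapDomain f (∑ i ∈ s, g i) = ∑ i ∈ s, Finsupp.mapDomain f (g i) :=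
  map_sum (Finsupp.mapDomain.addMonoidHom f) g s

lemma mapDomain_sub (f : X → Y) (a b : X →₀ ℤ) :
    Finsupp.mapDomain f (a - b) = Finsupp.mapDomain f a - Finsupp.mapDomain f b :=
  map_sub (Finsupp.mapDomain.addMonoidHom f) a b

end linear

section bdlin

variable {n j : ℕ}

lemma bd_add (a b : Ch n (j + 1)) : bd (a + b) = bd a + bd b := by
  simp only [bd, Finsupp.mapDomain_add, smul_add, Finset.sum_add_distrib]

lemma bd_zsmul (r : ℤ) (a : Ch n (j + 1)) : bd (r • a) = r • bd a := by
  simp only [bd, Finsupp.mapDomain_smul, Finset.smul_sum]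
  exact Finset.sum_congr rfl fun i _ => smul_comm _ _ _

lemma bd_sub (a b : Ch n (j + 1)) : bd (a - b) = bd a - bd b := by
  simp only [bd, mapDomain_sub, smul_sub, Finset.sum_sub_distrib]

lemma bd_zero : bd (0 : Ch n (j + 1)) = 0 := by
  simp [bd]

lemma bd_finset_sum {ι : Type*} (s : Finset ι) (g : ι → Ch n (j + 1)) :
    bd (∑ i ∈ s, g i) = ∑ i ∈ s, bd (g i) := by
  classical
  induction s using Finset.induction_on with
  | empty => simp [bd_zero]
  | insert _ _ h ih => rw [Finset.sum_insert h, Finset.sum_insert h, bd_add, ih]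

lemma bd_single (x : Dn n (j + 1) × Gma (j + 1)) (a : ℤ) :
    bd (Finsupp.single x a) = ∑ i : Fin (j + 2), ((-1 : ℤ) ^ (i : ℕ)) •
      Finsupp.single (fU i x) a := by
  simp only [bd, Finsupp.mapDomain_single]

lemma pushC_single (i : Fin (n + 2)) (x : Dn n j × Gma j) (a : ℤ) :
    pushC i (Finsupp.single x a) = Finsupp.single (pushM i x) a :=
  Finsupp.mapDomain_single

lemma bd_pushC (i : Fin (n + 2)) (c : Ch n (j + 1)) :
    bd (pushC i c) = pushC i (bd c) := by
  simp only [bd, pushC, mapDomain_finset_sum, Finsupp.mapDomain_smul]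
  refine Finset.sum_congr rfl fun l _ => ?_
  rw [← Finsupp.mapDomain_comp, ← Finsupp.mapDomain_comp]
  rfl

end bdlin

end CH

namespace CH

variable {n j : ℕ}

lemma coneC_zero : coneC m (0 : Ch n j) = 0 := by
  simp [coneC]

lemma bd_coneC (m : ℕ) (c : Ch n (j + 1))
    (hm : ∀ x ∈ c.support, x.2.1 (Fin.last (j + 1)) < m) :
    bd (coneC m c) = c - coneC m (bd c) := by
  have key : ∀ i : Fin (j + 2),
      Finsupp.mapDomain (fU i.castSucc) (Finsupp.mapDomain (coneM m) c)
        = Finsupp.mapDomain (coneM m) (Finsupp.mapDomain (fU i) c) := by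
    intro i
    rw [← Finsupp.mapDomain_comp, ← Finsupp.mapDomain_comp]
    exact Finsupp.mapDomain_congr fun x hx => fU_castSucc_coneM m i x (hm x hx)
  have hlast : Finsupp.mapDomain (fU (Fin.last (j + 2))) (Finsupp.mapDomain (coneM m) c)
      = c := by
    rw [← Finsupp.mapDomain_comp]
    have h : Finsupp.mapDomain (fU (Fin.last (j + 2)) ∘ coneM m) c
        = Finsupp.mapDomain id c :=
      Finsupp.mapDomain_congr fun x _ => fU_last_coneM m x
    rw [h, Finsupp.mapDomain_id]
  have expand : bd (coneC m c)
      = (∑ i : Fin (j + 2), ((-1 : ℤ) ^ (i : ℕ)) • ((-1 : ℤ) ^ (j + 1 + 1)) •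
          Finsupp.mapDomain (coneM m) (Finsupp.mapDomain (fU i) c)) + c := by
    rw [coneC, bd]
    simp only [Finsupp.mapDomain_smul]
    rw [Fin.sum_univ_castSucc]
    congr 1
    · exact Finset.sum_congr rfl fun i _ => by rw [Fin.coe_castSucc, key i]
    · rw [Fin.val_last, hlast, smul_smul, ← pow_add,
        Even.neg_one_pow ⟨j + 2, by ring⟩, one_smul]
  have expand2 : coneC m (bd c)
      = ∑ i : Fin (j + 2), ((-1 : ℤ) ^ (j + 1)) • ((-1 : ℤ) ^ (i : ℕ)) •
          Finsupp.mapDomain (coneM m) (Finsupp.mapDomain (fU i) c) := by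
    rw [bd, coneC, mapDomain_finset_sum, Finset.smul_sum]
    exact Finset.sum_congr rfl fun i _ => by rw [Finsupp.mapDomain_smul]
  rw [expand, expand2]
  have hterm : ∀ i : Fin (j + 2),
      ((-1 : ℤ) ^ (i : ℕ)) • ((-1 : ℤ) ^ (j + 1 + 1)) •
          Finsupp.mapDomain (coneM m) (Finsupp.mapDomain (fU i) c)
        = -(((-1 : ℤ) ^ (j + 1)) • ((-1 : ℤ) ^ (i : ℕ)) •
          Finsupp.mapDomain (coneM m) (Finsupp.mapDomain (fU i) c)) := by
    intro i
    rw [smul_smul, smul_smul, ← neg_smul]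
    congr 1
    rw [pow_succ]
    ring
  rw [Finset.sum_congr rfl fun i _ => hterm i, Finset.sum_neg_distrib]
  abel

lemma bd_coneC_cycle (m : ℕ) (c : Ch n (j + 1))
    (hm : ∀ x ∈ c.support, x.2.1 (Fin.last (j + 1)) < m)
    (hc : bd c = 0) : bd (coneC m c) = c := by
  rw [bd_coneC m c hm, hc, coneC_zero, sub_zero]

end CH

namespace CH

lemma neg_one_pow_succ_add (a b : ℕ) :
    ((-1 : ℤ) ^ (a + b) + (-1 : ℤ) ^ (a + b + 1)) = 0 := by
  rw [pow_succ]; ring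

lemma alt_sum_cancel {M : Type*} [AddCommGroup M] {N : ℕ} (G : Fin (N + 2) → Fin (N + 1) → M)
    (hG : ∀ (i j : Fin (N + 1)), i ≤ j → G i.castSucc j = G j.succ i) :
    (∑ i : Fin (N + 2), ∑ j : Fin (N + 1), ((-1 : ℤ) ^ ((i : ℕ) + (j : ℕ))) • G i j) = 0 := by
  classical
  have hrw : (∑ i : Fin (N + 2), ∑ j : Fin (N + 1), ((-1 : ℤ) ^ ((i : ℕ) + (j : ℕ))) • G i j)
      = ∑ p ∈ (Finset.univ ×ˢ Finset.univ : Finset (Fin (N + 2) × Fin (N + 1))),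
          ((-1 : ℤ) ^ ((p.1 : ℕ) + (p.2 : ℕ))) • G p.1 p.2 :=
    (Finset.sum_product
      (f := fun p : Fin (N + 2) × Fin (N + 1) =>
        ((-1 : ℤ) ^ ((p.1 : ℕ) + (p.2 : ℕ))) • G p.1 p.2) _ _).symm
  rw [hrw]
  have hval : ∀ p : Fin (N + 2) × Fin (N + 1), ¬ ((p.1 : ℕ) ≤ (p.2 : ℕ)) →
      1 ≤ (p.1 : ℕ) ∧ (p.1 : ℕ) - 1 < N + 1 ∧ (p.2 : ℕ) < N + 2 := by
    intro p h
    have := p.1.isLt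
    have := p.2.isLt
    omega
  set g : Fin (N + 2) × Fin (N + 1) → Fin (N + 2) × Fin (N + 1) :=
    fun p => if h : (p.1 : ℕ) ≤ (p.2 : ℕ)
      then (p.2.succ, ⟨(p.1 : ℕ), by have := p.2.isLt; omega⟩)
      else (⟨(p.2 : ℕ), by have := p.2.isLt; omega⟩,
            ⟨(p.1 : ℕ) - 1, by have := p.1.isLt; have := hval p h; omega⟩) with hg
  refine Finset.sum_ninvolution g ?_ ?_ (fun p => Finset.mem_product.mpr
    ⟨Finset.mem_univ _, Finset.mem_univ _⟩) ?_
  · intro p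
    by_cases h : (p.1 : ℕ) ≤ (p.2 : ℕ)
    · have hgp : g p = (p.2.succ, ⟨(p.1 : ℕ), by have := p.2.isLt; omega⟩) := by
        rw [hg]; exact dif_pos h
      rw [hgp]
      dsimp only
      have hGeq : G p.1 p.2 = G p.2.succ ⟨(p.1 : ℕ), by have := p.2.isLt; omega⟩ := by
        have h' := hG ⟨(p.1 : ℕ), by have := p.2.isLt; omega⟩ p.2 h
        have hp1 : (⟨(p.1 : ℕ), by have := p.2.isLt; omega⟩ : Fin (N + 1)).castSucc = p.1 :=
          Fin.ext rfl
        rw [hp1] at h'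
        exact h'
      rw [hGeq, ← add_smul]
      have he : ((p.2.succ : ℕ) + ((⟨(p.1 : ℕ), by have := p.2.isLt; omega⟩ : Fin (N + 1)) : ℕ))
          = ((p.1 : ℕ) + (p.2 : ℕ)) + 1 := by
        simp only [Fin.val_succ]
        omega
      rw [he, neg_one_pow_succ_add, zero_smul]
    · have hvp := hval p h
      have hgp : g p = (⟨(p.2 : ℕ), by have := p.2.isLt; omega⟩,
          ⟨(p.1 : ℕ) - 1, by have := p.1.isLt; omega⟩) := by
        rw [hg]; exact dif_neg h
      rw [hgp]
      dsimp only
      have hGeq : G (⟨(p.2 : ℕ), by have := p.2.isLt; omega⟩ : Fin (N + 2))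
          ⟨(p.1 : ℕ) - 1, by have := p.1.isLt; omega⟩ = G p.1 p.2 := by
        have h' := hG ⟨(p.2 : ℕ), by have := p.2.isLt; omega⟩
          ⟨(p.1 : ℕ) - 1, by have := p.1.isLt; omega⟩
          (by show (p.2 : ℕ) ≤ (p.1 : ℕ) - 1; omega)
        have e1 : (⟨(p.2 : ℕ), by have := p.2.isLt; omega⟩ : Fin (N + 1)).castSucc
            = (⟨(p.2 : ℕ), by have := p.2.isLt; omega⟩ : Fin (N + 2)) := Fin.ext rfl
        have e2 : (⟨(p.1 : ℕ) - 1, by have := p.1.isLt; omega⟩ : Fin (N + 1)).succ = p.1 := by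
          apply Fin.ext
          show ((p.1 : ℕ) - 1) + 1 = (p.1 : ℕ)
          omega
        rw [e1, e2] at h'
        exact h'
      rw [hGeq, ← add_smul]
      have he : (((⟨(p.2 : ℕ), by have := p.2.isLt; omega⟩ : Fin (N + 2)) : ℕ)
            + ((⟨(p.1 : ℕ) - 1, by have := p.1.isLt; omega⟩ : Fin (N + 1)) : ℕ))
          = ((p.2 : ℕ) + ((p.1 : ℕ) - 1)) := rfl
      have hee : ((p.1 : ℕ) + (p.2 : ℕ)) = ((p.2 : ℕ) + ((p.1 : ℕ) - 1)) + 1 := by omega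
      rw [he, hee]
      convert zero_smul ℤ _ using 2
      rw [pow_succ]
      ring
  · intro p _
    intro hne
    by_cases h : (p.1 : ℕ) ≤ (p.2 : ℕ)
    · have hgp : g p = (p.2.succ, ⟨(p.1 : ℕ), by have := p.2.isLt; omega⟩) := by
        rw [hg]; exact dif_pos h
      rw [hgp] at hne
      have := congrArg (fun q : Fin (N + 2) × Fin (N + 1) => (q.1 : ℕ)) hne
      simp only [Fin.val_succ] at this
      omega
    · have hgp : g p = (⟨(p.2 : ℕ), by have := p.2.isLt; omega⟩,
          ⟨(p.1 : ℕ) - 1, by have := p.1.isLt; omega⟩) := by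
        rw [hg]; exact dif_neg h
      rw [hgp] at hne
      have := congrArg (fun q : Fin (N + 2) × Fin (N + 1) => (q.1 : ℕ)) hne
      simp only [] at this
      omega
  · intro p
    by_cases h : (p.1 : ℕ) ≤ (p.2 : ℕ)
    · have hgp : g p = (p.2.succ, ⟨(p.1 : ℕ), by have := p.2.isLt; omega⟩) := by
        rw [hg]; exact dif_pos h
      rw [hgp, hg]
      dsimp only
      split_ifs with hc
      · exfalso
        simp only [Fin.val_succ] at hc
        omega
      · rw [Prod.mk.injEq]
        constructor
        · exact Fin.ext rfl
        · apply Fin.ext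
          show ((p.2 : ℕ) + 1) - 1 = (p.2 : ℕ)
          omega
    · have hgp : g p = (⟨(p.2 : ℕ), by have := p.2.isLt; omega⟩,
          ⟨(p.1 : ℕ) - 1, by have := p.1.isLt; omega⟩) := by
        rw [hg]; exact dif_neg h
      rw [hgp, hg]
      dsimp only
      split_ifs with hc
      · rw [Prod.mk.injEq]
        constructor
        · apply Fin.ext
          show ((p.1 : ℕ) - 1) + 1 = (p.1 : ℕ)
          omega
        · exact Fin.ext rfl
      · exfalso
        omega

end CH

namespace CH

noncomputable def mval {n j : ℕ} (c : Ch n j) : ℕ :=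
  c.support.sup (fun x => x.2.1 (Fin.last j))

lemma mval_lt {n j : ℕ} (c : Ch n j) :
    ∀ x ∈ c.support, x.2.1 (Fin.last j) < mval c + 1 :=
  fun x hx => Nat.lt_succ_of_le (Finset.le_sup (f := fun x => x.2.1 (Fin.last j)) hx)

noncomputable def kappa : (n : ℕ) → Gma n → Gma n → Ch n (n + 1) := fun n τ τ' =>
  match n, τ, τ' with
  | 0, τ, τ' =>
    Finsupp.single (snocD (idD 0), appG (max (τ.1 0) (τ'.1 0) + 1) τ') 1
      - Finsupp.single (snocD (idD 0), appG (max (τ.1 0) (τ'.1 0) + 1) τ) 1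
  | (n + 1), τ, τ' =>
    let z : Ch (n + 1) (n + 1) :=
      Finsupp.single (idD (n + 1), τ) 1 - Finsupp.single (idD (n + 1), τ') 1
        - ∑ i : Fin (n + 2), ((-1 : ℤ) ^ (i : ℕ)) •
            pushC i (kappa n (faceG i τ) (faceG i τ'))
    coneC (mval z + 1) z

noncomputable def zk (n : ℕ) (τ τ' : Gma (n + 1)) : Ch (n + 1) (n + 1) :=
  Finsupp.single (idD (n + 1), τ) 1 - Finsupp.single (idD (n + 1), τ') 1
    - ∑ i : Fin (n + 2), ((-1 : ℤ) ^ (i : ℕ)) •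
        pushC i (kappa n (faceG i τ) (faceG i τ'))

lemma kappa_succ (n : ℕ) (τ τ' : Gma (n + 1)) :
    kappa (n + 1) τ τ' = coneC (mval (zk n τ τ') + 1) (zk n τ τ') := rfl

def vtx (M : ℕ) : Gma 0 :=
  ⟨fun _ => M, fun a b h => by
    have h1 := a.isLt
    have h2 := b.isLt
    rw [Fin.lt_def] at h
    omega⟩

lemma kappa_bd_zero (τ τ' : Gma 0) :
    bd (kappa 0 τ τ') = Finsupp.single (idD 0, τ) 1 - Finsupp.single (idD 0, τ') 1 := by
  set M := max (τ.1 0) (τ'.1 0) + 1 with hM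
  haveI : Subsingleton (Fin (0 + 1)) := Fin.subsingleton_one
  have hDT : ∀ (i : Fin 2) (β : Dn 0 1), faceD i β = idD 0 := by
    intro i β
    apply Subtype.ext
    funext t
    exact Subsingleton.elim _ _
  have htop : ∀ σ : Gma 0, σ.1 0 < M → faceG (0 : Fin 2) (appG M σ) = vtx M := by
    intro σ hσ
    apply Subtype.ext
    funext t
    have ht : t = 0 := Subsingleton.elim _ _
    subst ht
    simp only [faceG, appG, vtx]
    have h1 : (0 : Fin 2).succAbove (0 : Fin (0 + 1)) = Fin.last 1 := by decide
    rw [h1, Fin.snoc_last]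
    have h2 : σ.1 (Fin.last 0) = σ.1 0 := rfl
    rw [h2]
    omega
  have hbot : ∀ σ : Gma 0, faceG (1 : Fin 2) (appG M σ) = σ := by
    intro σ
    apply Subtype.ext
    funext t
    have ht : t = 0 := Subsingleton.elim _ _
    subst ht
    simp only [faceG, appG]
    have h1 : (1 : Fin 2).succAbove (0 : Fin (0 + 1)) = Fin.castSucc 0 := by decide
    rw [h1]
    exact Fin.snoc_castSucc _ _ _
  have hτ : τ.1 0 < M := Nat.lt_succ_of_le (le_max_left _ _)
  have hτ' : τ'.1 0 < M := Nat.lt_succ_of_le (le_max_right _ _)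
  have e1 : fU (0 : Fin 2) (snocD (idD 0), appG M τ') = (idD 0, vtx M) := by
    show (faceD _ _, faceG _ _) = _
    rw [hDT, htop τ' hτ']
  have e2 : fU (1 : Fin 2) (snocD (idD 0), appG M τ') = (idD 0, τ') := by
    show (faceD _ _, faceG _ _) = _
    rw [hDT, hbot τ']
  have e3 : fU (0 : Fin 2) (snocD (idD 0), appG M τ) = (idD 0, vtx M) := by
    show (faceD _ _, faceG _ _) = _
    rw [hDT, htop τ hτ]
  have e4 : fU (1 : Fin 2) (snocD (idD 0), appG M τ) = (idD 0, τ) := by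
    show (faceD _ _, faceG _ _) = _
    rw [hDT, hbot τ]
  show bd (Finsupp.single (snocD (idD 0), appG M τ') 1
      - Finsupp.single (snocD (idD 0), appG M τ) 1) = _
  rw [bd_sub, bd_single, bd_single, Fin.sum_univ_two, Fin.sum_univ_two]
  rw [e1, e2, e3, e4]
  simp only [Fin.val_zero, Fin.val_one, pow_zero, pow_one, one_smul, neg_one_zsmul]
  abel

end CH

namespace CH

lemma pushC_sub {n j : ℕ} (i : Fin (n + 2)) (a b : Ch n j) :
    pushC i (a - b) = pushC i a - pushC i b :=
  mapDomain_sub _ a b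

lemma pushC_finset_sum {n j : ℕ} {ι : Type*} (i : Fin (n + 2)) (s : Finset ι)
    (g : ι → Ch n j) : pushC i (∑ x ∈ s, g x) = ∑ x ∈ s, pushC i (g x) :=
  mapDomain_finset_sum _ s g

lemma pushC_zsmul {n j : ℕ} (i : Fin (n + 2)) (r : ℤ) (a : Ch n j) :
    pushC i (r • a) = r • pushC i a :=
  Finsupp.mapDomain_smul r a

lemma faceG_comm {n : ℕ} {i j : Fin (n + 2)} (h : i ≤ j) (τ : Gma (n + 2)) :
    faceG j (faceG i.castSucc τ) = faceG i (faceG j.succ τ) := by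
  apply Subtype.ext
  funext t
  show τ.1 (i.castSucc.succAbove (j.succAbove t)) = τ.1 (j.succ.succAbove (i.succAbove t))
  rw [succAbove_comm i j h t]

lemma pushM_comm {n j₀ : ℕ} {i j : Fin (n + 2)} (h : i ≤ j) (x : Dn n j₀ × Gma j₀) :
    pushM i.castSucc (pushM j x) = pushM j.succ (pushM i x) := by
  have hD : pushD i.castSucc (pushD j x.1) = pushD j.succ (pushD i x.1) := by
    apply Subtype.ext
    funext t
    exact succAbove_comm i j h (x.1.1 t)
  show (pushD i.castSucc (pushD j x.1), x.2) = (pushD j.succ (pushD i x.1), x.2)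
  rw [hD]

lemma pushC_comm {n j₀ : ℕ} {i j : Fin (n + 2)} (h : i ≤ j) (c : Ch n j₀) :
    pushC i.castSucc (pushC j c) = pushC j.succ (pushC i c) := by
  rw [pushC, pushC, pushC, pushC, ← Finsupp.mapDomain_comp, ← Finsupp.mapDomain_comp]
  exact Finsupp.mapDomain_congr fun x _ => pushM_comm h x

lemma fU_idD {n : ℕ} (i : Fin (n + 2)) (σ : Gma (n + 1)) :
    fU i (idD (n + 1), σ) = pushM i (idD n, faceG i σ) := rfl

lemma bd_zk_zero (τ τ' : Gma 1) : bd (zk 0 τ τ') = 0 := by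
  rw [zk, bd_sub, bd_sub, bd_single, bd_single, bd_finset_sum]
  have h1 : ∀ i : Fin 2,
      bd (((-1 : ℤ) ^ (i : ℕ)) • pushC i (kappa 0 (faceG i τ) (faceG i τ')))
        = ((-1 : ℤ) ^ (i : ℕ)) • (Finsupp.single (fU i (idD 1, τ)) 1
            - Finsupp.single (fU i (idD 1, τ')) 1) := by
    intro i
    rw [bd_zsmul, bd_pushC, kappa_bd_zero, pushC_sub, pushC_single, pushC_single]
    rw [← fU_idD, ← fU_idD]
  rw [Finset.sum_congr rfl fun i _ => h1 i]
  simp only [smul_sub]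
  rw [Finset.sum_sub_distrib]
  abel

lemma bd_zk_of (n : ℕ)
    (hind : ∀ τ τ' : Gma (n + 1), bd (kappa (n + 1) τ τ') = zk n τ τ')
    (τ τ' : Gma (n + 2)) : bd (zk (n + 1) τ τ') = 0 := by
  rw [zk, bd_sub, bd_sub, bd_single, bd_single, bd_finset_sum]
  have h1 : ∀ i : Fin (n + 3),
      bd (((-1 : ℤ) ^ (i : ℕ)) • pushC i (kappa (n + 1) (faceG i τ) (faceG i τ')))
        = ((-1 : ℤ) ^ (i : ℕ)) • (Finsupp.single (fU i (idD (n + 2), τ)) 1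
            - Finsupp.single (fU i (idD (n + 2), τ')) 1
            - ∑ l : Fin (n + 2), ((-1 : ℤ) ^ (l : ℕ)) •
                pushC i (pushC l (kappa n (faceG l (faceG i τ)) (faceG l (faceG i τ'))))) := by
    intro i
    rw [bd_zsmul, bd_pushC, hind, zk, pushC_sub, pushC_sub, pushC_single, pushC_single,
      ← fU_idD, ← fU_idD, pushC_finset_sum]
    simp only [pushC_zsmul]
  rw [Finset.sum_congr rfl fun i _ => h1 i]
  simp only [smul_sub]
  rw [Finset.sum_sub_distrib, Finset.sum_sub_distrib]
  have hS : (∑ i : Fin (n + 3), ((-1 : ℤ) ^ (i : ℕ)) •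
      ∑ l : Fin (n + 2), ((-1 : ℤ) ^ (l : ℕ)) •
        pushC i (pushC l (kappa n (faceG l (faceG i τ)) (faceG l (faceG i τ'))))) = 0 := by
    have hstep : ∀ i : Fin (n + 3), ((-1 : ℤ) ^ (i : ℕ)) •
        (∑ l : Fin (n + 2), ((-1 : ℤ) ^ (l : ℕ)) •
          pushC i (pushC l (kappa n (faceG l (faceG i τ)) (faceG l (faceG i τ')))))
        = ∑ l : Fin (n + 2), ((-1 : ℤ) ^ ((i : ℕ) + (l : ℕ))) •
            pushC i (pushC l (kappa n (faceG l (faceG i τ)) (faceG l (faceG i τ')))) := by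
      intro i
      rw [Finset.smul_sum]
      exact Finset.sum_congr rfl fun l _ => by rw [smul_smul, ← pow_add]
    rw [Finset.sum_congr rfl fun i _ => hstep i]
    exact alt_sum_cancel
      (fun i l => pushC i (pushC l (kappa n (faceG l (faceG i τ)) (faceG l (faceG i τ')))))
      (fun i l hij => by
        show pushC i.castSucc (pushC l (kappa n (faceG l (faceG i.castSucc τ))
              (faceG l (faceG i.castSucc τ'))))
            = pushC l.succ (pushC i (kappa n (faceG i (faceG l.succ τ))
              (faceG i (faceG l.succ τ'))))
        rw [faceG_comm hij τ, faceG_comm hij τ', pushC_comm hij])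
  rw [hS]
  abel

lemma kappa_bd_succ_of (n : ℕ)
    (h : ∀ τ τ' : Gma (n + 1), bd (zk n τ τ') = 0) :
    ∀ τ τ' : Gma (n + 1), bd (kappa (n + 1) τ τ') = zk n τ τ' := by
  intro τ τ'
  rw [kappa_succ]
  exact bd_coneC_cycle _ _ (mval_lt _) (h τ τ')

lemma bd_zk : ∀ (n : ℕ) (τ τ' : Gma (n + 1)), bd (zk n τ τ') = 0 := by
  intro n
  induction n with
  | zero => exact bd_zk_zero
  | succ n ih => exact bd_zk_of n (kappa_bd_succ_of n ih)

lemma kappa_bd_succ (n : ℕ) (τ τ' : Gma (n + 1)) :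
    bd (kappa (n + 1) τ τ') = zk n τ τ' :=
  kappa_bd_succ_of n (bd_zk n) τ τ'

end CH

namespace CH

def Cz : ℕ → ℤ := fun n =>
  match n with
  | 0 => 2
  | (n + 1) => 2 + ((n : ℤ) + 2) * Cz n

lemma l1_coneC_le {n j : ℕ} (m : ℕ) (c : Ch n j) : l1 (coneC m c) ≤ l1 c := by
  refine (l1_zsmul_le _ _).trans ?_
  rw [abs_pow, abs_neg, abs_one, one_pow, one_mul]
  exact l1_mapDomain_le _ _

lemma l1_pushC_le {n j : ℕ} (i : Fin (n + 2)) (c : Ch n j) : l1 (pushC i c) ≤ l1 c :=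
  l1_mapDomain_le _ _

lemma kappa_l1 : ∀ (n : ℕ) (τ τ' : Gma n), l1 (kappa n τ τ') ≤ Cz n := by
  intro n
  induction n with
  | zero =>
    intro τ τ'
    show l1 (Finsupp.single _ (1 : ℤ) - Finsupp.single _ (1 : ℤ)) ≤ Cz 0
    refine (l1_sub_le _ _).trans ?_
    have := l1_single (X := Dn 0 1 × Gma 1)
    calc l1 (Finsupp.single (snocD (idD 0), appG (max (τ.1 0) (τ'.1 0) + 1) τ') (1 : ℤ))
          + l1 (Finsupp.single (snocD (idD 0), appG (max (τ.1 0) (τ'.1 0) + 1) τ) (1 : ℤ))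
        ≤ |(1 : ℤ)| + |(1 : ℤ)| := add_le_add (l1_single _ _) (l1_single _ _)
      _ ≤ Cz 0 := by norm_num [Cz]
  | succ n ih =>
    intro τ τ'
    rw [kappa_succ]
    refine (l1_coneC_le _ _).trans ?_
    rw [zk]
    refine (l1_sub_le _ _).trans ?_
    have h1 : l1 (Finsupp.single (idD (n + 1), τ) (1 : ℤ)
        - Finsupp.single (idD (n + 1), τ') 1) ≤ 2 := by
      refine (l1_sub_le _ _).trans ?_
      calc l1 (Finsupp.single (idD (n + 1), τ) (1 : ℤ))
            + l1 (Finsupp.single (idD (n + 1), τ') (1 : ℤ))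
          ≤ |(1 : ℤ)| + |(1 : ℤ)| := add_le_add (l1_single _ _) (l1_single _ _)
        _ ≤ 2 := by norm_num
    have h2 : l1 (∑ i : Fin (n + 2), ((-1 : ℤ) ^ (i : ℕ)) •
        pushC i (kappa n (faceG i τ) (faceG i τ'))) ≤ ((n : ℤ) + 2) * Cz n := by
      refine (l1_finset_sum_le _ _).trans ?_
      have hterm : ∀ i : Fin (n + 2),
          l1 (((-1 : ℤ) ^ (i : ℕ)) • pushC i (kappa n (faceG i τ) (faceG i τ'))) ≤ Cz n := by
        intro i
        refine (l1_zsmul_le _ _).trans ?_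
        rw [abs_pow, abs_neg, abs_one, one_pow, one_mul]
        exact (l1_pushC_le _ _).trans (ih _ _)
      refine (Finset.sum_le_sum fun i _ => hterm i).trans ?_
      rw [Finset.sum_const, Finset.card_univ, Fintype.card_fin, nsmul_eq_mul]
      push_cast
      ring_nf
      exact le_refl _
    calc l1 (Finsupp.single (idD (n + 1), τ) (1:ℤ) - Finsupp.single (idD (n + 1), τ') 1)
          + l1 (∑ i : Fin (n + 2), ((-1 : ℤ) ^ (i : ℕ)) •
              pushC i (kappa n (faceG i τ) (faceG i τ')))
        ≤ 2 + ((n : ℤ) + 2) * Cz n := add_le_add h1 h2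
      _ = Cz (n + 1) := rfl

/-- Transfer to a simplicial set. -/
noncomputable def toK (K : SSet) {n j : ℕ} (σ : K _⦋n⦌) (x : Dn n j × Gma j) :
    K _⦋j⦌ × Gma j :=
  (K.map (SimplexCategory.mkHom ⟨x.1.1, x.1.2⟩).op σ, x.2)

lemma toK_id (K : SSet) {n : ℕ} (σ : K _⦋n⦌) (τ : Gma n) :
    toK K σ (idD n, τ) = (σ, τ) := by
  have h : SimplexCategory.mkHom ⟨(idD n).1, (idD n).2⟩ = 𝟙 (⦋n⦌ : SimplexCategory) := by
    apply SimplexCategory.Hom.ext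
    rfl
  show (K.map (SimplexCategory.mkHom ⟨(idD n).1, (idD n).2⟩).op σ, τ) = (σ, τ)
  rw [h, op_id, FunctorToTypes.map_id_apply]

lemma toK_fU (K : SSet) {n j : ℕ} (σ : K _⦋n⦌) (i : Fin (j + 2))
    (x : Dn n (j + 1) × Gma (j + 1)) :
    (K.δ i (toK K σ x).1, faceG i (toK K σ x).2) = toK K σ (fU i x) := by
  show (K.map (SimplexCategory.δ i).op (K.map (SimplexCategory.mkHom ⟨x.1.1, x.1.2⟩).op σ),
      faceG i x.2) = (K.map (SimplexCategory.mkHom ⟨(faceD i x.1).1, (faceD i x.1).2⟩).op σ,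
      faceG i x.2)
  rw [← FunctorToTypes.map_comp_apply, ← op_comp]
  have h : SimplexCategory.δ i ≫ SimplexCategory.mkHom ⟨x.1.1, x.1.2⟩
      = SimplexCategory.mkHom ⟨(faceD i x.1).1, (faceD i x.1).2⟩ := by
    apply SimplexCategory.Hom.ext
    rfl
  rw [h]

lemma toK_pushM (K : SSet) {n j : ℕ} (σ : K _⦋n + 1⦌) (i : Fin (n + 2))
    (y : Dn n j × Gma j) :
    toK K σ (pushM i y) = toK K (K.δ i σ) y := by
  show (K.map (SimplexCategory.mkHom ⟨(pushD i y.1).1, (pushD i y.1).2⟩).op σ, y.2)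
    = (K.map (SimplexCategory.mkHom ⟨y.1.1, y.1.2⟩).op (K.map (SimplexCategory.δ i).op σ), y.2)
  rw [← FunctorToTypes.map_comp_apply, ← op_comp]
  have h : SimplexCategory.mkHom ⟨y.1.1, y.1.2⟩ ≫ SimplexCategory.δ i
      = SimplexCategory.mkHom ⟨(pushD i y.1).1, (pushD i y.1).2⟩ := by
    apply SimplexCategory.Hom.ext
    rfl
  rw [h]

lemma bdryP_toK (K : SSet) {n j : ℕ} (σ : K _⦋n⦌) (c : Ch n (j + 1)) :
    bdryP K j (Finsupp.mapDomain (toK K σ) c) = Finsupp.mapDomain (toK K σ) (bd c) := by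
  rw [bdryP, bd, mapDomain_finset_sum]
  refine Finset.sum_congr rfl fun i _ => ?_
  rw [Finsupp.mapDomain_smul]
  congr 1
  rw [← Finsupp.mapDomain_comp, ← Finsupp.mapDomain_comp]
  exact Finsupp.mapDomain_congr fun x _ => toK_fU K σ i x

lemma mapDomain_pushC (K : SSet) {n j : ℕ} (σ : K _⦋n + 1⦌) (i : Fin (n + 2))
    (c : Ch n j) :
    Finsupp.mapDomain (toK K σ) (pushC i c)
      = Finsupp.mapDomain (toK K (K.δ i σ)) c := by
  rw [pushC, ← Finsupp.mapDomain_comp]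
  exact Finsupp.mapDomain_congr fun x _ => toK_pushM K σ i x

end CH


/-- There is a function `C : ℕ → ℝ` such that for every simplicial set `K`
there is a family `k_n` assigning to every triple `(σ, τ, τ')` of an `n`-simplex of `K` and
two `n`-simplices of `Γ` an `(n+1)`-chain of `K × Γ` with integer coefficients with
`‖k_n(σ,τ,τ')‖₁ ≤ C n`, `∂ k_0(σ,τ,τ') = (σ,τ) - (σ,τ')`, and for `n ≥ 1`
`∂ k_n(σ,τ,τ') = (σ,τ) - (σ,τ') - ∑ᵢ (-1)ⁱ k_{n-1}(∂ᵢσ, ∂ᵢτ, ∂ᵢτ')`. -/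
theorem exists_bounded_chain_homotopy :
    ∃ C : ℕ → ℝ, ∀ K : SSet,
      ∃ k : ∀ n : ℕ, K _⦋n⦌ → Gma n → Gma n → ((K _⦋n + 1⦌ × Gma (n + 1)) →₀ ℤ),
        (∀ (n : ℕ) (σ : K _⦋n⦌) (τ τ' : Gma n), ((l1 (k n σ τ τ') : ℤ) : ℝ) ≤ C n) ∧
        (∀ (σ : K _⦋0⦌) (τ τ' : Gma 0),
          bdryP K 0 (k 0 σ τ τ')
            = Finsupp.single (σ, τ) 1 - Finsupp.single (σ, τ') 1) ∧
        (∀ (n : ℕ) (σ : K _⦋n + 1⦌) (τ τ' : Gma (n + 1)),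
          bdryP K (n + 1) (k (n + 1) σ τ τ')
            = Finsupp.single (σ, τ) 1 - Finsupp.single (σ, τ') 1
              - ∑ i : Fin (n + 2), ((-1 : ℤ) ^ (i : ℕ)) •
                  k n (K.δ i σ) (faceG i τ) (faceG i τ')) := by
  classical
  refine ⟨fun n => ((CH.Cz n : ℤ) : ℝ), fun K => ?_⟩
  refine ⟨fun n σ τ τ' => Finsupp.mapDomain (CH.toK K σ) (CH.kappa n τ τ'), ?_, ?_, ?_⟩
  · intro n σ τ τ'
    have h1 : l1 (Finsupp.mapDomain (CH.toK K σ) (CH.kappa n τ τ')) ≤ CH.Cz n :=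
      le_trans (CH.l1_mapDomain_le _ _) (CH.kappa_l1 n τ τ')
    show ((l1 (Finsupp.mapDomain (CH.toK K σ) (CH.kappa n τ τ')) : ℤ) : ℝ)
      ≤ ((CH.Cz n : ℤ) : ℝ)
    exact_mod_cast h1
  · intro σ τ τ'
    rw [CH.bdryP_toK, CH.kappa_bd_zero, CH.mapDomain_sub, Finsupp.mapDomain_single,
      Finsupp.mapDomain_single, CH.toK_id, CH.toK_id]
  · intro n σ τ τ'
    rw [CH.bdryP_toK, CH.kappa_bd_succ, CH.zk, CH.mapDomain_sub, CH.mapDomain_sub,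
      Finsupp.mapDomain_single, Finsupp.mapDomain_single, CH.toK_id, CH.toK_id,
      CH.mapDomain_finset_sum]
    congr 1
    refine Finset.sum_congr rfl fun i _ => ?_
    rw [Finsupp.mapDomain_smul, CH.mapDomain_pushC]
end

section
/- Let K be a simplicial set and G a group acting on K on the left by simplicial automorphisms (a group homomorphism g ↦ a(g) from G to the automorphism group of K in SSet; write g·σ for the induced action on simplices, which commutes with all structure maps). Assume: (i) G admits a right-invariant mean μ (i.e. G is amenable); (ii) for every g ∈ G the automorphism a(g) is simplicially homotopic to the identity, i.e. there exists a morphism of simplicial sets H : K × Δ[1] → K whose restrictions along the two vertex inclusions of Δ[1] are the identity of K and a(g) respectively (identifying K × Δ[0] with K). Then for every m ∈ ℕ, every bounded m-cocycle c of K is boundedly cohomologous to a G-invariant bounded m-cocycle of norm at most ‖c‖: there exist a bounded m-cocycle γ with γ(g·σ) = γ(σ) for all g ∈ G and all σ ∈ K_m and ‖γ‖_∞ ≤ ‖c‖_∞, and a bounded (m−1)-cochain κ with γ − c = ∂*κ (for m = 0, with B^{−1} = 0, this says γ = c, i.e. c itself is G-invariant). -/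
open CategoryTheory Simplicial

/-- The dimension-wise product of two simplicial sets. -/
def prodSSet (X Y : SSet) : SSet where
  obj c := X.obj c × Y.obj c
  map f := TypeCat.ofHom fun p => (X.map f p.1, Y.map f p.2)

/-- The standard `k`-simplex `Δ[k]`, the simplicial set whose `m`-simplices are the
monotone maps `[m] → [k]` of the simplex category. -/
def stdSimp (k : ℕ) : SSet where
  obj c := c.unop ⟶ SimplexCategory.mk k
  map f := TypeCat.ofHom fun θ => f.unop ≫ θ

/-- The vertex `e` of `Δ[1]` at each simplicial level (the image of the unique simplex
under the vertex inclusion `ι_e : Δ[0] → Δ[1]`): the constant map with value `e`. -/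
def vert (e : Fin 2) (c : SimplexCategoryᵒᵖ) : (stdSimp 1).obj c :=
  SimplexCategory.Hom.mk ⟨fun _ => e, monotone_const⟩

/-- The coboundary operator on cochains of a simplicial set `K`:
`∂*f(x) = ∑ᵢ (-1)ⁱ f(∂ᵢ x)`. -/
noncomputable def dKfun (K : SSet) (n : ℕ) (f : (K _⦋n⦌) → ℝ) : (K _⦋n + 1⦌) → ℝ :=
  fun x => ∑ i : Fin (n + 2), (-1 : ℝ) ^ (i : ℕ) * f (K.δ i x)

namespace StmtAux
open SimplexCategory Opposite

lemma dc_lt (n i j : ℕ) (hi : i < j) (hj : j < n + 2) :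
    δ (⟨i, by omega⟩ : Fin (n+3)) ≫ σ (⟨j, hj⟩ : Fin (n+2)) =
    σ (⟨j-1, by omega⟩ : Fin (n+1)) ≫ δ (⟨i, by omega⟩ : Fin (n+2)) := by
  ext k : 3
  dsimp [δ, σ, Fin.succAbove, Fin.predAbove]
  rcases k with ⟨k, hk⟩
  simp only [OrderHom.comp_coe, Function.comp_apply, Fin.predAboveOrderHom_coe,
    OrderEmbedding.toOrderHom_coe, Fin.succAboveOrderEmb_apply]
  dsimp [Fin.succAbove, Fin.predAbove]
  simp only [Fin.lt_def, Fin.castSucc_mk, Fin.succ_mk, Fin.dite_val, Fin.ite_val,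
    Fin.coe_pred, Fin.coe_castLT, Fin.coe_castSucc, Fin.val_succ, Fin.mk_lt_mk,
    Fin.coe_castPred, Fin.ext_iff]
  split_ifs <;> simp_all [Fin.ext_iff, Fin.lt_def, Fin.dite_val, Fin.ite_val, Fin.coe_pred,
    Fin.coe_castPred, Fin.coe_castSucc, Fin.val_succ] <;> omega

lemma dc_gt (n i j : ℕ) (hij : j + 1 < i) (hi : i < n + 3) (hj : j < n + 2) :
    δ (⟨i, hi⟩ : Fin (n+3)) ≫ σ (⟨j, hj⟩ : Fin (n+2)) =
    σ (⟨j, by omega⟩ : Fin (n+1)) ≫ δ (⟨i-1, by omega⟩ : Fin (n+2)) := by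
  ext k : 3
  dsimp [δ, σ, Fin.succAbove, Fin.predAbove]
  rcases k with ⟨k, hk⟩
  simp only [OrderHom.comp_coe, Function.comp_apply, Fin.predAboveOrderHom_coe,
    OrderEmbedding.toOrderHom_coe, Fin.succAboveOrderEmb_apply]
  dsimp [Fin.succAbove, Fin.predAbove]
  simp only [Fin.lt_def, Fin.castSucc_mk, Fin.succ_mk, Fin.dite_val, Fin.ite_val,
    Fin.coe_pred, Fin.coe_castLT, Fin.coe_castSucc, Fin.val_succ, Fin.mk_lt_mk,
    Fin.coe_castPred, Fin.ext_iff]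
  split_ifs <;> simp_all [Fin.ext_iff, Fin.lt_def, Fin.dite_val, Fin.ite_val, Fin.coe_pred,
    Fin.coe_castPred, Fin.coe_castSucc, Fin.val_succ] <;> omega

lemma dc_self (n j : ℕ) (hj : j < n + 1) :
    δ (⟨j, by omega⟩ : Fin (n+2)) ≫ σ (⟨j, hj⟩ : Fin (n+1)) = 𝟙 (⦋n⦌ : SimplexCategory) :=
  δ_comp_σ_self' (by ext; simp)

lemma dc_succ (n j : ℕ) (hj : j < n + 1) :
    δ (⟨j+1, by omega⟩ : Fin (n+2)) ≫ σ (⟨j, hj⟩ : Fin (n+1)) = 𝟙 (⦋n⦌ : SimplexCategory) :=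
  δ_comp_σ_succ' (by ext; simp)

/-- The `n`-simplex of `Δ[1]` whose value at `i` is `0` iff `i < j`. -/
def pm (n j : ℕ) : (stdSimp 1).obj (op ⦋n⦌) :=
  SimplexCategory.Hom.mk
    ⟨fun i => if (i : ℕ) < j then 0 else 1, by
      intro x y hxy
      dsimp only
      split_ifs with h1 h2
      · exact le_refl _
      · exact Fin.zero_le _
      · exact absurd ((Fin.le_def.mp hxy).trans_lt ‹_›) h1
      · exact le_refl _⟩

lemma pm_zero (n : ℕ) : pm n 0 = vert 1 (op ⦋n⦌) := by
  apply SimplexCategory.Hom.ext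
  ext i
  simp [pm, vert]

lemma pm_top (n j : ℕ) (h : n < j) : pm n j = vert 0 (op ⦋n⦌) := by
  apply SimplexCategory.Hom.ext
  ext i
  simp only [pm, vert]
  have : (i : ℕ) < j := lt_of_le_of_lt (Nat.lt_succ_iff.mp i.isLt) h
  exact congrArg Fin.val (if_pos this : (if (i:ℕ) < j then (0:Fin 2) else 1) = 0)

lemma pm_map (n : ℕ) (i : Fin (n+2)) (t : ℕ) :
    (stdSimp 1).map (δ i).op (pm (n+1) t) = pm n (if (i : ℕ) < t then t - 1 else t) := by
  show δ i ≫ pm (n+1) t = pm n _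
  apply SimplexCategory.Hom.ext
  ext k
  dsimp [δ, pm, Fin.succAbove]
  rcases k with ⟨k, hk⟩
  rcases i with ⟨iv, hi⟩
  simp only [OrderHom.comp_coe, Function.comp_apply, OrderEmbedding.toOrderHom_coe,
    Fin.succAboveOrderEmb_apply, OrderHom.coe_mk]
  dsimp [Fin.succAbove]
  simp only [Fin.lt_def, Fin.castSucc_mk, Fin.succ_mk, Fin.ite_val, Fin.mk_lt_mk]
  dsimp only [DFunLike.coe]
  split_ifs <;> simp_all <;> omega

end StmtAux

namespace StmtAux
open SimplexCategory Opposite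

variable (K : SSet) (Hg : prodSSet K (stdSimp 1) ⟶ K)

/-- The `j`-th prism simplex over `τ`. -/
def prsm (n j : ℕ) (hj : j < n + 1) (τ : K _⦋n⦌) : K _⦋n+1⦌ :=
  Hg.app (op ⦋n+1⦌) (K.σ ⟨j, hj⟩ τ, pm (n+1) (j+1))

lemma nat_face (n : ℕ) (i : Fin (n+2)) (x : K.obj (op ⦋n+1⦌) × (stdSimp 1).obj (op ⦋n+1⦌)) :
    K.δ i (Hg.app (op ⦋n+1⦌) x)
      = Hg.app (op ⦋n⦌) (K.δ i x.1, (stdSimp 1).map (SimplexCategory.δ i).op x.2) :=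
  (ConcreteCategory.congr_hom (Hg.naturality (SimplexCategory.δ i).op) x).symm

lemma face_prsm_self (n j : ℕ) (hj : j < n + 1) (τ : K _⦋n⦌) :
    K.δ (⟨j, by omega⟩ : Fin (n+2)) (prsm K Hg n j hj τ) = Hg.app (op ⦋n⦌) (τ, pm n j) := by
  rw [prsm, nat_face, pm_map]
  refine congrArg _ (Prod.ext ?_ ?_)
  · show (K.σ ⟨j, hj⟩ ≫ K.δ ⟨j, by omega⟩) τ = τ
    simp only [SimplicialObject.δ, SimplicialObject.σ, ← K.map_comp, ← op_comp, dc_self n j hj]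
    simp
  · simp

lemma face_prsm_succ (n j : ℕ) (hj : j < n + 1) (τ : K _⦋n⦌) :
    K.δ (⟨j+1, by omega⟩ : Fin (n+2)) (prsm K Hg n j hj τ) = Hg.app (op ⦋n⦌) (τ, pm n (j+1)) := by
  rw [prsm, nat_face, pm_map]
  refine congrArg _ (Prod.ext ?_ ?_)
  · show (K.σ ⟨j, hj⟩ ≫ K.δ ⟨j+1, by omega⟩) τ = τ
    simp only [SimplicialObject.δ, SimplicialObject.σ, ← K.map_comp, ← op_comp, dc_succ n j hj]
    simp
  · simp

lemma face_prsm_lt (n i j : ℕ) (hi : i < j) (hj : j < n + 2) (σ : K _⦋n+1⦌) :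
    K.δ (⟨i, by omega⟩ : Fin (n+3)) (prsm K Hg (n+1) j hj σ)
      = prsm K Hg n (j-1) (by omega) (K.δ (⟨i, by omega⟩ : Fin (n+2)) σ) := by
  rw [prsm, nat_face, pm_map, prsm]
  have h1 : j - 1 + 1 = j := by omega
  refine congrArg _ (Prod.ext ?_ ?_)
  · show (K.σ ⟨j, hj⟩ ≫ K.δ ⟨i, by omega⟩) σ = _
    simp only [SimplicialObject.δ, SimplicialObject.σ, ← K.map_comp, ← op_comp,
      dc_lt n i j hi hj]
    simp only [op_comp, K.map_comp]
    rfl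
  · show pm (n+1) (if i < j + 1 then j + 1 - 1 else j + 1) = pm (n+1) (j - 1 + 1)
    rw [if_pos (by omega)]
    exact congrArg _ (by omega)

lemma face_prsm_gt (n i j : ℕ) (hij : j + 1 < i) (hi : i < n + 3) (hj : j < n + 2) (σ : K _⦋n+1⦌) :
    K.δ (⟨i, hi⟩ : Fin (n+3)) (prsm K Hg (n+1) j hj σ)
      = prsm K Hg n j (by omega) (K.δ (⟨i-1, by omega⟩ : Fin (n+2)) σ) := by
  rw [prsm, nat_face, pm_map, prsm]
  refine congrArg _ (Prod.ext ?_ ?_)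
  · show (K.σ ⟨j, hj⟩ ≫ K.δ ⟨i, hi⟩) σ = _
    simp only [SimplicialObject.δ, SimplicialObject.σ, ← K.map_comp, ← op_comp,
      dc_gt n i j hij hi hj]
    simp only [op_comp, K.map_comp]
    rfl
  · show pm (n+1) (if i < j + 1 then j + 1 - 1 else j + 1) = pm (n+1) (j + 1)
    rw [if_neg (by omega)]

end StmtAux

namespace StmtAux
open SimplexCategory Opposite Finset

variable (K : SSet) (Hg : prodSSet K (stdSimp 1) ⟶ K)

/-- All faces of the big prisms. -/
def FFd (m : ℕ) (c : K _⦋m+1⦌ → ℝ) (σ : K _⦋m+1⦌) : Fin (m+3) × Fin (m+2) → ℝ :=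
  fun p => (-1:ℝ)^((p.1:ℕ)+(p.2:ℕ)) * c (K.δ p.1 (prsm K Hg (m+1) (p.2:ℕ) p.2.isLt σ))

/-- The prisms over the faces. -/
def PPd (m : ℕ) (c : K _⦋m+1⦌ → ℝ) (σ : K _⦋m+1⦌) : Fin (m+2) × Fin (m+1) → ℝ :=
  fun p => (-1:ℝ)^((p.1:ℕ)+(p.2:ℕ)) * c (prsm K Hg m (p.2:ℕ) p.2.isLt (K.δ p.1 σ))

def predd (m : ℕ) (p : Fin (m+3) × Fin (m+2)) : Prop :=
  (p.1:ℕ) = (p.2:ℕ) ∨ (p.1:ℕ) = (p.2:ℕ) + 1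

instance (m : ℕ) : DecidablePred (predd m) := fun p => by unfold predd; infer_instance

def fwdd (m : ℕ) (p : Fin (m+2) × Fin (m+1)) : Fin (m+3) × Fin (m+2) :=
  if (p.1:ℕ) ≤ (p.2:ℕ) then (⟨(p.1:ℕ), by omega⟩, ⟨(p.2:ℕ)+1, by have := p.2.isLt; omega⟩)
  else (⟨(p.1:ℕ)+1, by have := p.1.isLt; omega⟩, ⟨(p.2:ℕ), by have := p.2.isLt; omega⟩)

def invd (m : ℕ) (q : Fin (m+3) × Fin (m+2)) : Fin (m+2) × Fin (m+1) :=
  if (q.1:ℕ) < (q.2:ℕ) then (⟨min (q.1:ℕ) (m+1), by omega⟩, ⟨(q.2:ℕ)-1, by have := q.2.isLt; omega⟩)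
  else (⟨(q.1:ℕ)-1, by have := q.1.isLt; omega⟩, ⟨min (q.2:ℕ) m, by omega⟩)

lemma off_val (m : ℕ) (c : K _⦋m+1⦌ → ℝ) (σ : K _⦋m+1⦌) (p : Fin (m+2) × Fin (m+1)) :
    -PPd K Hg m c σ p = FFd K Hg m c σ (fwdd m p) := by
  have h1 := p.1.isLt
  have h2 := p.2.isLt
  by_cases hle : (p.1:ℕ) ≤ (p.2:ℕ)
  · rw [fwdd, if_pos hle]
    show -PPd K Hg m c σ p = (-1:ℝ)^((p.1:ℕ)+((p.2:ℕ)+1)) *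
      c (K.δ ⟨(p.1:ℕ), by omega⟩ (prsm K Hg (m+1) ((p.2:ℕ)+1) (by omega) σ))
    rw [face_prsm_lt K Hg m (p.1:ℕ) ((p.2:ℕ)+1) (by omega) (by omega) σ]
    rw [PPd]
    simp only [Nat.add_sub_cancel, Fin.eta]
    ring
  · rw [fwdd, if_neg hle]
    show -PPd K Hg m c σ p = (-1:ℝ)^(((p.1:ℕ)+1)+(p.2:ℕ)) *
      c (K.δ ⟨(p.1:ℕ)+1, by omega⟩ (prsm K Hg (m+1) (p.2:ℕ) (by omega) σ))
    rw [face_prsm_gt K Hg m ((p.1:ℕ)+1) (p.2:ℕ) (by omega) (by omega) (by omega) σ]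
    rw [PPd]
    simp only [Nat.add_sub_cancel, Fin.eta]
    ring

lemma diag_val0 (m : ℕ) (c : K _⦋m+1⦌ → ℝ) (σ : K _⦋m+1⦌) (j : Fin (m+2)) :
    FFd K Hg m c σ (⟨(j:ℕ), by have := j.isLt; omega⟩, j)
      = c (Hg.app (op ⦋m+1⦌) (σ, pm (m+1) (j:ℕ))) := by
  rw [FFd]
  show (-1:ℝ)^((j:ℕ)+(j:ℕ)) * c (K.δ ⟨(j:ℕ), by have := j.isLt; omega⟩
    (prsm K Hg (m+1) (j:ℕ) j.isLt σ)) = _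
  rw [face_prsm_self K Hg (m+1) (j:ℕ) j.isLt σ, Even.neg_one_pow ⟨(j:ℕ), rfl⟩, one_mul]

lemma diag_val1 (m : ℕ) (c : K _⦋m+1⦌ → ℝ) (σ : K _⦋m+1⦌) (j : Fin (m+2)) :
    FFd K Hg m c σ (⟨(j:ℕ)+1, by have := j.isLt; omega⟩, j)
      = -c (Hg.app (op ⦋m+1⦌) (σ, pm (m+1) ((j:ℕ)+1))) := by
  rw [FFd]
  show (-1:ℝ)^(((j:ℕ)+1)+(j:ℕ)) * c (K.δ ⟨(j:ℕ)+1, by have := j.isLt; omega⟩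
    (prsm K Hg (m+1) (j:ℕ) j.isLt σ)) = _
  rw [face_prsm_succ K Hg (m+1) (j:ℕ) j.isLt σ, Odd.neg_one_pow ⟨(j:ℕ), by omega⟩]
  ring

end StmtAux

namespace StmtAux
open SimplexCategory Opposite Finset

lemma prism_identity (K : SSet) (Hg : prodSSet K (stdSimp 1) ⟶ K) (m : ℕ)
    (c : K _⦋m+1⦌ → ℝ) (hc : dKfun K (m+1) c = 0) (σ : K _⦋m+1⦌) :
    ∑ i : Fin (m+2), (-1:ℝ)^(i:ℕ) *
        ∑ j : Fin (m+1), (-1:ℝ)^(j:ℕ) * c (prsm K Hg m (j:ℕ) j.isLt (K.δ i σ))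
      = c (Hg.app (op ⦋m+1⦌) (σ, vert 1 (op ⦋m+1⦌)))
        - c (Hg.app (op ⦋m+1⦌) (σ, vert 0 (op ⦋m+1⦌))) := by
  classical
  -- Step 1 : LHS as a sum of PPd over the product type
  have hLHS : (∑ i : Fin (m+2), (-1:ℝ)^(i:ℕ) *
        ∑ j : Fin (m+1), (-1:ℝ)^(j:ℕ) * c (prsm K Hg m (j:ℕ) j.isLt (K.δ i σ)))
      = ∑ p : Fin (m+2) × Fin (m+1), PPd K Hg m c σ p := by
    rw [Fintype.sum_prod_type]
    refine Finset.sum_congr rfl fun i _ => ?_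
    rw [Finset.mul_sum]
    refine Finset.sum_congr rfl fun j _ => ?_
    rw [PPd, pow_add]
    ring
  -- Step 2 : total sum of FFd vanishes
  have htot : ∑ p : Fin (m+3) × Fin (m+2), FFd K Hg m c σ p = 0 := by
    rw [Fintype.sum_prod_type_right]
    refine Finset.sum_eq_zero fun j _ => ?_
    have h0 : dKfun K (m+1) c (prsm K Hg (m+1) (j:ℕ) j.isLt σ) = 0 := congrFun hc _
    calc ∑ i : Fin (m+3), FFd K Hg m c σ (i, j)
        = (-1:ℝ)^(j:ℕ) * dKfun K (m+1) c (prsm K Hg (m+1) (j:ℕ) j.isLt σ) := by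
          rw [dKfun, Finset.mul_sum]
          refine Finset.sum_congr rfl fun i _ => ?_
          rw [FFd, pow_add]
          ring
      _ = 0 := by rw [h0, mul_zero]
  -- Step 3 : split into diagonal and off-diagonal parts
  have hsplit := Finset.sum_filter_add_sum_filter_not
    (Finset.univ : Finset (Fin (m+3) × Fin (m+2))) (predd m) (FFd K Hg m c σ)
  -- Step 4 : off-diagonal part
  have hoff : ∑ p : Fin (m+2) × Fin (m+1), -PPd K Hg m c σ p
      = ∑ q ∈ Finset.univ.filter (fun q => ¬ predd m q), FFd K Hg m c σ q := by
    refine Finset.sum_nbij' (fwdd m) (invd m) ?_ ?_ ?_ ?_ ?_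
    · intro p _
      have h1 := p.1.isLt; have h2 := p.2.isLt
      simp only [Finset.mem_filter, Finset.mem_univ, true_and, predd, fwdd]
      split_ifs <;> simp <;> omega
    · intro q _; exact Finset.mem_univ _
    · intro p _
      have h1 := p.1.isLt; have h2 := p.2.isLt
      simp only [fwdd, invd]
      split_ifs <;> refine Prod.ext (Fin.ext ?_) (Fin.ext ?_) <;>
        simp_all [Fin.lt_def, Fin.le_def] <;> omega
    · intro q hq
      have h1 := q.1.isLt; have h2 := q.2.isLt
      rw [Finset.mem_filter] at hq
      have hq2 : ¬ predd m q := hq.2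
      rw [predd] at hq2
      push_neg at hq2
      simp only [fwdd, invd]
      split_ifs <;> refine Prod.ext (Fin.ext ?_) (Fin.ext ?_) <;>
        simp_all [Fin.lt_def, Fin.le_def] <;> omega
    · intro p _
      exact off_val K Hg m c σ p
  -- Step 5 : diagonal part telescopes
  have hdiag : ∑ q ∈ Finset.univ.filter (predd m), FFd K Hg m c σ q
      = c (Hg.app (op ⦋m+1⦌) (σ, pm (m+1) 0)) - c (Hg.app (op ⦋m+1⦌) (σ, pm (m+1) (m+2))) := by
    have hbij : ∑ q : Fin (m+2) × Fin 2,
          FFd K Hg m c σ (⟨(q.1:ℕ)+(q.2:ℕ), by have := q.1.isLt; have := q.2.isLt; omega⟩, q.1)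
        = ∑ q ∈ Finset.univ.filter (predd m), FFd K Hg m c σ q := by
      refine Finset.sum_nbij'
        (fun q => (⟨(q.1:ℕ)+(q.2:ℕ), by have := q.1.isLt; have := q.2.isLt; omega⟩, q.1))
        (fun p => (p.2, ⟨min ((p.1:ℕ)-(p.2:ℕ)) 1, by omega⟩)) ?_ ?_ ?_ ?_ ?_
      · intro q _
        have h1 := q.1.isLt; have h2 := q.2.isLt
        simp only [Finset.mem_filter, Finset.mem_univ, true_and, predd]
        simp; omega
      · intro p _; exact Finset.mem_univ _
      · intro q _
        have h2 := q.2.isLt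
        refine Prod.ext rfl (Fin.ext ?_)
        simp; omega
      · intro p hp
        rw [Finset.mem_filter] at hp
        have hp2 := hp.2
        rw [predd] at hp2
        refine Prod.ext (Fin.ext ?_) rfl
        simp; omega
      · intro q _; rfl
    rw [← hbij, Fintype.sum_prod_type]
    have hterm : ∀ j : Fin (m+2),
        (∑ b : Fin 2, FFd K Hg m c σ
          (⟨(j:ℕ)+(b:ℕ), by have := j.isLt; have := b.isLt; omega⟩, j))
        = c (Hg.app (op ⦋m+1⦌) (σ, pm (m+1) (j:ℕ)))
          - c (Hg.app (op ⦋m+1⦌) (σ, pm (m+1) ((j:ℕ)+1))) := by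
      intro j
      rw [Fin.sum_univ_two]
      have e0 : FFd K Hg m c σ
          (⟨(j:ℕ)+((0 : Fin 2):ℕ), by have := j.isLt; omega⟩, j)
          = c (Hg.app (op ⦋m+1⦌) (σ, pm (m+1) (j:ℕ))) := by
        have : ((j:ℕ)+((0 : Fin 2):ℕ)) = (j:ℕ) := rfl
        rw [show (⟨(j:ℕ)+((0 : Fin 2):ℕ), by have := j.isLt; omega⟩ : Fin (m+3))
            = ⟨(j:ℕ), by have := j.isLt; omega⟩ from Fin.ext this]
        exact diag_val0 K Hg m c σ j
      have e1 : FFd K Hg m c σ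
          (⟨(j:ℕ)+((1 : Fin 2):ℕ), by have := j.isLt; omega⟩, j)
          = -c (Hg.app (op ⦋m+1⦌) (σ, pm (m+1) ((j:ℕ)+1))) := by
        have : ((j:ℕ)+((1 : Fin 2):ℕ)) = (j:ℕ)+1 := rfl
        rw [show (⟨(j:ℕ)+((1 : Fin 2):ℕ), by have := j.isLt; omega⟩ : Fin (m+3))
            = ⟨(j:ℕ)+1, by have := j.isLt; omega⟩ from Fin.ext this]
        exact diag_val1 K Hg m c σ j
      rw [e0, e1]
      ring
    calc ∑ j : Fin (m+2), ∑ b : Fin 2, FFd K Hg m c σ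
          (⟨(j:ℕ)+(b:ℕ), by have := j.isLt; have := b.isLt; omega⟩, j)
        = ∑ j : Fin (m+2), ((fun t => c (Hg.app (op ⦋m+1⦌) (σ, pm (m+1) t))) (j:ℕ)
            - (fun t => c (Hg.app (op ⦋m+1⦌) (σ, pm (m+1) t))) ((j:ℕ)+1)) := by
          exact Finset.sum_congr rfl fun j _ => hterm j
      _ = ∑ t ∈ Finset.range (m+2), ((fun t => c (Hg.app (op ⦋m+1⦌) (σ, pm (m+1) t))) t
            - (fun t => c (Hg.app (op ⦋m+1⦌) (σ, pm (m+1) t))) (t+1)) := by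
          exact Fin.sum_univ_eq_sum_range
            (fun t => (fun t => c (Hg.app (op ⦋m+1⦌) (σ, pm (m+1) t))) t
              - (fun t => c (Hg.app (op ⦋m+1⦌) (σ, pm (m+1) t))) (t+1)) (m+2)
      _ = _ := Finset.sum_range_sub' (fun t => c (Hg.app (op ⦋m+1⦌) (σ, pm (m+1) t))) (m+2)
  -- Step 6 : combine
  rw [hLHS]
  have hofftot : ∑ p : Fin (m+2) × Fin (m+1), -PPd K Hg m c σ p
      = -∑ p : Fin (m+2) × Fin (m+1), PPd K Hg m c σ p := by
    rw [Finset.sum_neg_distrib]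
  rw [hofftot] at hoff
  rw [hdiag, ← hoff] at hsplit
  rw [htot] at hsplit
  rw [← pm_zero (m+1), ← pm_top (m+1) (m+2) (by omega)]
  linarith [hsplit]

end StmtAux


open Opposite in
/-- Let an amenable group `G` act on a simplicial set `K` by simplicial
automorphisms, each of which is simplicially homotopic to the identity. Then every bounded
cocycle `c` of `K` is boundedly cohomologous to a `G`-invariant bounded cocycle `γ` with
`‖γ‖_∞ ≤ ‖c‖_∞` (and in degree `0`, `c` itself is `G`-invariant). -/
theorem invariant_bounded_cocycle_of_amenable_action
    (K : SSet) (G : Type*) [Group G] (a : G →* Aut K)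
    (hG : Amenable G)
    (hhtp : ∀ g : G, ∃ H : prodSSet K (stdSimp 1) ⟶ K,
      ∀ (c : SimplexCategoryᵒᵖ) (σ : K.obj c),
        H.app c (σ, vert 0 c) = σ ∧ H.app c (σ, vert 1 c) = (a g).hom.app c σ) :
    (∀ c : (K _⦋0⦌) → ℝ, IsBdd c → dKfun K 0 c = 0 →
      ∀ (g : G) (σ : K _⦋0⦌), c ((a g).hom.app _ σ) = c σ) ∧
    (∀ (m : ℕ) (c : (K _⦋m + 1⦌) → ℝ), IsBdd c → dKfun K (m + 1) c = 0 →
      ∃ (γ : (K _⦋m + 1⦌) → ℝ) (κ : (K _⦋m⦌) → ℝ), IsBdd γ ∧ IsBdd κ ∧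
        (∀ (g : G) (σ : K _⦋m + 1⦌), γ ((a g).hom.app _ σ) = γ σ) ∧
        supN γ ≤ supN c ∧
        γ - c = dKfun K m κ) := by
  obtain ⟨μ, hμ1, hμ2, hμ3⟩ := hG
  choose Hh hHh using hhtp
  constructor
  · -- degree 0
    intro c hb hcoc g σ
    have h0 : dKfun K 0 c (StmtAux.prsm K (Hh g) 0 0 (by omega) σ) = 0 := congrFun hcoc _
    rw [dKfun, Fin.sum_univ_two] at h0
    have f0 : K.δ (0 : Fin 2) (StmtAux.prsm K (Hh g) 0 0 (by omega) σ)
        = (a g).hom.app (op ⦋0⦌) σ := by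
      have h := StmtAux.face_prsm_self K (Hh g) 0 0 (by omega) σ
      rw [StmtAux.pm_zero, (hHh g (op ⦋0⦌) σ).2] at h
      exact h
    have f1 : K.δ (1 : Fin 2) (StmtAux.prsm K (Hh g) 0 0 (by omega) σ) = σ := by
      have h := StmtAux.face_prsm_succ K (Hh g) 0 0 (by omega) σ
      rw [StmtAux.pm_top 0 1 (by omega), (hHh g (op ⦋0⦌) σ).1] at h
      exact h
    rw [f0, f1] at h0
    simp only [Fin.isValue, Fin.val_zero, pow_zero, one_mul, Fin.val_one, pow_one,
      neg_one_mul] at h0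
    linarith
  · -- positive degrees
    intro m c hb hcoc
    obtain ⟨C0, hC0⟩ := hb
    have hCb : ∀ x, |c x| ≤ max C0 0 := fun x => (hC0 x).trans (le_max_left _ _)
    set C := max C0 0 with hCdef
    have hCnn : (0:ℝ) ≤ C := le_max_right _ _
    have memγ : ∀ σ : K _⦋m+1⦌,
        (fun g : G => c ((a g).hom.app (op ⦋m+1⦌) σ)) ∈ bddFns G :=
      fun σ => ⟨C, fun g => hCb _⟩
    have hcgb : ∀ (g : G) (τ : K _⦋m⦌),
        |∑ j : Fin (m+1), (-1:ℝ)^(j:ℕ) * c (StmtAux.prsm K (Hh g) m (j:ℕ) j.isLt τ)|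
          ≤ (m+1) * C := by
      intro g τ
      calc |∑ j : Fin (m+1), (-1:ℝ)^(j:ℕ) * c (StmtAux.prsm K (Hh g) m (j:ℕ) j.isLt τ)|
          ≤ ∑ j : Fin (m+1), |(-1:ℝ)^(j:ℕ) * c (StmtAux.prsm K (Hh g) m (j:ℕ) j.isLt τ)| :=
            Finset.abs_sum_le_sum_abs _ _
        _ ≤ ∑ _j : Fin (m+1), C := Finset.sum_le_sum fun j _ => by
            rw [abs_mul, abs_pow, abs_neg, abs_one, one_pow, one_mul]; exact hCb _
        _ = (m+1) * C := by
            rw [Finset.sum_const, Finset.card_univ, Fintype.card_fin, nsmul_eq_mul]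
            push_cast; ring
    have memκ : ∀ τ : K _⦋m⦌,
        (fun g : G => ∑ j : Fin (m+1),
          (-1:ℝ)^(j:ℕ) * c (StmtAux.prsm K (Hh g) m (j:ℕ) j.isLt τ)) ∈ bddFns G :=
      fun τ => ⟨(m+1)*C, fun g => hcgb g τ⟩
    have hBdd : BddAbove (Set.range fun x : K _⦋m+1⦌ => |c x|) :=
      ⟨C, by rintro _ ⟨x, rfl⟩; exact hCb x⟩
    have h0c : 0 ≤ supN c := by
      rcases isEmpty_or_nonempty (K _⦋m+1⦌) with h | h
      · rw [supN, Real.iSup_of_isEmpty]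
      · exact (abs_nonneg _).trans (le_ciSup hBdd (Classical.arbitrary _))
    refine ⟨fun σ => μ ⟨_, memγ σ⟩, fun τ => μ ⟨_, memκ τ⟩,
      ⟨C, fun σ => (hμ1 _).trans (Real.iSup_le (fun g => hCb _) hCnn)⟩,
      ⟨(m+1)*C, fun τ => (hμ1 _).trans (Real.iSup_le (fun g => hcgb g τ) (by positivity))⟩,
      ?_, ?_, ?_⟩
    · -- invariance
      intro g₀ σ
      have key : (⟨_, memγ ((a g₀).hom.app (op ⦋m+1⦌) σ)⟩ : ↥(bddFns G))
          = ⟨fun x => ((⟨_, memγ σ⟩ : ↥(bddFns G)) : G → ℝ) (x * g₀),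
              translate_mem_bddFns g₀ _⟩ := by
        apply Subtype.ext
        funext x
        show c ((a x).hom.app (op ⦋m+1⦌) ((a g₀).hom.app (op ⦋m+1⦌) σ))
          = c ((a (x * g₀)).hom.app (op ⦋m+1⦌) σ)
        rw [map_mul]
        rfl
      beta_reduce
      rw [key, hμ3 g₀ _]
    · -- norm bound
      rw [supN]
      refine Real.iSup_le (fun σ => ?_) h0c
      exact (hμ1 _).trans (Real.iSup_le (fun g => le_ciSup hBdd _) h0c)
    · -- coboundary
      funext σ
      rw [Pi.sub_apply, dKfun]
      set Fi : Fin (m+2) → ↥(bddFns G) := fun i => ⟨_, memκ (K.δ i σ)⟩ with hFi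
      have step1 : ∑ i : Fin (m+2), (-1:ℝ)^(i:ℕ) * μ (Fi i)
          = μ (∑ i : Fin (m+2), ((-1:ℝ)^(i:ℕ) • Fi i)) := by
        rw [map_sum]
        exact Finset.sum_congr rfl fun i _ => by rw [map_smul, smul_eq_mul]
      have step2 : (∑ i : Fin (m+2), ((-1:ℝ)^(i:ℕ) • Fi i))
          = (⟨_, memγ σ⟩ : ↥(bddFns G)) - ⟨fun _ => c σ, const_mem_bddFns G (c σ)⟩ := by
        apply Subtype.ext
        funext g
        have hco : ((∑ i : Fin (m+2), ((-1:ℝ)^(i:ℕ) • Fi i) : ↥(bddFns G)) : G → ℝ) g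
            = ∑ i : Fin (m+2), (-1:ℝ)^(i:ℕ) *
                (∑ j : Fin (m+1), (-1:ℝ)^(j:ℕ) *
                  c (StmtAux.prsm K (Hh g) m (j:ℕ) j.isLt (K.δ i σ))) := by
          rw [Submodule.coe_sum, Finset.sum_apply]
          exact Finset.sum_congr rfl fun i _ => rfl
        rw [hco]
        have hpi := StmtAux.prism_identity K (Hh g) m c hcoc σ
        rw [(hHh g (op ⦋m+1⦌) σ).2, (hHh g (op ⦋m+1⦌) σ).1] at hpi
        exact hpi
      rw [step1, step2, map_sub, hμ2]
end
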